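/- arXiv:1310.2783 — 4 statements merged into one kernel-verified Lean document; each statement's English description precedes it below -/
import Mathlib

section
/- For every pair of positive integers k, ℓ with k ≥ 3, there exists a positive integer N = N(k,ℓ) such that for every integer n ≥ N, the (k,ℓ)-rainbow index of the complete bipartite graph K_{n,n} satisfies rx_{k,ℓ}(K_{n,n}) ≤ k + 1. -/
open SimpleGraph

/-- `T` is a rainbow `S`-tree in `G` under edge-coloring `c`:
its vertices contain `S`, it is a tree, and `c` is injective on its edges. -/
def IsRainbowSTree {V β : Type*} (G : SimpleGraph V) (c : Sym2 V → β)
    (S : Set V) (T : G.Subgraph) : Prop :=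
  S ⊆ T.verts ∧ T.coe.IsTree ∧ Set.InjOn c T.edgeSet

/-- A family of `S`-trees is internally disjoint: pairwise edge-disjoint, and
the vertex sets of two distinct members meet exactly in `S`. -/
def InternallyDisjoint {V : Type*} {G : SimpleGraph V} (S : Set V)
    {ι : Type*} (T : ι → G.Subgraph) : Prop :=
  ∀ i j, i ≠ j → (T i).edgeSet ∩ (T j).edgeSet = ∅ ∧ (T i).verts ∩ (T j).verts = S

/-- The coloring `c` provides, for every set `S` of `k` vertices,
`ℓ` internally disjoint rainbow `S`-trees. -/
def HasRainbowSTrees {V β : Type*} (G : SimpleGraph V) (c : Sym2 V → β) (k ℓ : ℕ) : Prop :=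
  ∀ S : Finset V, S.card = k →
    ∃ T : Fin ℓ → G.Subgraph,
      (∀ i, IsRainbowSTree G c (S : Set V) (T i)) ∧ InternallyDisjoint (S : Set V) T

/-- The `(k,ℓ)`-rainbow index `rx_{k,ℓ}(G)`: the minimum number `t` of colors such that
some edge-coloring of `G` with `t` colors gives, for every `k`-set `S`,
`ℓ` internally disjoint rainbow `S`-trees. -/
noncomputable def rainbowIndex {V : Type*} (G : SimpleGraph V) (k ℓ : ℕ) : ℕ :=
  sInf {t : ℕ | ∃ c : Sym2 V → Fin t, HasRainbowSTrees G c k ℓ}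
open Finset SimpleGraph

attribute [local instance] Classical.propDecidable

abbrev Vt (n : ℕ) := Fin n ⊕ Fin n
abbrev BG (n : ℕ) := completeBipartiteGraph (Fin n) (Fin n)
abbrev Gam {n : ℕ} (S : Finset (Vt n)) := Unit ⊕ (↥S.toRight ⊕ ↥S.toLeft)

def pairOf {n : ℕ} (S : Finset (Vt n)) (X Y : Fin n) : Gam S → Fin n × Fin n
  | Sum.inl _ => (X, Y)
  | Sum.inr (Sum.inl u) => (X, u.1)
  | Sum.inr (Sum.inr w) => (w.1, Y)

noncomputable def xe (n k : ℕ) (S : Finset (Vt n)) : Fin (n - k) → Fin n := fun t =>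
  if h : n - k ≤ (S.toLeftᶜ).card then S.toLeftᶜ.orderEmbOfCardLe h t else Fin.castLE (Nat.sub_le n k) t

noncomputable def ye (n k : ℕ) (S : Finset (Vt n)) : Fin (n - k) → Fin n := fun t =>
  if h : n - k ≤ (S.toRightᶜ).card then S.toRightᶜ.orderEmbOfCardLe h t else Fin.castLE (Nat.sub_le n k) t

noncomputable def eblk (n k : ℕ) (S : Finset (Vt n)) : Fin (n - k) → Gam S → Fin n × Fin n :=
  fun t => pairOf S (xe n k S t) (ye n k S t)

section specs
variable {n k : ℕ} {S : Finset (Vt n)}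

lemma toLeft_cond (hS : S.card = k) (hn : k ≤ n) : n - k ≤ (S.toLeftᶜ).card := by
  have h1 : S.toLeft.card + S.toRight.card = k := by
    rw [Finset.card_toLeft_add_card_toRight, hS]
  have h2 : (S.toLeftᶜ).card = n - S.toLeft.card := by
    rw [Finset.card_compl, Fintype.card_fin]
  omega

lemma toRight_cond (hS : S.card = k) (hn : k ≤ n) : n - k ≤ (S.toRightᶜ).card := by
  have h1 : S.toLeft.card + S.toRight.card = k := by
    rw [Finset.card_toLeft_add_card_toRight, hS]
  have h2 : (S.toRightᶜ).card = n - S.toRight.card := by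
    rw [Finset.card_compl, Fintype.card_fin]
  omega

lemma xe_inj (hS : S.card = k) (hn : k ≤ n) : Function.Injective (xe n k S) := by
  have h := toLeft_cond hS hn
  intro t t' htt'
  simp only [xe, dif_pos h] at htt'
  exact (S.toLeftᶜ.orderEmbOfCardLe h).injective htt'

lemma ye_inj (hS : S.card = k) (hn : k ≤ n) : Function.Injective (ye n k S) := by
  have h := toRight_cond hS hn
  intro t t' htt'
  simp only [ye, dif_pos h] at htt'
  exact (S.toRightᶜ.orderEmbOfCardLe h).injective htt'

lemma xe_not_mem (hS : S.card = k) (hn : k ≤ n) (t : Fin (n - k)) : xe n k S t ∉ S.toLeft := by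
  have h := toLeft_cond hS hn
  simp only [xe, dif_pos h]
  exact Finset.mem_compl.1 (Finset.orderEmbOfCardLe_mem _ h t)

lemma ye_not_mem (hS : S.card = k) (hn : k ≤ n) (t : Fin (n - k)) : ye n k S t ∉ S.toRight := by
  have h := toRight_cond hS hn
  simp only [ye, dif_pos h]
  exact Finset.mem_compl.1 (Finset.orderEmbOfCardLe_mem _ h t)

lemma card_Gam (hS : S.card = k) : Fintype.card (Gam S) = k + 1 := by
  have h1 : S.toLeft.card + S.toRight.card = k := by
    rw [Finset.card_toLeft_add_card_toRight, hS]
  simp only [Fintype.card_sum, Fintype.card_unit, Fintype.card_coe]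
  omega

lemma eblk_inj (hS : S.card = k) (hn : k ≤ n) :
    Function.Injective fun p : Fin (n - k) × Gam S => eblk n k S p.1 p.2 := by
  have hxi := xe_inj hS hn
  have hyi := ye_inj hS hn
  have hxm := xe_not_mem hS hn
  have hym := ye_not_mem hS hn
  rintro ⟨t, γ⟩ ⟨t', γ'⟩ h
  simp only [eblk] at h
  have h1 : (pairOf S (xe n k S t) (ye n k S t) γ).1
      = (pairOf S (xe n k S t') (ye n k S t') γ').1 := congrArg Prod.fst h
  have h2 : (pairOf S (xe n k S t) (ye n k S t) γ).2
      = (pairOf S (xe n k S t') (ye n k S t') γ').2 := congrArg Prod.snd h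
  rcases γ with _ | (u | w) <;> rcases γ' with _ | (u' | w') <;>
      simp only [pairOf] at h1 h2
  · exact Prod.ext (hxi h1) rfl
  · exact absurd (h2 ▸ u'.2) (hym t)
  · exact absurd (h1 ▸ w'.2) (hxm t)
  · exact absurd (h2.symm ▸ u.2) (hym t')
  · have := hxi h1
    subst this
    exact Prod.ext rfl (by rw [Subtype.ext h2])
  · exact absurd (h1 ▸ w'.2) (hxm t)
  · exact absurd (h1.symm ▸ w.2) (hxm t')
  · exact absurd (h1.symm ▸ w.2) (hxm t')
  · have := hyi h2
    subst this
    exact Prod.ext rfl (by rw [Subtype.ext h1])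

end specs

section dstar
variable {n : ℕ} (S : Finset (Vt n)) (X Y : Fin n)

def dP : Vt n → Vt n → Prop := fun u v =>
  (u = Sum.inl X ∧ v = Sum.inr Y) ∨
  (u = Sum.inl X ∧ ∃ b ∈ S.toRight, v = Sum.inr b) ∨
  (u = Sum.inr Y ∧ ∃ a ∈ S.toLeft, v = Sum.inl a)

def dstar : (BG n).Subgraph where
  verts := ↑S ∪ {Sum.inl X, Sum.inr Y}
  Adj u v := dP S X Y u v ∨ dP S X Y v u
  adj_sub := by
    rintro u v (h | h) <;>
      rcases h with (⟨rfl, rfl⟩ | ⟨rfl, b, hb, rfl⟩ | ⟨rfl, a, ha, rfl⟩) <;>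
        simp [completeBipartiteGraph]
  edge_vert := by
    rintro u v (h | h) <;>
      rcases h with (⟨rfl, rfl⟩ | ⟨rfl, b, hb, rfl⟩ | ⟨rfl, a, ha, rfl⟩)
    · exact Or.inr (by simp)
    · exact Or.inr (by simp)
    · exact Or.inr (by simp)
    · exact Or.inr (by simp)
    · exact Or.inl (by simpa using Finset.mem_toRight.1 hb)
    · exact Or.inl (by simpa using Finset.mem_toLeft.1 ha)
  symm := ⟨fun u v h => Or.symm h⟩

lemma dstar_verts : (dstar S X Y).verts = ↑S ∪ {Sum.inl X, Sum.inr Y} := rfl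

lemma dstar_adj {u v : Vt n} :
    (dstar S X Y).Adj u v ↔ dP S X Y u v ∨ dP S X Y v u := Iff.rfl

noncomputable def edgeOf : Gam S → Sym2 (Vt n) := fun γ =>
  s(Sum.inl (pairOf S X Y γ).1, Sum.inr (pairOf S X Y γ).2)

lemma cross_inj {α β : Type*} {a a' : α} {b b' : β} :
    s(Sum.inl a, (Sum.inr b : α ⊕ β)) = s(Sum.inl a', Sum.inr b') ↔ a = a' ∧ b = b' := by
  rw [Sym2.eq_iff]
  simp

lemma dstar_adj_of_pair (γ : Gam S) :
    (dstar S X Y).Adj (Sum.inl (pairOf S X Y γ).1) (Sum.inr (pairOf S X Y γ).2) := by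
  rcases γ with _ | (u | w)
  · exact Or.inl (Or.inl ⟨rfl, rfl⟩)
  · exact Or.inl (Or.inr (Or.inl ⟨rfl, u.1, u.2, rfl⟩))
  · exact Or.inr (Or.inr (Or.inr ⟨rfl, w.1, w.2, rfl⟩))

lemma dstar_edgeSet : (dstar S X Y).edgeSet = Set.range (edgeOf S X Y) := by
  ext e
  induction e with
  | _ u v =>
    rw [Subgraph.mem_edgeSet]
    constructor
    · rintro (h | h) <;>
        rcases h with (⟨rfl, rfl⟩ | ⟨rfl, b, hb, rfl⟩ | ⟨rfl, a, ha, rfl⟩)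
      · exact ⟨Sum.inl (), rfl⟩
      · exact ⟨Sum.inr (Sum.inl ⟨b, hb⟩), rfl⟩
      · exact ⟨Sum.inr (Sum.inr ⟨a, ha⟩), by simp [edgeOf, pairOf, Sym2.eq_swap]⟩
      · exact ⟨Sum.inl (), by simp [edgeOf, pairOf, Sym2.eq_swap]⟩
      · exact ⟨Sum.inr (Sum.inl ⟨b, hb⟩), by simp [edgeOf, pairOf, Sym2.eq_swap]⟩
      · exact ⟨Sum.inr (Sum.inr ⟨a, ha⟩), by simp [edgeOf, pairOf]⟩
    · rintro ⟨γ, hγ⟩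
      have := dstar_adj_of_pair S X Y γ
      have h2 : s(Sum.inl (pairOf S X Y γ).1, Sum.inr (pairOf S X Y γ).2) = s(u, v) := hγ
      rw [Sym2.eq_iff] at h2
      rcases h2 with ⟨h3, h4⟩ | ⟨h3, h4⟩
      · rw [← h3, ← h4]; exact this
      · rw [← h3, ← h4]; exact ((dstar S X Y).adj_symm this)

end dstar

lemma acyclic_of_two_hubs {α : Type*} (H : SimpleGraph α) (x y : α)
    (hleaf : ∀ z, z ≠ x → z ≠ y → ∀ a b, H.Adj z a → H.Adj z b → a = b) :
    H.IsAcyclic := by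
  classical
  intro v c hc
  by_cases hsup : ∀ z ∈ c.support, z = x ∨ z = y
  · obtain h3 := hc.three_le_length
    cases c with
    | nil => simp at h3
    | cons h1 p =>
      cases p with
      | nil => simp at h3
      | cons h2 p' =>
        rename_i a b
        have hva : v ≠ a := h1.ne
        have hab : a ≠ b := h2.ne
        have hbv : b = v := by
          rcases hsup v (by simp) with rfl | rfl <;>
            rcases hsup a (by simp) with rfl | rfl <;>
              rcases hsup b (by simp) with rfl | rfl <;> simp_all
        have hnd := hc.edges_nodup
        rw [Walk.edges_cons, Walk.edges_cons, List.nodup_cons] at hnd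
        exact hnd.1 (by subst hbv; simp [Sym2.eq_swap])
  · push_neg at hsup
    obtain ⟨z, hz, hzx, hzy⟩ := hsup
    have hc' := hc.rotate hz
    set c' := c.rotate z hz with hc'def
    cases hcc : c' with
    | nil => exact Walk.IsCycle.not_of_nil (hcc ▸ hc')
    | cons h p =>
      rename_i w1
      have hzw : z ≠ w1 := h.ne
      obtain ⟨u, hq, q, hpr⟩ := Walk.exists_eq_cons_of_ne hzw p.reverse
      have huw : u = w1 := hleaf z hzx hzy u w1 hq h
      have hmem : s(z, w1) ∈ p.edges := by
        have : s(z, u) ∈ p.reverse.edges := by rw [hpr]; simp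
        rw [Walk.edges_reverse, List.mem_reverse] at this
        rwa [huw] at this
      have hnd := (hcc ▸ hc').edges_nodup
      rw [Walk.edges_cons, List.nodup_cons] at hnd
      exact hnd.1 hmem

noncomputable def colOf {n k : ℕ} (f : Fin n × Fin n → Fin (k + 1)) :
    Sym2 (Vt n) → Fin (k + 1) :=
  Sym2.lift ⟨fun u v =>
    Sum.elim (fun i => Sum.elim (fun _ => 0) (fun j => f (i, j)) v)
      (fun j => Sum.elim (fun i => f (i, j)) (fun _ => 0) v) u,
    by intro u v; rcases u with i | j <;> rcases v with i' | j' <;> rfl⟩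

lemma colOf_cross {n k : ℕ} (f : Fin n × Fin n → Fin (k + 1)) (i j : Fin n) :
    colOf f s(Sum.inl i, Sum.inr j) = f (i, j) := rfl

section rainbow
variable {n k : ℕ} (S : Finset (Vt n)) (X Y : Fin n)

lemma dstar_injOn (f : Fin n × Fin n → Fin (k + 1))
    (hgood : Function.Injective fun γ : Gam S => f (pairOf S X Y γ)) :
    Set.InjOn (colOf f) (dstar S X Y).edgeSet := by
  rw [dstar_edgeSet]
  rintro e1 ⟨γ1, rfl⟩ e2 ⟨γ2, rfl⟩ hc
  have h1 : f (pairOf S X Y γ1) = f (pairOf S X Y γ2) := by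
    simpa only [edgeOf, colOf_cross] using hc
  rw [hgood h1]

lemma dstar_isTree (hX : X ∉ S.toLeft) (hY : Y ∉ S.toRight) : (dstar S X Y).coe.IsTree := by
  have hmemX : (Sum.inl X : Vt n) ∈ (dstar S X Y).verts := Or.inr (by simp)
  have hmemY : (Sum.inr Y : Vt n) ∈ (dstar S X Y).verts := Or.inr (by simp)
  have hXY : (dstar S X Y).Adj (Sum.inl X) (Sum.inr Y) := Or.inl (Or.inl ⟨rfl, rfl⟩)
  constructor
  · -- connected
    rw [connected_iff]
    refine ⟨?_, ⟨⟨Sum.inl X, hmemX⟩⟩⟩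
    have hub : ∀ v : (dstar S X Y).verts,
        (dstar S X Y).coe.Reachable ⟨Sum.inl X, hmemX⟩ v := by
      rintro ⟨v, hv⟩
      rcases hv with hv | hv
      · rcases v with a | b
        · have ha : a ∈ S.toLeft := Finset.mem_toLeft.2 hv
          have h2 : (dstar S X Y).Adj (Sum.inr Y) (Sum.inl a) :=
            Or.inl (Or.inr (Or.inr ⟨rfl, a, ha, rfl⟩))
          have r1 : (dstar S X Y).coe.Adj ⟨Sum.inl X, hmemX⟩ ⟨Sum.inr Y, hmemY⟩ := hXY
          have r2 : (dstar S X Y).coe.Adj ⟨Sum.inr Y, hmemY⟩ ⟨Sum.inl a, Or.inl hv⟩ := h2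
          exact r1.reachable.trans r2.reachable
        · have hb : b ∈ S.toRight := Finset.mem_toRight.2 hv
          have h2 : (dstar S X Y).Adj (Sum.inl X) (Sum.inr b) :=
            Or.inl (Or.inr (Or.inl ⟨rfl, b, hb, rfl⟩))
          have r2 : (dstar S X Y).coe.Adj ⟨Sum.inl X, hmemX⟩ ⟨Sum.inr b, Or.inl hv⟩ := h2
          exact r2.reachable
      · rcases hv with rfl | rfl
        · rfl
        · have r1 : (dstar S X Y).coe.Adj ⟨Sum.inl X, hmemX⟩ ⟨Sum.inr Y, hmemY⟩ := hXY
          exact r1.reachable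
    intro u v
    exact (hub u).symm.trans (hub v)
  · -- acyclic
    apply acyclic_of_two_hubs _ ⟨Sum.inl X, hmemX⟩ ⟨Sum.inr Y, hmemY⟩
    rintro ⟨z, hz⟩ hzx hzy a b h1 h2
    have hzx' : z ≠ Sum.inl X := fun h => hzx (Subtype.ext h)
    have hzy' : z ≠ Sum.inr Y := fun h => hzy (Subtype.ext h)
    rcases z with a0 | b0
    · have forced : ∀ w : (dstar S X Y).verts,
          (dstar S X Y).coe.Adj ⟨Sum.inl a0, hz⟩ w → w.1 = Sum.inr Y := by
        rintro ⟨w, hw⟩ (hP | hP) <;>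
          rcases hP with (⟨h3, h4⟩ | ⟨h3, c, hc, h4⟩ | ⟨h3, c, hc, h4⟩)
        · exact absurd h3 hzx'
        · exact absurd h3 hzx'
        · exact absurd h3 (by simp)
        · exact absurd h4 (by simp)
        · exact absurd h4 (by simp)
        · exact h3
      exact Subtype.ext ((forced a h1).trans (forced b h2).symm)
    · have forced : ∀ w : (dstar S X Y).verts,
          (dstar S X Y).coe.Adj ⟨Sum.inr b0, hz⟩ w → w.1 = Sum.inl X := by
        rintro ⟨w, hw⟩ (hP | hP) <;>
          rcases hP with (⟨h3, h4⟩ | ⟨h3, c, hc, h4⟩ | ⟨h3, c, hc, h4⟩)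
        · exact absurd h3 (by simp)
        · exact absurd h3 (by simp)
        · exact absurd h3 hzy'
        · exact absurd h4 hzy'
        · exact h3
        · exact absurd h4 (by simp)
      exact Subtype.ext ((forced a h1).trans (forced b h2).symm)

end rainbow

section disjoint
variable {n : ℕ} (S : Finset (Vt n)) (X Y X' Y' : Fin n)

lemma dstar_verts_inter (hX : X ∉ S.toLeft) (hX' : X' ∉ S.toLeft)
    (hY : Y ∉ S.toRight) (hY' : Y' ∉ S.toRight) (hXX' : X ≠ X') (hYY' : Y ≠ Y') :
    (dstar S X Y).verts ∩ (dstar S X' Y').verts = ↑S := by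
  ext v
  simp only [dstar_verts, Set.mem_inter_iff, Set.mem_union, Set.mem_insert_iff,
    Set.mem_singleton_iff, Finset.mem_coe]
  constructor
  · rintro ⟨h1 | rfl | rfl, h2⟩
    · exact h1
    · rcases h2 with h2 | h2 | h2
      · exact h2
      · exact absurd (Sum.inl.inj h2) hXX'
      · exact absurd h2 (by simp)
    · rcases h2 with h2 | h2 | h2
      · exact h2
      · exact absurd h2 (by simp)
      · exact absurd (Sum.inr.inj h2) hYY'
  · intro hv
    exact ⟨Or.inl hv, Or.inl hv⟩

lemma dstar_edge_disjoint (hX : X ∉ S.toLeft) (hX' : X' ∉ S.toLeft)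
    (hY : Y ∉ S.toRight) (hY' : Y' ∉ S.toRight) (hXX' : X ≠ X') (hYY' : Y ≠ Y') :
    (dstar S X Y).edgeSet ∩ (dstar S X' Y').edgeSet = ∅ := by
  rw [dstar_edgeSet, dstar_edgeSet]
  ext e
  simp only [Set.mem_inter_iff, Set.mem_range, Set.mem_empty_iff_false, iff_false, not_and]
  rintro ⟨γ1, rfl⟩ ⟨γ2, hγ2⟩
  rw [edgeOf, edgeOf, cross_inj] at hγ2
  obtain ⟨h1, h2⟩ := hγ2
  rcases γ1 with _ | (u | w) <;> rcases γ2 with _ | (u' | w') <;>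
      simp only [pairOf] at h1 h2
  · exact hXX' h1.symm
  · exact hXX' h1.symm
  · exact hX (h1 ▸ w'.2)
  · exact hXX' h1.symm
  · exact hXX' h1.symm
  · exact hX (h1 ▸ w'.2)
  · exact hYY' h2.symm
  · exact hY (h2 ▸ u'.2)
  · exact hYY' h2.symm
end disjoint

lemma noninj_card {Γ C : Type*} [Fintype Γ] [DecidableEq Γ] [Fintype C] [DecidableEq C]
    (h : Fintype.card Γ = Fintype.card C) :
    (Finset.univ.filter fun v : Γ → C => ¬ Function.Injective v).card
      = (Fintype.card C) ^ (Fintype.card C) - (Fintype.card C).factorial := by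
  have htot := Finset.card_filter_add_card_filter_not
    (s := (Finset.univ : Finset (Γ → C))) (p := fun v : Γ → C => Function.Injective v)
  have hinj : (Finset.univ.filter fun v : Γ → C => Function.Injective v).card
      = (Fintype.card C).factorial := by
    rw [← Fintype.card_subtype]
    rw [Fintype.card_congr (Equiv.subtypeInjectiveEquivEmbedding Γ C)]
    rw [Fintype.card_embedding_eq, h, Nat.descFactorial_self]
  have hcard : (Finset.univ : Finset (Γ → C)).card
      = (Fintype.card C) ^ (Fintype.card C) := by
    rw [Finset.card_univ, Fintype.card_fun, h]
  omega


lemma core_count {ι Γ C τ : Type*} [Fintype ι] [DecidableEq ι] [Fintype Γ] [DecidableEq Γ]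
    [Fintype C] [DecidableEq C] [Inhabited C] [DecidableEq τ]
    (T : Finset τ) (e : τ → Γ → ι)
    (he : Function.Injective fun p : τ × Γ => e p.1 p.2) :
    (Finset.univ.filter fun f : ι → C => ∀ t ∈ T, ¬ Function.Injective fun γ => f (e t γ)).card
      * ((Fintype.card C) ^ (Fintype.card Γ)) ^ T.card
    ≤ (Finset.univ.filter fun v : Γ → C => ¬ Function.Injective v).card ^ T.card
      * (Fintype.card C) ^ (Fintype.card ι) := by
  classical
  set E : Finset ι := T.biUnion (fun t => Finset.univ.image (e t)) with hE
  have heinj : ∀ t, Function.Injective (e t) := by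
    intro t γ γ' h
    have := he (show (fun p : τ × Γ => e p.1 p.2) (t, γ) = (fun p : τ × Γ => e p.1 p.2) (t, γ')
      from h)
    exact congrArg Prod.snd this
  have hEcard : E.card = T.card * Fintype.card Γ := by
    rw [hE, card_biUnion]
    · simp only [card_image_of_injective _ (heinj _), card_univ]
      rw [sum_const, smul_eq_mul]
    · intro t ht t' ht' htt'
      simp only [Finset.disjoint_left, mem_image, mem_univ, true_and]
      rintro a ⟨γ, rfl⟩ ⟨γ', hγ'⟩
      have h2 : ((t', γ') : τ × Γ).1 = ((t, γ) : τ × Γ).1 := congrArg Prod.fst (he hγ')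
      exact htt' h2.symm
  set Φ : (ι → C) → ((↥T → (Γ → C)) × (ι → C)) :=
    fun f => (fun t => fun γ => f (e t.1 γ), fun x => if x ∈ E then default else f x) with hΦdef
  have hΦ : Function.Injective Φ := by
    intro f g hfg
    funext x
    by_cases hx : x ∈ E
    · rw [hE] at hx
      obtain ⟨t, ht, hx⟩ := mem_biUnion.1 hx
      obtain ⟨γ, -, rfl⟩ := mem_image.1 hx
      have := congrFun (congrFun (congrArg Prod.fst hfg) ⟨t, ht⟩) γ
      exact this
    · have := congrFun (congrArg Prod.snd hfg) x
      simpa [hΦdef, hx] using this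
  set Tgt := (Finset.univ.filter fun g : ↥T → (Γ → C) => ∀ t, ¬ Function.Injective (g t)) ×ˢ
    (Finset.univ.filter fun h : ι → C => ∀ x ∈ E, h x = default) with hTgt
  have hmaps : ∀ f ∈ (Finset.univ.filter fun f : ι → C =>
      ∀ t ∈ T, ¬ Function.Injective fun γ => f (e t γ)), Φ f ∈ Tgt := by
    intro f hf
    rw [mem_filter] at hf
    rw [hTgt, mem_product, mem_filter, mem_filter]
    refine ⟨⟨mem_univ _, fun t => hf.2 t.1 t.2⟩, ⟨mem_univ _, fun x hx => by simp [hΦdef, hx]⟩⟩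
  have hcard := Finset.card_le_card_of_injOn Φ hmaps hΦ.injOn
  have hA : (Finset.univ.filter fun g : ↥T → (Γ → C) => ∀ t, ¬ Function.Injective (g t)).card
      = (Finset.univ.filter fun v : Γ → C => ¬ Function.Injective v).card ^ T.card := by
    rw [← Fintype.card_subtype]
    rw [Fintype.card_congr (Equiv.subtypePiEquivPi (p := fun _ v => ¬ Function.Injective v))]
    rw [Fintype.card_pi]
    simp only [Fintype.card_subtype]
    rw [prod_const, card_univ, Fintype.card_coe]
  have hB : (Finset.univ.filter fun h : ι → C => ∀ x ∈ E, h x = default).card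
      = (Fintype.card C) ^ (Eᶜ.card) := by
    rw [← Fintype.card_subtype]
    have eqv : {h : ι → C // ∀ x ∈ E, h x = default} ≃ (↥(Eᶜ : Finset ι) → C) := by
      refine ⟨fun h x => h.1 x.1, fun g => ⟨fun x => if hx : x ∈ E then default
        else g ⟨x, by simp [hx]⟩, fun x hx => by simp [hx]⟩, ?_, ?_⟩
      · intro h
        ext x
        by_cases hx : x ∈ E
        · simp [hx, h.2 x hx]
        · simp [hx]
      · intro g
        funext x
        have hx : ¬ (x.1 ∈ E) := Finset.mem_compl.1 x.2
        simp [hx]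
    rw [Fintype.card_congr eqv, Fintype.card_fun, Fintype.card_coe]
  calc (Finset.univ.filter fun f : ι → C => ∀ t ∈ T, ¬ Function.Injective fun γ => f (e t γ)).card
      * ((Fintype.card C) ^ (Fintype.card Γ)) ^ T.card
      ≤ Tgt.card * ((Fintype.card C) ^ (Fintype.card Γ)) ^ T.card := by
        exact Nat.mul_le_mul_right _ hcard
    _ = (Finset.univ.filter fun v : Γ → C => ¬ Function.Injective v).card ^ T.card
      * (Fintype.card C) ^ (Fintype.card ι) := by
        have hle : E.card ≤ Fintype.card ι := by
          simpa using Finset.card_le_card (Finset.subset_univ E)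
        have h1 : Fintype.card Γ * T.card = E.card := (hEcard.trans (Nat.mul_comm _ _)).symm
        have hexp : Eᶜ.card + Fintype.card Γ * T.card = Fintype.card ι := by
          rw [Finset.card_compl, h1]
          exact Nat.sub_add_cancel hle
        rw [hTgt]
        rw [card_product]
        rw [hA]
        rw [hB]
        rw [← pow_mul, mul_assoc, ← pow_add]
        rw [hexp]


lemma numeric_bound (k ℓ : ℕ) (hk : 1 ≤ k) (hℓ : 1 ≤ ℓ) (B Q : ℕ) (hQ : 0 < Q) (hBQ : B < Q) :
    ∃ N, k + ℓ + 1 < N ∧ ∀ n, N ≤ n →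
      Nat.choose (2 * n) k * Nat.choose (n - k) (ℓ - 1) * B ^ (n - k - (ℓ - 1))
        < Q ^ (n - k - (ℓ - 1)) := by
  rcases Nat.eq_zero_or_pos B with hB0 | hBpos
  · refine ⟨k + ℓ + 2, by omega, fun n hn => ?_⟩
    have hm : 1 ≤ n - k - (ℓ - 1) := by omega
    subst hB0
    rw [zero_pow (by omega)]
    simpa using pow_pos hQ _
  · set K := k + ℓ - 1 with hK
    set r : ℝ := (B : ℝ) / (Q : ℝ) with hr
    have hQR : (0 : ℝ) < Q := by exact_mod_cast hQ
    have hBR : (0 : ℝ) < B := by exact_mod_cast hBpos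
    have hr0 : (0 : ℝ) < r := div_pos hBR hQR
    have hr1 : r < 1 := (div_lt_one hQR).2 (by exact_mod_cast hBQ)
    set ε : ℝ := r ^ K / 2 ^ K / 2 with hε
    have hεpos : 0 < ε := by positivity
    have htd := tendsto_pow_const_mul_const_pow_of_lt_one K hr0.le hr1
    have hev := htd.eventually (gt_mem_nhds hεpos)
    obtain ⟨N₀, hN₀⟩ := Filter.eventually_atTop.1 hev
    refine ⟨max N₀ (k + ℓ + 2), by omega, fun n hn => ?_⟩
    have hnN₀ : N₀ ≤ n := le_trans (le_max_left _ _) hn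
    have hnk : k + ℓ + 2 ≤ n := le_trans (le_max_right _ _) hn
    have hm' : n - k - (ℓ - 1) = n - K := by omega
    have hKn : K ≤ n := by omega
    -- step 1 : nat bound by (2n)^K * B^(n-K)
    have step1 : Nat.choose (2 * n) k * Nat.choose (n - k) (ℓ - 1) * B ^ (n - k - (ℓ - 1))
        ≤ (2 * n) ^ K * B ^ (n - K) := by
      rw [hm']
      refine Nat.mul_le_mul_right _ ?_
      calc Nat.choose (2 * n) k * Nat.choose (n - k) (ℓ - 1)
          ≤ (2 * n) ^ k * (n - k) ^ (ℓ - 1) :=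
            Nat.mul_le_mul (Nat.choose_le_pow _ _) (Nat.choose_le_pow _ _)
        _ ≤ (2 * n) ^ k * (2 * n) ^ (ℓ - 1) :=
            Nat.mul_le_mul_left _ (Nat.pow_le_pow_left (by omega) _)
        _ = (2 * n) ^ K := by rw [← pow_add]; congr 1; omega
    -- step 2 : real bound
    have step2 : ((2 * n) ^ K * B ^ (n - K) : ℕ) < (Q ^ (n - K) : ℕ) := by
      have key : ((2 * n : ℕ) : ℝ) ^ K * r ^ (n - K) < 1 := by
        have h1 : ((n : ℝ)) ^ K * r ^ n < ε := hN₀ n hnN₀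
        have hrK : r ^ K ≠ 0 := by positivity
        have h2K : (2 : ℝ) ^ K ≠ 0 := by positivity
        have hcast : ((2 * n : ℕ) : ℝ) = 2 * (n : ℝ) := by push_cast; ring
        rw [hcast, mul_pow, pow_sub₀ r (ne_of_gt hr0) hKn]
        calc (2 : ℝ) ^ K * (n : ℝ) ^ K * (r ^ n / r ^ K)
            = ((n : ℝ) ^ K * r ^ n) * (2 ^ K / r ^ K) := by field_simp
          _ < ε * (2 ^ K / r ^ K) := by
              refine mul_lt_mul_of_pos_right h1 (by positivity)
          _ = 1 / 2 := by rw [hε]; field_simp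
          _ < 1 := by norm_num
      rw [← Nat.cast_lt (α := ℝ)]
      push_cast
      have hQm : (0 : ℝ) < (Q : ℝ) ^ (n - K) := by positivity
      have hBr : (B : ℝ) = r * Q := by rw [hr]; field_simp
      calc ((2 * (n : ℝ)) ^ K) * (B : ℝ) ^ (n - K)
          = (((2 * n : ℕ) : ℝ) ^ K * r ^ (n - K)) * (Q : ℝ) ^ (n - K) := by
            rw [hBr, mul_pow]; push_cast; ring
        _ < 1 * (Q : ℝ) ^ (n - K) := by exact mul_lt_mul_of_pos_right key hQm
        _ = (Q : ℝ) ^ (n - K) := one_mul _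
    rw [hm'] at step1 ⊢
    exact lt_of_le_of_lt step1 step2


set_option maxHeartbeats 2000000 in
lemma exists_good (k ℓ n : ℕ) (hℓ : 1 ≤ ℓ) (hn2 : k + ℓ + 2 ≤ n)
    (hnum : Nat.choose (2 * n) k * Nat.choose (n - k) (ℓ - 1)
        * ((k + 1) ^ (k + 1) - (k + 1).factorial) ^ (n - k - (ℓ - 1))
      < ((k + 1) ^ (k + 1)) ^ (n - k - (ℓ - 1))) :
    ∃ f : Fin n × Fin n → Fin (k + 1), ∀ S : Finset (Vt n), S.card = k →
      ℓ ≤ (Finset.univ.filter fun t : Fin (n - k) =>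
        Function.Injective fun γ : Gam S => f (eblk n k S t γ)).card := by
  classical
  by_contra hcon
  push_neg at hcon
  set q := k + 1 with hq
  set m := n - k with hm
  set m' := m - (ℓ - 1) with hm'
  set Bc := q ^ q - q.factorial with hBc
  set Q' := (q ^ q) ^ m' with hQ'
  have hkn : k ≤ n := by omega
  have hqnnpos : 0 < q ^ (n * n) := pow_pos (by omega) _
  have keyS : ∀ S : Finset (Vt n), S.card = k →
      (univ.filter fun f : Fin n × Fin n → Fin q =>
        (univ.filter fun t : Fin m =>
          Function.Injective fun γ : Gam S => f (eblk n k S t γ)).card < ℓ).card * Q'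
      ≤ Nat.choose m (ℓ - 1) * (Bc ^ m' * q ^ (n * n)) := by
    intro S hS
    have hsub : (univ.filter fun f : Fin n × Fin n → Fin q =>
        (univ.filter fun t : Fin m =>
          Function.Injective fun γ : Gam S => f (eblk n k S t γ)).card < ℓ)
        ⊆ (Finset.powersetCard (ℓ - 1) (univ : Finset (Fin m))).biUnion fun Gd =>
          univ.filter fun f : Fin n × Fin n → Fin q =>
            ∀ t ∈ Gdᶜ, ¬ Function.Injective fun γ : Gam S => f (eblk n k S t γ) := by
      intro f hf
      rw [mem_filter] at hf
      obtain ⟨-, hflt⟩ := hf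
      obtain ⟨Gd, hsub1, -, hcard⟩ := Finset.exists_subsuperset_card_eq
        (Finset.subset_univ (univ.filter fun t : Fin m =>
          Function.Injective fun γ : Gam S => f (eblk n k S t γ)))
        (by omega : (univ.filter fun t : Fin m =>
          Function.Injective fun γ : Gam S => f (eblk n k S t γ)).card ≤ ℓ - 1)
        (by rw [Finset.card_univ, Fintype.card_fin]; omega)
      refine Finset.mem_biUnion.2 ⟨Gd, Finset.mem_powersetCard.2 ⟨Finset.subset_univ _, hcard⟩,
        Finset.mem_filter.2 ⟨Finset.mem_univ _, ?_⟩⟩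
      intro t ht hinj
      exact (Finset.mem_compl.1 ht) (hsub1 (Finset.mem_filter.2 ⟨Finset.mem_univ _, hinj⟩))
    have h1 : (univ.filter fun f : Fin n × Fin n → Fin q =>
        (univ.filter fun t : Fin m =>
          Function.Injective fun γ : Gam S => f (eblk n k S t γ)).card < ℓ).card
        ≤ ∑ Gd ∈ Finset.powersetCard (ℓ - 1) (univ : Finset (Fin m)),
          (univ.filter fun f : Fin n × Fin n → Fin q =>
            ∀ t ∈ Gdᶜ, ¬ Function.Injective fun γ : Gam S => f (eblk n k S t γ)).card :=
      le_trans (Finset.card_le_card hsub) (Finset.card_biUnion_le)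
    have h2 : ∀ Gd ∈ Finset.powersetCard (ℓ - 1) (univ : Finset (Fin m)),
        (univ.filter fun f : Fin n × Fin n → Fin q =>
          ∀ t ∈ Gdᶜ, ¬ Function.Injective fun γ : Gam S => f (eblk n k S t γ)).card * Q'
        ≤ Bc ^ m' * q ^ (n * n) := by
      intro Gd hGd
      have hGdcard : Gd.card = ℓ - 1 := (Finset.mem_powersetCard.1 hGd).2
      have hcompl : Gdᶜ.card = m' := by
        rw [Finset.card_compl, hGdcard, Fintype.card_fin]
      have hcore := core_count (C := Fin q) Gdᶜ (eblk n k S) (eblk_inj hS hkn)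
      rw [noninj_card (by rw [card_Gam hS, Fintype.card_fin]), card_Gam hS,
        Fintype.card_fin, Fintype.card_prod, Fintype.card_fin, hcompl] at hcore
      calc (univ.filter fun f : Fin n × Fin n → Fin q =>
            ∀ t ∈ Gdᶜ, ¬ Function.Injective fun γ : Gam S => f (eblk n k S t γ)).card * Q'
          = (univ.filter fun f : Fin n × Fin n → Fin q =>
            ∀ t ∈ Gdᶜ, ¬ Function.Injective fun γ : Gam S => f (eblk n k S t γ)).card
              * (q ^ (k + 1)) ^ m' := rfl
        _ ≤ Bc ^ m' * q ^ (n * n) := by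
            convert hcore using 3
            ext f
            simp only [Finset.mem_filter]
    calc (univ.filter fun f : Fin n × Fin n → Fin q =>
        (univ.filter fun t : Fin m =>
          Function.Injective fun γ : Gam S => f (eblk n k S t γ)).card < ℓ).card * Q'
        ≤ (∑ Gd ∈ Finset.powersetCard (ℓ - 1) (univ : Finset (Fin m)),
          (univ.filter fun f : Fin n × Fin n → Fin q =>
            ∀ t ∈ Gdᶜ, ¬ Function.Injective fun γ : Gam S => f (eblk n k S t γ)).card) * Q' :=
          Nat.mul_le_mul_right _ h1
      _ = ∑ Gd ∈ Finset.powersetCard (ℓ - 1) (univ : Finset (Fin m)),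
          (univ.filter fun f : Fin n × Fin n → Fin q =>
            ∀ t ∈ Gdᶜ, ¬ Function.Injective fun γ : Gam S => f (eblk n k S t γ)).card * Q' := by
          rw [Finset.sum_mul]
      _ ≤ ∑ _Gd ∈ Finset.powersetCard (ℓ - 1) (univ : Finset (Fin m)),
          (Bc ^ m' * q ^ (n * n)) := Finset.sum_le_sum h2
      _ = Nat.choose m (ℓ - 1) * (Bc ^ m' * q ^ (n * n)) := by
          rw [Finset.sum_const, smul_eq_mul, Finset.card_powersetCard, Finset.card_univ,
            Fintype.card_fin]
  have hToT : (univ : Finset (Fin n × Fin n → Fin q))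
      ⊆ (Finset.powersetCard k (univ : Finset (Vt n))).biUnion fun S =>
        univ.filter fun f : Fin n × Fin n → Fin q =>
          (univ.filter fun t : Fin m =>
            Function.Injective fun γ : Gam S => f (eblk n k S t γ)).card < ℓ := by
    intro f _
    obtain ⟨S, hS, hlt⟩ := hcon f
    exact Finset.mem_biUnion.2 ⟨S, Finset.mem_powersetCard_univ.2 hS,
      Finset.mem_filter.2 ⟨Finset.mem_univ _, hlt⟩⟩
  have hTot1 : q ^ (n * n) ≤ ∑ S ∈ Finset.powersetCard k (univ : Finset (Vt n)),
      (univ.filter fun f : Fin n × Fin n → Fin q =>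
        (univ.filter fun t : Fin m =>
          Function.Injective fun γ : Gam S => f (eblk n k S t γ)).card < ℓ).card := by
    calc q ^ (n * n) = (univ : Finset (Fin n × Fin n → Fin q)).card := by
          rw [Finset.card_univ, Fintype.card_fun, Fintype.card_prod]
          simp
      _ ≤ _ := le_trans (Finset.card_le_card hToT) (Finset.card_biUnion_le)
  have hTot2 : q ^ (n * n) * Q'
      ≤ Nat.choose (2 * n) k * (Nat.choose m (ℓ - 1) * (Bc ^ m' * q ^ (n * n))) := by
    calc q ^ (n * n) * Q'
        ≤ (∑ S ∈ Finset.powersetCard k (univ : Finset (Vt n)),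
          (univ.filter fun f : Fin n × Fin n → Fin q =>
            (univ.filter fun t : Fin m =>
              Function.Injective fun γ : Gam S => f (eblk n k S t γ)).card < ℓ).card) * Q' :=
          Nat.mul_le_mul_right _ hTot1
      _ = ∑ S ∈ Finset.powersetCard k (univ : Finset (Vt n)),
          (univ.filter fun f : Fin n × Fin n → Fin q =>
            (univ.filter fun t : Fin m =>
              Function.Injective fun γ : Gam S => f (eblk n k S t γ)).card < ℓ).card * Q' := by
          rw [Finset.sum_mul]
      _ ≤ ∑ S ∈ Finset.powersetCard k (univ : Finset (Vt n)),
          (Nat.choose m (ℓ - 1) * (Bc ^ m' * q ^ (n * n))) := by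
          refine Finset.sum_le_sum ?_
          intro S hSmem
          exact keyS S (Finset.mem_powersetCard_univ.1 hSmem)
      _ = Nat.choose (2 * n) k * (Nat.choose m (ℓ - 1) * (Bc ^ m' * q ^ (n * n))) := by
          have hV : Fintype.card (Vt n) = 2 * n := by
            simp [two_mul]
          rw [Finset.sum_const, smul_eq_mul, Finset.card_powersetCard, Finset.card_univ, hV]
  have hfinal : Nat.choose (2 * n) k * (Nat.choose m (ℓ - 1) * (Bc ^ m' * q ^ (n * n)))
      < Q' * q ^ (n * n) := by
    have h3 : Nat.choose (2 * n) k * (Nat.choose m (ℓ - 1) * (Bc ^ m' * q ^ (n * n)))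
        = (Nat.choose (2 * n) k * Nat.choose m (ℓ - 1) * Bc ^ m') * q ^ (n * n) := by ring
    rw [h3]
    exact (Nat.mul_lt_mul_right hqnnpos).2 hnum
  have : q ^ (n * n) * Q' < Q' * q ^ (n * n) := lt_of_le_of_lt hTot2 hfinal
  rw [mul_comm] at this
  exact lt_irrefl _ this

theorem rx_Knn_le_succ (k ℓ : ℕ) (hk : 3 ≤ k) (hℓ : 1 ≤ ℓ) :
    ∃ N : ℕ, 0 < N ∧ ∀ n : ℕ, N ≤ n →
      rainbowIndex (completeBipartiteGraph (Fin n) (Fin n)) k ℓ ≤ k + 1 := by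
  classical
  have hBQ : (k + 1) ^ (k + 1) - (k + 1).factorial < (k + 1) ^ (k + 1) :=
    Nat.sub_lt (pow_pos (by omega) _) (Nat.factorial_pos _)
  obtain ⟨N, hNgt, hN⟩ := numeric_bound k ℓ (by omega) hℓ
    ((k + 1) ^ (k + 1) - (k + 1).factorial) ((k + 1) ^ (k + 1))
    (pow_pos (by omega) _) hBQ
  refine ⟨N, by omega, fun n hn => ?_⟩
  have hn2 : k + ℓ + 2 ≤ n := by omega
  have hkn : k ≤ n := by omega
  obtain ⟨f, hf⟩ := exists_good k ℓ n hℓ hn2 (hN n hn)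
  apply Nat.sInf_le
  refine ⟨colOf f, ?_⟩
  intro S hS
  have hGood : ℓ ≤ (Finset.univ.filter fun t : Fin (n - k) =>
      Function.Injective fun γ : Gam S => f (eblk n k S t γ)).card := hf S hS
  set σ := Finset.orderEmbOfCardLe _ hGood with hσ
  have hσmem : ∀ i : Fin ℓ, σ i ∈ (Finset.univ.filter fun t : Fin (n - k) =>
      Function.Injective fun γ : Gam S => f (eblk n k S t γ)) :=
    fun i => Finset.orderEmbOfCardLe_mem _ hGood i
  refine ⟨fun i => dstar S (xe n k S (σ i)) (ye n k S (σ i)), ?_, ?_⟩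
  · intro i
    refine ⟨?_, ?_, ?_⟩
    · rw [dstar_verts]
      exact Set.subset_union_left
    · exact dstar_isTree S _ _ (xe_not_mem hS hkn _) (ye_not_mem hS hkn _)
    · exact dstar_injOn S _ _ f (Finset.mem_filter.1 (hσmem i)).2
  · intro i j hij
    have hXij : xe n k S (σ i) ≠ xe n k S (σ j) :=
      fun h => hij (σ.injective (xe_inj hS hkn h))
    have hYij : ye n k S (σ i) ≠ ye n k S (σ j) :=
      fun h => hij (σ.injective (ye_inj hS hkn h))
    exact ⟨dstar_edge_disjoint S _ _ _ _ (xe_not_mem hS hkn _) (xe_not_mem hS hkn _)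
        (ye_not_mem hS hkn _) (ye_not_mem hS hkn _) hXij hYij,
      dstar_verts_inter S _ _ _ _ (xe_not_mem hS hkn _) (xe_not_mem hS hkn _)
        (ye_not_mem hS hkn _) (ye_not_mem hS hkn _) hXij hYij⟩
end

section
/- For every pair of positive integers k, ℓ with k ≥ 4, there exists a positive integer N = N(k,ℓ) such that for every integer n ≥ N, rx_{k,ℓ}(K_{n,n}) = k + 1. -/
open SimpleGraph

section RxAux
lemma no_cycle_at_leaf {V : Type*} {G : SimpleGraph V} {v : V}
    (hv : ∀ u w, G.Adj v u → G.Adj v w → u = w) (p : G.Walk v v) (hp : p.IsCycle) : False := by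
  cases p with
  | nil => exact hp.ne_nil rfl
  | @cons _ w1 _ h q =>
    obtain ⟨w2, h2, r, hr⟩ := SimpleGraph.Walk.exists_eq_cons_of_ne (h.ne) q.reverse
    have hmem : s(v, w2) ∈ q.edges := by
      have : s(v, w2) ∈ q.reverse.edges := by
        rw [hr]; exact List.mem_cons_self
      rwa [SimpleGraph.Walk.edges_reverse, List.mem_reverse] at this
    have hw : w1 = w2 := hv _ _ h h2
    subst hw
    have hnd := hp.isCircuit.isTrail.edges_nodup
    rw [SimpleGraph.Walk.edges_cons] at hnd
    exact (List.nodup_cons.mp hnd).1 hmem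

lemma cycle_exists_third {V : Type*} {G : SimpleGraph V} {v : V}
    (p : G.Walk v v) (hp : p.IsCycle) (a b : V) :
    ∃ u ∈ p.support, u ≠ a ∧ u ≠ b := by
  classical
  by_contra hcon
  push_neg at hcon
  have h3 : 3 ≤ p.length := hp.three_le_length
  have hlen : p.support.tail.length = p.length := by
    have := SimpleGraph.Walk.length_support p
    have ht : p.support ≠ [] := SimpleGraph.Walk.support_ne_nil p
    cases hsup : p.support with
    | nil => exact absurd hsup ht
    | cons x xs =>
      have := SimpleGraph.Walk.length_support p
      rw [hsup] at this
      simp at this ⊢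
      omega
  have hnd : p.support.tail.Nodup := hp.support_nodup
  have hsub : p.support.tail.toFinset ⊆ ({a, b} : Finset V) := by
    intro u hu
    have hu' : u ∈ p.support := List.mem_of_mem_tail (List.mem_toFinset.mp hu)
    rcases hcon u hu' with h
    by_cases ha : u = a
    · simp [ha]
    · simp [h ha]
  have hcard : p.support.tail.toFinset.card = p.support.tail.length :=
    List.toFinset_card_of_nodup hnd
  have : p.support.tail.toFinset.card ≤ 2 :=
    le_trans (Finset.card_le_card hsub) (Finset.card_insert_le _ _ |>.trans (by simp))
  omega

lemma isAcyclic_of_leafy {V : Type*} {G : SimpleGraph V} (a b : V)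
    (h : ∀ v, v ≠ a → v ≠ b → ∀ u w, G.Adj v u → G.Adj v w → u = w) :
    G.IsAcyclic := by
  classical
  intro v p hp
  obtain ⟨u, hu, hua, hub⟩ := cycle_exists_third p hp a b
  exact no_cycle_at_leaf (h u hua hub) (p.rotate u hu) (hp.rotate hu)
open SimpleGraph Sum


open Sum



variable {n q : ℕ}

def colorOf (M : Fin n × Fin n → Fin q) : Sym2 (Fin n ⊕ Fin n) → Fin q :=
  Sym2.lift ⟨fun u v => match u, v with
    | .inl a, .inr b => M (a, b)
    | .inr b, .inl a => M (a, b)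
    | .inl a, .inl a' => M (min a a', max a a')
    | .inr b, .inr b' => M (min b b', max b b'), by
      intro u v
      rcases u with a | a <;> rcases v with b | b <;> simp [min_comm, max_comm]⟩

@[simp] lemma colorOf_mk (M : Fin n × Fin n → Fin q) (a b : Fin n) :
    colorOf M s(inl a, inr b) = M (a, b) := rfl

/-- the coordinates used by the spider tree for `S` with hubs `x,y`. -/
def block (S : Finset (Fin n ⊕ Fin n)) (x y : Fin n) : Finset (Fin n × Fin n) :=
  (S.toLeft.image fun s => (s, y)) ∪ (S.toRight.image fun t => (x, t)) ∪ {(x, y)}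

lemma mem_block {S : Finset (Fin n ⊕ Fin n)} {x y : Fin n} {p : Fin n × Fin n} :
    p ∈ block S x y ↔ (p.2 = y ∧ inl p.1 ∈ S) ∨ (p.1 = x ∧ inr p.2 ∈ S) ∨ (p = (x, y)) := by
  rcases p with ⟨a, b⟩
  simp only [block, Finset.mem_union, Finset.mem_image, Finset.mem_singleton,
    Finset.mem_toLeft, Finset.mem_toRight, Prod.mk.injEq]
  constructor
  · rintro ((⟨s, hs, rfl, rfl⟩ | ⟨t, ht, rfl, rfl⟩) | ⟨rfl, rfl⟩)
    · exact Or.inl ⟨rfl, hs⟩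
    · exact Or.inr (Or.inl ⟨rfl, ht⟩)
    · exact Or.inr (Or.inr ⟨rfl, rfl⟩)
  · rintro (⟨rfl, hs⟩ | ⟨rfl, ht⟩ | ⟨rfl, rfl⟩)
    · exact Or.inl (Or.inl ⟨a, hs, rfl, rfl⟩)
    · exact Or.inl (Or.inr ⟨b, ht, rfl, rfl⟩)
    · exact Or.inr ⟨rfl, rfl⟩

lemma block_card {S : Finset (Fin n ⊕ Fin n)} {x y : Fin n}
    (hx : inl x ∉ S) (hy : inr y ∉ S) :
    (block S x y).card = S.card + 1 := by
  classical
  have h1 : ((S.toLeft.image fun s => (s, y)) : Finset (Fin n × Fin n)).card = S.toLeft.card :=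
    Finset.card_image_of_injective _ (fun a b h => (Prod.mk.injEq _ _ _ _ ▸ h).1)
  have h2 : ((S.toRight.image fun t => (x, t)) : Finset (Fin n × Fin n)).card = S.toRight.card :=
    Finset.card_image_of_injective _ (fun a b h => (Prod.mk.injEq _ _ _ _ ▸ h).2)
  have hd1 : Disjoint ((S.toLeft.image fun s => (s, y)) ∪ (S.toRight.image fun t => (x, t)))
      ({(x, y)} : Finset (Fin n × Fin n)) := by
    simp only [Finset.disjoint_singleton_right, Finset.mem_union, Finset.mem_image,
      Finset.mem_toLeft, Finset.mem_toRight]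
    rintro (⟨s, hs, h⟩ | ⟨t, ht, h⟩)
    · obtain ⟨h1', h2'⟩ := Prod.mk.injEq .. ▸ h; subst h1'; exact hx hs
    · obtain ⟨h1', h2'⟩ := Prod.mk.injEq .. ▸ h; subst h2'; exact hy ht
  have hd2 : Disjoint ((S.toLeft.image fun s => (s, y)) : Finset (Fin n × Fin n))
      (S.toRight.image fun t => (x, t)) := by
    simp only [Finset.disjoint_left, Finset.mem_image, Finset.mem_toLeft, Finset.mem_toRight]
    rintro p ⟨s, hs, h⟩ ⟨t, ht, h'⟩
    subst h
    obtain ⟨h1', h2'⟩ := Prod.mk.injEq .. ▸ h'.symm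
    subst h1'; exact hx hs
  rw [block, Finset.card_union_of_disjoint hd1, Finset.card_union_of_disjoint hd2, h1, h2,
    Finset.card_singleton, Finset.card_toLeft_add_card_toRight]

/-- base relation of the spider/double-star tree -/
def sr (S : Finset (Fin n ⊕ Fin n)) (x y : Fin n) (u v : Fin n ⊕ Fin n) : Prop :=
  (u = inl x ∧ v = inr y) ∨ (∃ s, inl s ∈ S ∧ u = inl s ∧ v = inr y) ∨
    (∃ t, inr t ∈ S ∧ u = inl x ∧ v = inr t)

def spider (S : Finset (Fin n ⊕ Fin n)) (x y : Fin n) :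
    (completeBipartiteGraph (Fin n) (Fin n)).Subgraph where
  verts := ↑(insert (inl x) (insert (inr y) S))
  Adj u v := sr S x y u v ∨ sr S x y v u
  adj_sub := by
    rintro u v (h | h) <;>
    · rcases h with ⟨rfl, rfl⟩ | ⟨s, hs, rfl, rfl⟩ | ⟨t, ht, rfl, rfl⟩ <;> simp
  edge_vert := by
    rintro u v (h | h) <;>
      rcases h with ⟨rfl, rfl⟩ | ⟨s, hs, rfl, rfl⟩ | ⟨t, ht, rfl, rfl⟩ <;>
      simp_all <;> tauto
  symm := by constructor; intro u v h; tauto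

lemma spider_verts (S : Finset (Fin n ⊕ Fin n)) (x y : Fin n) :
    (spider S x y).verts = ↑S ∪ {inl x, inr y} := by
  ext u
  simp only [spider, Finset.coe_insert, Set.mem_insert_iff, Finset.mem_coe, Set.mem_union,
    Set.mem_singleton_iff]
  tauto

lemma spider_edgeSet (S : Finset (Fin n ⊕ Fin n)) (x y : Fin n) :
    (spider S x y).edgeSet =
      ↑((block S x y).image (fun p => s(inl p.1, inr p.2))) := by
  ext e
  induction e using Sym2.ind with
  | _ u v =>
    simp only [Subgraph.mem_edgeSet, Finset.coe_image, Set.mem_image, Finset.mem_coe]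
    constructor
    · rintro (h | h) <;>
      · rcases h with ⟨rfl, rfl⟩ | ⟨s, hs, rfl, rfl⟩ | ⟨t, ht, rfl, rfl⟩
        · exact ⟨(x, y), mem_block.mpr (Or.inr (Or.inr rfl)), by simp [Sym2.eq_swap]⟩
        · exact ⟨(s, y), mem_block.mpr (Or.inl ⟨rfl, hs⟩), by
            first | rfl | (rw [Sym2.eq_swap])⟩
        · exact ⟨(x, t), mem_block.mpr (Or.inr (Or.inl ⟨rfl, ht⟩)), by
            first | rfl | (rw [Sym2.eq_swap])⟩
    · rintro ⟨⟨a, b⟩, hp, he⟩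
      rw [Sym2.eq_iff] at he
      have hadj : sr S x y (inl a) (inr b) := by
        rcases mem_block.mp hp with ⟨h2, h1⟩ | ⟨h1, h2⟩ | h
        · dsimp at h2 h1; subst h2; exact Or.inr (Or.inl ⟨a, h1, rfl, rfl⟩)
        · dsimp at h1 h2; subst h1; exact Or.inr (Or.inr ⟨b, h2, rfl, rfl⟩)
        · obtain ⟨h1, h2⟩ := Prod.mk.injEq .. ▸ h
          subst h1; subst h2; exact Or.inl ⟨rfl, rfl⟩
      rcases he with ⟨rfl, rfl⟩ | ⟨h1, h2⟩
      · exact Or.inl hadj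
      · subst h1; subst h2; exact Or.inr hadj

lemma spider_isTree {S : Finset (Fin n ⊕ Fin n)} {x y : Fin n}
    (hx : inl x ∉ S) (hy : inr y ∉ S) : (spider S x y).coe.IsTree := by
  classical
  set T := spider S x y with hT
  have hxy : inl (α := Fin n) (β := Fin n) x ∈ T.verts := by simp [hT, spider]
  have hyv : inr (α := Fin n) (β := Fin n) y ∈ T.verts := by simp [hT, spider]
  have hadjxy : T.Adj (inl x) (inr y) := Or.inl (Or.inl ⟨rfl, rfl⟩)
  have hvmem : ∀ v, v ∈ T.verts → v = inl x ∨ v = inr y ∨ v ∈ S := by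
    intro v hv
    simpa [hT, spider, or_assoc] using hv
  constructor
  · -- connected
    have reach : ∀ (v) (hv : v ∈ T.verts), T.coe.Reachable ⟨v, hv⟩ ⟨inr y, hyv⟩ := by
      intro v hv
      rcases hvmem v hv with rfl | rfl | h
      · exact (SimpleGraph.Subgraph.Adj.coe hadjxy).reachable
      · exact Reachable.refl _
      · rcases v with a | b
        · have h1 : T.Adj (inl a) (inr y) := Or.inl (Or.inr (Or.inl ⟨a, h, rfl, rfl⟩))
          exact (SimpleGraph.Subgraph.Adj.coe h1).reachable
        · have h1 : T.Adj (inr b) (inl x) := Or.inr (Or.inr (Or.inr ⟨b, h, rfl, rfl⟩))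
          exact ((SimpleGraph.Subgraph.Adj.coe h1).reachable).trans
            (SimpleGraph.Subgraph.Adj.coe hadjxy).reachable
    have : Nonempty ↑T.verts := ⟨⟨inr y, hyv⟩⟩
    exact SimpleGraph.Connected.mk (fun u v => ((reach u.1 u.2).trans (reach v.1 v.2).symm))
  · -- acyclic
    apply isAcyclic_of_leafy (⟨inl x, hxy⟩ : T.verts) ⟨inr y, hyv⟩
    rintro ⟨v, hv⟩ hva hvb ⟨u, hu⟩ ⟨w, hw⟩ h1 h2
    have hv' : v ∈ S := by
      rcases hvmem v hv with h | h | h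
      · exact absurd (Subtype.ext h) hva
      · exact absurd (Subtype.ext h) hvb
      · exact h
    have key : ∀ z : Fin n ⊕ Fin n, T.Adj v z →
        (∃ a, v = inl a ∧ z = inr y) ∨ (∃ b, v = inr b ∧ z = inl x) := by
      rintro z (hz | hz)
      · rcases hz with ⟨h1', h2'⟩ | ⟨s, hs, h1', h2'⟩ | ⟨t, ht, h1', h2'⟩
        · subst h1'; exact absurd hv' hx
        · exact Or.inl ⟨s, h1', h2'⟩
        · subst h1'; exact absurd hv' hx
      · rcases hz with ⟨h1', h2'⟩ | ⟨s, hs, h1', h2'⟩ | ⟨t, ht, h1', h2'⟩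
        · subst h2'; exact absurd hv' hy
        · subst h2'; exact absurd hv' hy
        · exact Or.inr ⟨t, h2', h1'⟩
    have h1' := key u ((SimpleGraph.Subgraph.coe_adj _ _ _).mp h1)
    have h2' := key w ((SimpleGraph.Subgraph.coe_adj _ _ _).mp h2)
    apply Subtype.ext
    rcases h1' with ⟨a, hva2, rfl⟩ | ⟨b, hvb2, rfl⟩ <;>
      rcases h2' with ⟨a', ha', rfl⟩ | ⟨b', hb', rfl⟩ <;> simp_all

lemma spider_injOn {S : Finset (Fin n ⊕ Fin n)} {x y : Fin n} {M : Fin n × Fin n → Fin q}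
    (h : Set.InjOn M (block S x y)) :
    Set.InjOn (colorOf M) (spider S x y).edgeSet := by
  intro e1 he1 e2 he2 hc
  rw [spider_edgeSet] at he1 he2
  simp only [Finset.coe_image, Set.mem_image, Finset.mem_coe] at he1 he2
  obtain ⟨⟨a, b⟩, hp, rfl⟩ := he1
  obtain ⟨⟨a', b'⟩, hp', rfl⟩ := he2
  simp only [colorOf_mk] at hc
  have := h hp hp' hc
  rw [this]

lemma block_disjoint {S : Finset (Fin n ⊕ Fin n)} {x y x' y' : Fin n}
    (hx : inl x ∉ S) (hx' : inl x' ∉ S) (hy : inr y ∉ S) (hy' : inr y' ∉ S)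
    (hxx : x ≠ x') (hyy : y ≠ y') :
    Disjoint (block S x y) (block S x' y') := by
  rw [Finset.disjoint_left]
  rintro ⟨a, b⟩ h1 h2
  rcases mem_block.mp h1 with ⟨h, hS⟩ | ⟨h, hS⟩ | h <;>
    rcases mem_block.mp h2 with ⟨h', hS'⟩ | ⟨h', hS'⟩ | h' <;>
    simp_all <;> first
      | (obtain ⟨rfl, rfl⟩ := h; simp_all)
      | (obtain ⟨rfl, rfl⟩ := h'; simp_all)
      | skip

lemma spider_verts_inter {S : Finset (Fin n ⊕ Fin n)} {x y x' y' : Fin n}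
    (hx : inl x ∉ S) (hx' : inl x' ∉ S) (hy : inr y ∉ S) (hy' : inr y' ∉ S)
    (hxx : x ≠ x') (hyy : y ≠ y') :
    (spider S x y).verts ∩ (spider S x' y').verts = ↑S := by
  rw [spider_verts, spider_verts]
  ext u
  simp only [Set.mem_inter_iff, Set.mem_union, Finset.mem_coe, Set.mem_insert_iff,
    Set.mem_singleton_iff]
  constructor
  · rintro ⟨h | h | h, h' | h' | h'⟩ <;> simp_all
  · intro h; exact ⟨Or.inl h, Or.inl h⟩

lemma spider_edge_disjoint {S : Finset (Fin n ⊕ Fin n)} {x y x' y' : Fin n}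
    (hd : Disjoint (block S x y) (block S x' y')) :
    (spider S x y).edgeSet ∩ (spider S x' y').edgeSet = ∅ := by
  rw [spider_edgeSet, spider_edgeSet]
  rw [Set.eq_empty_iff_forall_notMem]
  intro e ⟨h1, h2⟩
  simp only [Finset.coe_image, Set.mem_image, Finset.mem_coe] at h1 h2
  obtain ⟨⟨a, b⟩, hp, rfl⟩ := h1
  obtain ⟨⟨a', b'⟩, hp', he⟩ := h2
  rw [Sym2.eq_iff] at he
  rcases he with ⟨h1', h2'⟩ | ⟨h1', h2'⟩
  · obtain rfl : a' = a := by injection h1'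
    obtain rfl : b' = b := by injection h2'
    exact Finset.disjoint_left.mp hd hp hp'
  · exact absurd h1' (by simp)

lemma subgraph_tree_card {V : Type*} [Fintype V] [DecidableEq V] {G : SimpleGraph V}
    {T : G.Subgraph} (h : T.coe.IsTree) :
    T.verts.ncard = T.edgeSet.ncard + 1 := by
  classical
  letI : Fintype ↑T.verts := Fintype.ofFinite _
  letI : Fintype ↑T.coe.edgeSet := Fintype.ofFinite _
  have h1 := h.card_edgeFinset
  have h2 : T.coe.edgeFinset.card = T.edgeSet.ncard := by
    have him : Sym2.map (Subtype.val) '' T.coe.edgeSet = T.edgeSet :=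
      SimpleGraph.Subgraph.image_coe_edgeSet_coe T
    rw [← him, Set.ncard_image_of_injective _ (Sym2.map.injective Subtype.val_injective)]
    rw [SimpleGraph.edgeFinset_card, Set.ncard_eq_toFinset_card', Set.toFinset_card]
  have h3 : Fintype.card ↑T.verts = T.verts.ncard := by
    rw [Set.ncard_eq_toFinset_card', Set.toFinset_card]
  omega

section Lower

lemma lower_no {k ℓ n : ℕ} (hk : 4 ≤ k) (hℓ : 1 ≤ ℓ)
    (hn : (k - 2) * k ^ (k + 1) + k + 2 < n)
    (c : Sym2 (Fin n ⊕ Fin n) → Fin k) :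
    ¬ HasRainbowSTrees (completeBipartiteGraph (Fin n) (Fin n)) c k ℓ := by
  classical
  intro hHas
  have hkn : k + 1 ≤ n := by
    have := Nat.zero_le ((k - 2) * k ^ (k + 1)); omega
  -- the pattern map
  set F : Fin n → (Fin (k + 1) → Fin k) :=
    fun i t => c s(inl i, inr (Fin.castLE hkn t)) with hF
  -- pigeonhole: a large fiber
  have hcard : (Finset.univ : Finset (Fin (k + 1) → Fin k)).card * (k - 3) <
      (Finset.univ : Finset (Fin n)).card := by
    have h1 : (Finset.univ : Finset (Fin (k + 1) → Fin k)).card = k ^ (k + 1) := by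
      simp [Fintype.card_fun]
    rw [h1, Finset.card_univ, Fintype.card_fin]
    calc k ^ (k + 1) * (k - 3) ≤ k ^ (k + 1) * (k - 2) := by
          apply Nat.mul_le_mul_left; omega
      _ < n := by rw [mul_comm]; omega
  obtain ⟨P, -, hP⟩ := Finset.exists_lt_card_fiber_of_mul_lt_card_of_maps_to
    (fun a _ => Finset.mem_univ (F a)) hcard
  obtain ⟨C, hCsub, hCcard⟩ := Finset.exists_subset_card_eq (n := k - 2)
    (by omega : k - 2 ≤ (Finset.univ.filter fun x => F x = P).card)
  have hCP : ∀ i ∈ C, F i = P := fun i hi => (Finset.mem_filter.mp (hCsub hi)).2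
  -- two equal pattern values
  obtain ⟨t, t', htt, hPt⟩ := Fintype.exists_ne_map_eq_of_card_lt P (by simp)
  set v : Fin n := Fin.castLE hkn t with hv
  set w : Fin n := Fin.castLE hkn t' with hw
  have hvw : v ≠ w := fun h => htt (Fin.castLE_injective hkn h)
  set α : Fin k := P t with hα
  have hconst : ∀ i ∈ C, c s(inl i, inr v) = α ∧ c s(inl i, inr w) = α := by
    intro i hi
    have h1 : F i t = P t := by rw [hCP i hi]
    have h2 : F i t' = P t' := by rw [hCP i hi]
    exact ⟨h1, h2.trans hPt.symm⟩
  -- the bad set S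
  set S : Finset (Fin n ⊕ Fin n) := C.image inl ∪ {inr v, inr w} with hS
  have hScard : S.card = k := by
    rw [hS, Finset.card_union_of_disjoint, Finset.card_image_of_injective _ Sum.inl_injective,
      hCcard]
    · rw [Finset.card_insert_of_notMem (by simp [hvw]), Finset.card_singleton]; omega
    · simp
  obtain ⟨T, hT, -⟩ := hHas S hScard
  obtain ⟨hSv, htree, hinj⟩ := hT ⟨0, hℓ⟩
  set T0 := T ⟨0, hℓ⟩ with hT0
  -- counting
  set Vt : Finset (Fin n ⊕ Fin n) := T0.verts.toFinset with hVt
  set Ed : Finset (Sym2 (Fin n ⊕ Fin n)) := T0.edgeSet.toFinset with hEd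
  have hVE : Vt.card = Ed.card + 1 := by
    rw [hVt, hEd, ← Set.ncard_eq_toFinset_card', ← Set.ncard_eq_toFinset_card']
    exact subgraph_tree_card htree
  have hEk : Ed.card ≤ k := by
    have := Finset.card_le_card_of_injOn (s := Ed) (t := Finset.univ) c
      (fun e _ => Finset.mem_univ (c e))
      (fun e he e' he' hce => hinj (Set.mem_toFinset.mp he) (Set.mem_toFinset.mp he') hce)
    simpa using this
  have hshape : ∀ e ∈ Ed, ∃ a b, e = s(inl a, inr b) ∧ inl a ∈ Vt ∧ inr b ∈ Vt := by
    intro e he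
    rw [hEd, Set.mem_toFinset] at he
    induction e using Sym2.ind with
    | _ u v' =>
      have hadj : T0.Adj u v' := he
      have hG := T0.adj_sub hadj
      have hu := T0.edge_vert hadj
      have hv2 := T0.edge_vert hadj.symm
      rcases u with a | b <;> rcases v' with a' | b'
      · simp [completeBipartiteGraph] at hG
      · exact ⟨a, b', rfl, by simp [hVt, hu], by simp [hVt, hv2]⟩
      · exact ⟨a', b, Sym2.eq_swap, by simp [hVt, hv2], by simp [hVt, hu]⟩
      · simp [completeBipartiteGraph] at hG
  set L : Finset (Fin n) := Vt.toLeft with hL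
  set R : Finset (Fin n) := Vt.toRight with hR
  have hSVt : S ⊆ Vt := by
    intro u hu
    rw [hVt, Set.mem_toFinset]
    exact hSv (by simpa using hu)
  have hCL : C ⊆ L := by
    intro i hi
    rw [hL, Finset.mem_toLeft]
    exact hSVt (by simp [hS, hi])
  have hvwR : v ∈ R ∧ w ∈ R := by
    constructor <;> (rw [hR, Finset.mem_toRight]; apply hSVt; simp [hS])
  have hLR : L.card + R.card = Vt.card := Finset.card_toLeft_add_card_toRight
  have hVk : k ≤ Vt.card := hScard ▸ Finset.card_le_card hSVt
  have hVk1 : Vt.card ≤ k + 1 := by omega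
  -- edge classes
  set E1 := Ed.filter (fun e => ∃ a b, e = s(inl a, inr b) ∧ a ∈ C ∧ (b = v ∨ b = w)) with hE1
  set E2 := Ed.filter (fun e => ∃ a b, e = s(inl a, inr b) ∧ a ∉ C ∧ (b = v ∨ b = w)) with hE2
  set E3 := Ed.filter (fun e => ∃ a b, e = s(inl a, inr b) ∧ ¬(b = v ∨ b = w)) with hE3
  have hcover : Ed ⊆ E1 ∪ E2 ∪ E3 := by
    intro e he
    obtain ⟨a, b, rfl, ha, hb⟩ := hshape e he
    simp only [Finset.mem_union, hE1, hE2, hE3, Finset.mem_filter]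
    by_cases hbv : b = v ∨ b = w
    · by_cases haC : a ∈ C
      · exact Or.inl (Or.inl ⟨he, a, b, rfl, haC, hbv⟩)
      · exact Or.inl (Or.inr ⟨he, a, b, rfl, haC, hbv⟩)
    · exact Or.inr ⟨he, a, b, rfl, hbv⟩
  have hsym2inj : ∀ (a a' b b' : Fin n),
      s(inl a, inr b) = (s(inl a', inr b') : Sym2 (Fin n ⊕ Fin n)) → a = a' ∧ b = b' := by
    intro a a' b b' h
    rw [Sym2.eq_iff] at h
    rcases h with ⟨h1, h2⟩ | ⟨h1, h2⟩
    · exact ⟨by injection h1, by injection h2⟩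
    · exact absurd h1 (by simp)
  have hE1card : E1.card ≤ 1 := by
    rw [Finset.card_le_one]
    intro e he e' he'
    rw [hE1, Finset.mem_filter] at he he'
    obtain ⟨hemem, a, b, rfl, haC, hbv⟩ := he
    obtain ⟨hemem', a', b', rfl, haC', hbv'⟩ := he'
    have hce : c s(inl a, inr b) = α := by
      rcases hbv with rfl | rfl
      · exact (hconst a haC).1
      · exact (hconst a haC).2
    have hce' : c s(inl a', inr b') = α := by
      rcases hbv' with rfl | rfl
      · exact (hconst a' haC').1
      · exact (hconst a' haC').2
    exact hinj (Set.mem_toFinset.mp hemem) (Set.mem_toFinset.mp hemem') (hce.trans hce'.symm)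
  have hE2card : E2.card ≤ (L \ C).card * 2 := by
    have hsub : E2 ⊆ ((L \ C) ×ˢ ({v, w} : Finset (Fin n))).image
        (fun p => s(inl p.1, inr p.2)) := by
      intro e he
      rw [hE2, Finset.mem_filter] at he
      obtain ⟨hemem, a, b, rfl, haC, hbv⟩ := he
      obtain ⟨a', b', heq, ha', hb'⟩ := hshape _ hemem
      obtain ⟨rfl, rfl⟩ := hsym2inj _ _ _ _ heq
      refine Finset.mem_image.mpr ⟨(a, b), ?_, rfl⟩
      rw [Finset.mem_product]
      refine ⟨Finset.mem_sdiff.mpr ⟨by rwa [hL, Finset.mem_toLeft], haC⟩, by simpa using hbv⟩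
    calc E2.card ≤ _ := Finset.card_le_card hsub
      _ ≤ ((L \ C) ×ˢ ({v, w} : Finset (Fin n))).card := Finset.card_image_le
      _ ≤ (L \ C).card * 2 := by
        rw [Finset.card_product]
        exact Nat.mul_le_mul_left _ (by
          calc ({v, w} : Finset (Fin n)).card ≤ _ := Finset.card_insert_le _ _
            _ ≤ 2 := by simp)
  have hE3card : E3.card ≤ L.card * (R \ {v, w}).card := by
    have hsub : E3 ⊆ (L ×ˢ (R \ ({v, w} : Finset (Fin n)))).image
        (fun p => s(inl p.1, inr p.2)) := by
      intro e he
      rw [hE3, Finset.mem_filter] at he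
      obtain ⟨hemem, a, b, rfl, hbv⟩ := he
      obtain ⟨a', b', heq, ha', hb'⟩ := hshape _ hemem
      obtain ⟨rfl, rfl⟩ := hsym2inj _ _ _ _ heq
      refine Finset.mem_image.mpr ⟨(a, b), ?_, rfl⟩
      rw [Finset.mem_product]
      exact ⟨by rwa [hL, Finset.mem_toLeft], Finset.mem_sdiff.mpr
        ⟨by rwa [hR, Finset.mem_toRight], by simpa using hbv⟩⟩
    calc E3.card ≤ _ := Finset.card_le_card hsub
      _ ≤ _ := Finset.card_image_le
      _ = L.card * (R \ {v, w}).card := Finset.card_product _ _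
  have hRvw : (R \ ({v, w} : Finset (Fin n))).card = R.card - 2 := by
    rw [Finset.card_sdiff_of_subset (by
      intro u hu
      simp only [Finset.mem_insert, Finset.mem_singleton] at hu
      rcases hu with rfl | rfl
      exacts [hvwR.1, hvwR.2])]
    congr 1
    rw [Finset.card_insert_of_notMem (by simp [hvw]), Finset.card_singleton]
  have hLC : (L \ C).card = L.card - (k - 2) := by
    rw [Finset.card_sdiff_of_subset hCL, hCcard]
  have hEdle : Ed.card ≤ 1 + (L.card - (k - 2)) * 2 + L.card * (R.card - 2) := by
    calc Ed.card ≤ (E1 ∪ E2 ∪ E3).card := Finset.card_le_card hcover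
      _ ≤ E1.card + E2.card + E3.card := by
        calc (E1 ∪ E2 ∪ E3).card ≤ (E1 ∪ E2).card + E3.card := Finset.card_union_le _ _
          _ ≤ E1.card + E2.card + E3.card := by
            exact Nat.add_le_add_right (Finset.card_union_le _ _) _
      _ ≤ 1 + (L.card - (k - 2)) * 2 + L.card * (R.card - 2) := by
        rw [← hLC]
        refine Nat.add_le_add (Nat.add_le_add hE1card hE2card) ?_
        rw [← hRvw]; exact hE3card
  -- final arithmetic
  have hCleL : k - 2 ≤ L.card := hCcard ▸ Finset.card_le_card hCL
  have hRge : 2 ≤ R.card := by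
    have : ({v, w} : Finset (Fin n)) ⊆ R := by
      intro u hu
      simp only [Finset.mem_insert, Finset.mem_singleton] at hu
      rcases hu with rfl | rfl
      exacts [hvwR.1, hvwR.2]
    have := Finset.card_le_card this
    rwa [Finset.card_insert_of_notMem (by simp [hvw]), Finset.card_singleton] at this
  have hRle : R.card ≤ 3 := by omega
  interval_cases h : R.card <;> omega
end Lower

section Counting

open Finset

lemma count_bad {E : Type*} [Fintype E] [DecidableEq E] {Q m : ℕ} (hQ : 0 < Q)
    (blk : Fin m → Finset E) (Fs : Finset (Fin m))
    (hdisj : ∀ t ∈ Fs, ∀ t' ∈ Fs, t ≠ t' → Disjoint (blk t) (blk t'))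
    (hband : ∀ t ∈ Fs, (blk t).card = Q)
    (Src : Finset (E → Fin Q))
    (hSrc : ∀ M ∈ Src, ∀ t ∈ Fs, ¬ Set.InjOn M ↑(blk t)) :
    Src.card ≤ (Q ^ Q - Q.factorial) ^ Fs.card * Q ^ (Fintype.card E - Q * Fs.card) := by
  classical
  set z : Fin Q := ⟨0, hQ⟩ with hz
  set U : Finset E := Fs.biUnion blk with hUdef
  have hU : U.card = Q * Fs.card := by
    rw [hUdef, Finset.card_biUnion hdisj]
    rw [Finset.sum_congr rfl hband, Finset.sum_const, smul_eq_mul, mul_comm]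
  have hbadTrcard : ∀ t ∈ Fs,
      (Finset.univ.filter (fun g : E → Fin Q =>
        (∀ e, e ∉ blk t → g e = z) ∧ ¬ Set.InjOn g ↑(blk t))).card ≤ Q ^ Q - Q.factorial := by
    intro t ht
    set padded : Finset (E → Fin Q) :=
      Fintype.piFinset (fun e => if e ∈ blk t then (Finset.univ : Finset (Fin Q)) else {z})
      with hpadded
    have hmempadded : ∀ g : E → Fin Q, g ∈ padded ↔ ∀ e, e ∉ blk t → g e = z := by
      intro g
      rw [hpadded, Fintype.mem_piFinset]
      constructor
      · intro h e he
        have := h e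
        rwa [if_neg he, Finset.mem_singleton] at this
      · intro h e
        by_cases he : e ∈ blk t
        · rw [if_pos he]; exact Finset.mem_univ _
        · rw [if_neg he, Finset.mem_singleton]; exact h e he
    have hpaddedcard : padded.card = Q ^ Q := by
      rw [hpadded, Fintype.card_piFinset]
      have heq : ∀ e : E, (if e ∈ blk t then (Finset.univ : Finset (Fin Q)) else {z}).card
          = if e ∈ blk t then Q else 1 := by
        intro e; split <;> simp
      rw [Finset.prod_congr rfl (fun e _ => heq e), Finset.prod_ite_mem,
        Finset.univ_inter, Finset.prod_const, hband t ht]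
    have hsplit := Finset.card_filter_add_card_filter_not
      (s := padded) (p := fun g : E → Fin Q => Set.InjOn g ↑(blk t))
    have hbadeq : (Finset.univ.filter (fun g : E → Fin Q =>
        (∀ e, e ∉ blk t → g e = z) ∧ ¬ Set.InjOn g ↑(blk t)))
        = padded.filter (fun g => ¬ Set.InjOn g ↑(blk t)) := by
      ext g
      rw [Finset.mem_filter, Finset.mem_filter, hmempadded]
      simp only [Finset.mem_univ, true_and]
    have hinjcount : Q.factorial ≤ (padded.filter (fun g => Set.InjOn g ↑(blk t))).card := by
      have hblkQ : Fintype.card ↥(blk t) = Q := by rw [Fintype.card_coe, hband t ht]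
      have hcard := Finset.card_le_card_of_injOn (s := Finset.univ)
        (t := padded.filter (fun g => Set.InjOn g ↑(blk t)))
        (fun (f : ↥(blk t) ↪ Fin Q) (e : E) => if h : e ∈ blk t then f ⟨e, h⟩ else z)
        (fun f _ => by
          rw [Finset.mem_coe, Finset.mem_filter]
          refine ⟨(hmempadded _).mpr (fun e he => dif_neg he), ?_⟩
          intro e1 he1 e2 he2 hee
          simp only at hee
          rw [dif_pos (Finset.mem_coe.mp he1), dif_pos (Finset.mem_coe.mp he2)] at hee
          have := f.injective hee
          exact congrArg Subtype.val this)
        (fun f _ g _ hfg => by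
          ext ⟨e, he⟩
          have h5 := congrFun hfg e
          simp only [dif_pos he] at h5
          exact congrArg Fin.val h5)
      rw [Finset.card_univ, Fintype.card_embedding_eq, hblkQ, Fintype.card_fin,
        Nat.descFactorial_self] at hcard
      exact hcard
    rw [hbadeq]
    omega
  -- the injection
  have hmaps : ∀ M ∈ Src,
      ((fun t => if t ∈ Fs then (fun e => if e ∈ blk t then M e else z) else (fun _ => z),
        fun e => if e ∈ U then z else M e) : (Fin m → (E → Fin Q)) × (E → Fin Q)) ∈
      ((Fintype.piFinset fun t : Fin m => if t ∈ Fs then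
          (Finset.univ.filter (fun g : E → Fin Q =>
            (∀ e, e ∉ blk t → g e = z) ∧ ¬ Set.InjOn g ↑(blk t)))
          else ({fun _ => z} : Finset (E → Fin Q))) ×ˢ
        (Fintype.piFinset fun e : E => if e ∈ U then ({z} : Finset (Fin Q)) else Finset.univ)) := by
    intro M hM
    rw [Finset.mem_product]
    constructor
    · rw [Fintype.mem_piFinset]
      intro t
      by_cases ht : t ∈ Fs
      · rw [if_pos ht]
        simp only [if_pos ht]
        rw [Finset.mem_filter]
        refine ⟨Finset.mem_univ _, fun e he => if_neg he, ?_⟩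
        have hnot := hSrc M hM t ht
        intro hcon
        apply hnot
        intro e1 he1 e2 he2 hee
        have h12 := hcon he1 he2
        simp only [if_pos (Finset.mem_coe.mp he1), if_pos (Finset.mem_coe.mp he2)] at h12
        exact h12 hee
      · rw [if_neg ht]
        simp only [if_neg ht]
        exact Finset.mem_singleton_self _
    · rw [Fintype.mem_piFinset]
      intro e
      by_cases he : e ∈ U
      · rw [if_pos he]; simp only [if_pos he]; exact Finset.mem_singleton_self _
      · rw [if_neg he]; exact Finset.mem_univ _
  have hinjA : Set.InjOn (fun M : E → Fin Q =>
      ((fun t => if t ∈ Fs then (fun e => if e ∈ blk t then M e else z) else (fun _ => z),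
        fun e => if e ∈ U then z else M e) : (Fin m → (E → Fin Q)) × (E → Fin Q))) ↑Src := by
    intro M hM M' hM' heq
    have h1 := congrArg Prod.fst heq
    have h2 := congrArg Prod.snd heq
    simp only at h1 h2
    funext e
    by_cases he : e ∈ U
    · obtain ⟨t, ht, hbt⟩ := Finset.mem_biUnion.mp (hUdef ▸ he)
      have h3 := congrFun (congrFun h1 t) e
      simp only [if_pos ht, if_pos hbt] at h3
      exact h3
    · have h3 := congrFun h2 e
      simp only [if_neg he] at h3
      exact h3
  have hcardle := Finset.card_le_card_of_injOn _ hmaps hinjA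
  refine hcardle.trans ?_
  rw [Finset.card_product]
  have hc1 : (Fintype.piFinset fun t : Fin m => if t ∈ Fs then
      (Finset.univ.filter (fun g : E → Fin Q =>
        (∀ e, e ∉ blk t → g e = z) ∧ ¬ Set.InjOn g ↑(blk t)))
      else ({fun _ => z} : Finset (E → Fin Q))).card
      ≤ (Q ^ Q - Q.factorial) ^ Fs.card := by
    rw [Fintype.card_piFinset]
    have heq : ∀ t : Fin m, (if t ∈ Fs then
        (Finset.univ.filter (fun g : E → Fin Q =>
          (∀ e, e ∉ blk t → g e = z) ∧ ¬ Set.InjOn g ↑(blk t)))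
        else ({fun _ => z} : Finset (E → Fin Q))).card
        = if t ∈ Fs then (Finset.univ.filter (fun g : E → Fin Q =>
          (∀ e, e ∉ blk t → g e = z) ∧ ¬ Set.InjOn g ↑(blk t))).card else 1 := by
      intro t; split <;> simp
    rw [Finset.prod_congr rfl (fun t _ => heq t), Finset.prod_ite_mem, Finset.univ_inter]
    calc ∏ t ∈ Fs, (Finset.univ.filter (fun g : E → Fin Q =>
          (∀ e, e ∉ blk t → g e = z) ∧ ¬ Set.InjOn g ↑(blk t))).card
        ≤ ∏ _t ∈ Fs, (Q ^ Q - Q.factorial) := Finset.prod_le_prod' hbadTrcard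
      _ = (Q ^ Q - Q.factorial) ^ Fs.card := Finset.prod_const _
  have hc2 : (Fintype.piFinset fun e : E =>
      if e ∈ U then ({z} : Finset (Fin Q)) else (Finset.univ : Finset (Fin Q))).card
      = Q ^ (Fintype.card E - Q * Fs.card) := by
    rw [Fintype.card_piFinset]
    have heq : ∀ e : E, (if e ∈ U then ({z} : Finset (Fin Q)) else Finset.univ).card
        = if e ∈ U then 1 else Q := by intro e; split <;> simp
    rw [Finset.prod_congr rfl (fun e _ => heq e), Finset.prod_ite, Finset.prod_const,
      Finset.prod_const, one_pow, one_mul]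
    congr 1
    · rw [← hU]
      have huf : Finset.univ.filter (fun e => ¬ e ∈ U) = Uᶜ := by
        ext e; simp [Finset.mem_compl]
      rw [huf, Finset.card_compl]
  exact Nat.mul_le_mul hc1 (le_of_eq hc2)

end Counting

section Hubs

variable {n k : ℕ}

noncomputable def hubX (k : ℕ) (S : Finset (Fin n ⊕ Fin n)) (t : Fin (n - k)) : Fin n :=
  if h : n - k ≤ S.toLeftᶜ.card then S.toLeftᶜ.orderEmbOfCardLe h t
  else Fin.castLE (Nat.sub_le n k) t

noncomputable def hubY (k : ℕ) (S : Finset (Fin n ⊕ Fin n)) (t : Fin (n - k)) : Fin n :=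
  if h : n - k ≤ S.toRightᶜ.card then S.toRightᶜ.orderEmbOfCardLe h t
  else Fin.castLE (Nat.sub_le n k) t

lemma hubX_cond {S : Finset (Fin n ⊕ Fin n)} (hS : S.card = k) :
    n - k ≤ S.toLeftᶜ.card := by
  rw [Finset.card_compl, Fintype.card_fin]
  have := Finset.card_toLeft_le (u := S)
  omega

lemma hubY_cond {S : Finset (Fin n ⊕ Fin n)} (hS : S.card = k) :
    n - k ≤ S.toRightᶜ.card := by
  rw [Finset.card_compl, Fintype.card_fin]
  have := Finset.card_toRight_le (u := S)
  omega

lemma hubX_not_mem {S : Finset (Fin n ⊕ Fin n)} (hS : S.card = k) (t : Fin (n - k)) :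
    inl (hubX k S t) ∉ S := by
  rw [hubX, dif_pos (hubX_cond hS)]
  have := Finset.orderEmbOfCardLe_mem _ (hubX_cond hS) t
  rw [Finset.mem_compl, Finset.mem_toLeft] at this
  exact this

lemma hubY_not_mem {S : Finset (Fin n ⊕ Fin n)} (hS : S.card = k) (t : Fin (n - k)) :
    inr (hubY k S t) ∉ S := by
  rw [hubY, dif_pos (hubY_cond hS)]
  have := Finset.orderEmbOfCardLe_mem _ (hubY_cond hS) t
  rw [Finset.mem_compl, Finset.mem_toRight] at this
  exact this

lemma hubX_inj {S : Finset (Fin n ⊕ Fin n)} (hS : S.card = k) {t t' : Fin (n - k)}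
    (h : t ≠ t') : hubX k S t ≠ hubX k S t' := by
  simp only [hubX, dif_pos (hubX_cond hS)]
  exact fun hc => h ((S.toLeftᶜ.orderEmbOfCardLe (hubX_cond hS)).injective hc)

lemma hubY_inj {S : Finset (Fin n ⊕ Fin n)} (hS : S.card = k) {t t' : Fin (n - k)}
    (h : t ≠ t') : hubY k S t ≠ hubY k S t' := by
  simp only [hubY, dif_pos (hubY_cond hS)]
  exact fun hc => h ((S.toRightᶜ.orderEmbOfCardLe (hubY_cond hS)).injective hc)

noncomputable def blkS (k : ℕ) (S : Finset (Fin n ⊕ Fin n)) (t : Fin (n - k)) :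
    Finset (Fin n × Fin n) :=
  block S (hubX k S t) (hubY k S t)

lemma blkS_card {S : Finset (Fin n ⊕ Fin n)} (hS : S.card = k) (t : Fin (n - k)) :
    (blkS k S t).card = k + 1 := by
  rw [blkS, block_card (hubX_not_mem hS t) (hubY_not_mem hS t), hS]

lemma blkS_disj {S : Finset (Fin n ⊕ Fin n)} (hS : S.card = k) {t t' : Fin (n - k)}
    (h : t ≠ t') : Disjoint (blkS k S t) (blkS k S t') :=
  block_disjoint (hubX_not_mem hS t) (hubX_not_mem hS t') (hubY_not_mem hS t)
    (hubY_not_mem hS t') (hubX_inj hS h) (hubY_inj hS h)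

end Hubs

section Global

lemma exists_good_matrix {k ℓ n : ℕ} (hℓ : 1 ≤ ℓ) (hn1 : k + ℓ + 1 ≤ n)
    (hcount : ((n + n).choose k) * ((n - k).choose (n - k - ℓ + 1) *
      (((k+1)^(k+1) - Nat.factorial (k+1))^(n - k - ℓ + 1) *
        (k+1)^(n*n - (k+1)*(n - k - ℓ + 1)))) < (k+1)^(n*n)) :
    ∃ M : Fin n × Fin n → Fin (k+1), ∀ S : Finset (Fin n ⊕ Fin n), S.card = k →
      ℓ ≤ ((Finset.univ : Finset (Fin (n - k))).filter
        (fun t => Set.InjOn M ↑(blkS k S t))).card := by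
  classical
  by_contra hcon
  push_neg at hcon
  set Q := k + 1 with hQ
  set m := n - k with hm
  set M₀ := n - k - ℓ + 1 with hM₀
  -- global cover
  set badS : Finset (Fin n ⊕ Fin n) → Finset (Fin n × Fin n → Fin Q) := fun S =>
    Finset.univ.filter (fun M =>
      ((Finset.univ : Finset (Fin (n - k))).filter
        (fun t => Set.InjOn M ↑(blkS k S t))).card < ℓ) with hbadS
  have hcover : (Finset.univ : Finset (Fin n × Fin n → Fin Q)) ⊆
      ((Finset.univ : Finset (Fin n ⊕ Fin n)).powersetCard k).biUnion badS := by
    intro M _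
    obtain ⟨S, hS, hbad⟩ := hcon M
    refine Finset.mem_biUnion.mpr ⟨S, Finset.mem_powersetCard_univ.mpr hS, ?_⟩
    rw [hbadS, Finset.mem_filter]
    exact ⟨Finset.mem_univ _, hbad⟩
  -- per-S bound
  have hperS : ∀ S ∈ (Finset.univ : Finset (Fin n ⊕ Fin n)).powersetCard k,
      (badS S).card ≤ m.choose M₀ * ((Q^Q - Nat.factorial Q)^M₀ * Q^(n*n - Q*M₀)) := by
    intro S hSmem
    have hS : S.card = k := Finset.mem_powersetCard_univ.mp hSmem
    set allBad : Finset (Fin (n - k)) → Finset (Fin n × Fin n → Fin Q) := fun Fs =>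
      Finset.univ.filter (fun M => ∀ t ∈ Fs, ¬ Set.InjOn M ↑(blkS k S t)) with hallBad
    have hsub : badS S ⊆
        ((Finset.univ : Finset (Fin (n - k))).powersetCard M₀).biUnion allBad := by
      intro M hM
      rw [hbadS, Finset.mem_filter] at hM
      set Gd := (Finset.univ : Finset (Fin (n - k))).filter
        (fun t => Set.InjOn M ↑(blkS k S t)) with hGd
      have hGdc : M₀ ≤ Gdᶜ.card := by
        rw [Finset.card_compl, Fintype.card_fin]
        have h1 : Gd.card < ℓ := hM.2
        omega
      obtain ⟨Fs, hFssub, hFscard⟩ := Finset.exists_subset_card_eq hGdc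
      refine Finset.mem_biUnion.mpr ⟨Fs, Finset.mem_powersetCard_univ.mpr hFscard, ?_⟩
      rw [hallBad, Finset.mem_filter]
      refine ⟨Finset.mem_univ _, fun t ht => ?_⟩
      have := hFssub ht
      rw [Finset.mem_compl, hGd, Finset.mem_filter] at this
      exact fun hc => this ⟨Finset.mem_univ _, hc⟩
    have hallBadcard : ∀ Fs ∈ (Finset.univ : Finset (Fin (n - k))).powersetCard M₀,
        (allBad Fs).card ≤ (Q^Q - Nat.factorial Q)^M₀ * Q^(n*n - Q*M₀) := by
      intro Fs hFs
      have hFscard : Fs.card = M₀ := Finset.mem_powersetCard_univ.mp hFs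
      have hcb := count_bad (E := Fin n × Fin n) (Q := Q) (m := n - k)
        (by omega : 0 < Q) (blkS k S) Fs
        (fun t _ t' _ htt => blkS_disj hS htt)
        (fun t _ => blkS_card hS t)
        (allBad Fs)
        (fun M hM => by
          rw [hallBad, Finset.mem_filter] at hM
          exact hM.2)
      rwa [hFscard, Fintype.card_prod, Fintype.card_fin] at hcb
    calc (badS S).card ≤ _ := Finset.card_le_card hsub
      _ ≤ _ := Finset.card_biUnion_le
      _ ≤ _ := Finset.sum_le_card_nsmul _ _ _ hallBadcard
      _ = m.choose M₀ * ((Q^Q - Nat.factorial Q)^M₀ * Q^(n*n - Q*M₀)) := by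
        rw [smul_eq_mul, Finset.card_powersetCard, Finset.card_univ, Fintype.card_fin]
  -- combine
  have htotal : (Q:ℕ)^(n*n) ≤
      ((n + n).choose k) * (m.choose M₀ * ((Q^Q - Nat.factorial Q)^M₀ * Q^(n*n - Q*M₀))) := by
    have h1 : (Finset.univ : Finset (Fin n × Fin n → Fin Q)).card = Q^(n*n) := by
      rw [Finset.card_univ, Fintype.card_fun, Fintype.card_prod, Fintype.card_fin,
        Fintype.card_fin]
    calc (Q:ℕ)^(n*n) = _ := h1.symm
      _ ≤ _ := Finset.card_le_card hcover
      _ ≤ _ := Finset.card_biUnion_le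
      _ ≤ _ := Finset.sum_le_card_nsmul _ _ _ hperS
      _ = _ := by
        rw [smul_eq_mul, Finset.card_powersetCard, Finset.card_univ, Fintype.card_sum,
          Fintype.card_fin]
  exact absurd htotal (by exact Nat.not_le.mpr hcount)

end Global

section UpperHas

lemma upper_has {k ℓ n : ℕ} (hℓ : 1 ≤ ℓ)
    (M : Fin n × Fin n → Fin (k+1))
    (hM : ∀ S : Finset (Fin n ⊕ Fin n), S.card = k →
      ℓ ≤ ((Finset.univ : Finset (Fin (n - k))).filter
        (fun t => Set.InjOn M ↑(blkS k S t))).card) :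
    HasRainbowSTrees (completeBipartiteGraph (Fin n) (Fin n)) (colorOf M) k ℓ := by
  classical
  intro S hS
  set Gd := ((Finset.univ : Finset (Fin (n - k))).filter
    (fun t => Set.InjOn M ↑(blkS k S t))) with hGd
  have hGdl : ℓ ≤ Gd.card := hM S hS
  set e := Gd.orderEmbOfCardLe hGdl with he
  have hegood : ∀ j : Fin ℓ, Set.InjOn M ↑(blkS k S (e j)) := by
    intro j
    have hmemf := Finset.orderEmbOfCardLe_mem _ hGdl j
    exact (Finset.mem_filter.mp hmemf).2
  refine ⟨fun j => spider S (hubX k S (e j)) (hubY k S (e j)), fun j => ?_, ?_⟩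
  · refine ⟨?_, spider_isTree (hubX_not_mem hS _) (hubY_not_mem hS _), ?_⟩
    · rw [spider_verts]
      exact Set.subset_union_left
    · exact spider_injOn (hegood j)
  · intro i j hij
    have heij : e i ≠ e j := fun hc => hij (e.injective hc)
    constructor
    · exact spider_edge_disjoint (blkS_disj hS heij)
    · exact spider_verts_inter (hubX_not_mem hS _) (hubX_not_mem hS _)
        (hubY_not_mem hS _) (hubY_not_mem hS _) (hubX_inj hS heij) (hubY_inj hS heij)

end UpperHas

section Asymptotic

lemma factorial_lt_pow {Q : ℕ} (hQ : 2 ≤ Q) : Nat.factorial Q < Q ^ Q := by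
  obtain ⟨P, rfl⟩ : ∃ P, Q = P + 1 := ⟨Q - 1, by omega⟩
  calc Nat.factorial (P + 1) = (P + 1) * Nat.factorial P := rfl
    _ ≤ (P + 1) * P ^ P := Nat.mul_le_mul_left _ (Nat.factorial_le_pow P)
    _ < (P + 1) * (P + 1) ^ P :=
      mul_lt_mul_of_pos_left (Nat.pow_lt_pow_left (by omega) (by omega)) (by omega)
    _ = (P + 1) ^ (P + 1) := by rw [← pow_succ']

lemma eventually_count (k ℓ : ℕ) (hk : 4 ≤ k) (hℓ : 1 ≤ ℓ) :
    ∃ N : ℕ, 0 < N ∧ ∀ n, N ≤ n → (k + ℓ + 2 ≤ n ∧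
      ((n + n).choose k) * ((n - k).choose (n - k - ℓ + 1) *
        (((k+1)^(k+1) - Nat.factorial (k+1))^(n - k - ℓ + 1) *
          (k+1)^(n*n - (k+1)*(n - k - ℓ + 1)))) < (k+1)^(n*n)) := by
  classical
  set Q := k + 1 with hQdef
  set A : ℕ := Q ^ Q with hAdef
  set B : ℕ := Q ^ Q - Nat.factorial Q with hBdef
  have hQ2 : 2 ≤ Q := by omega
  have hBA : B < A := by
    have := Nat.factorial_pos Q
    have hfl : Nat.factorial Q < Q ^ Q := factorial_lt_pow hQ2
    have hA1 : 1 ≤ A := Nat.one_le_pow _ _ (by omega)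
    omega
  have hB1 : 1 ≤ B := by
    have hfl : Nat.factorial Q < Q ^ Q := factorial_lt_pow hQ2
    omega
  have hA0 : 0 < A := by omega
  set r : ℝ := (B : ℝ) / (A : ℝ) with hrdef
  have hr0 : 0 < r := by
    apply div_pos <;> [exact_mod_cast hB1; exact_mod_cast hA0]
  have hr1 : r < 1 := by
    rw [hrdef, div_lt_one (by exact_mod_cast hA0)]
    exact_mod_cast hBA
  set d := k + ℓ with hddef
  set c : ℝ := r ^ d / 2 ^ d with hcdef
  have hc0 : 0 < c := by positivity
  have hsum : Summable (fun n : ℕ => (n : ℝ) ^ d * r ^ n) :=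
    summable_pow_mul_geometric_of_norm_lt_one d
      (by rw [Real.norm_eq_abs, abs_of_pos hr0]; exact hr1)
  have hev : ∀ᶠ n : ℕ in Filter.atTop, (n : ℝ) ^ d * r ^ n < c :=
    (hsum.tendsto_atTop_zero).eventually_lt_const hc0
  obtain ⟨N0, hN0⟩ := Filter.eventually_atTop.mp hev
  refine ⟨max N0 (k + ℓ + 2), by positivity, fun n hn => ?_⟩
  have hn2 : k + ℓ + 2 ≤ n := le_trans (le_max_right _ _) hn
  have hnN0 : N0 ≤ n := le_trans (le_max_left _ _) hn
  refine ⟨hn2, ?_⟩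
  set M₀ := n - k - ℓ + 1 with hM₀def
  have hdn : d ≤ n := by omega
  have hM₀n : n - d ≤ M₀ := by omega
  have hQM : Q * M₀ ≤ n * n := by
    have h1 : Q ≤ n := by omega
    have h2 : M₀ ≤ n := by omega
    exact Nat.mul_le_mul h1 h2
  -- main real inequality
  have hmainR : ((n + n : ℕ) ^ k * (n : ℝ) ^ ℓ) * r ^ M₀ < 1 := by
    have h2n : ((n + n : ℕ) : ℝ) = 2 * (n : ℝ) := by push_cast; ring
    have hb1 : ((n + n : ℕ) : ℝ) ^ k * (n : ℝ) ^ ℓ ≤ 2 ^ d * (n : ℝ) ^ d := by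
      rw [h2n, mul_pow, hddef, pow_add, pow_add]
      have hn1 : (1 : ℝ) ≤ (n : ℝ) := by exact_mod_cast (by omega : 1 ≤ n)
      have h2l : (1:ℝ) ≤ 2 ^ ℓ := one_le_pow₀ (by norm_num)
      calc (2:ℝ) ^ k * (n:ℝ) ^ k * (n:ℝ) ^ ℓ
          = (2:ℝ) ^ k * ((n:ℝ) ^ k * (n:ℝ) ^ ℓ) := by ring
        _ ≤ ((2:ℝ) ^ k * 2 ^ ℓ) * ((n:ℝ) ^ k * (n:ℝ) ^ ℓ) := by
            apply mul_le_mul_of_nonneg_right _ (by positivity)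
            exact le_mul_of_one_le_right (by positivity) h2l
        _ = 2 ^ k * 2 ^ ℓ * ((n:ℝ) ^ k * (n:ℝ) ^ ℓ) := rfl
    have hb2 : r ^ M₀ ≤ r ^ (n - d) := pow_le_pow_of_le_one hr0.le hr1.le hM₀n
    have hb3 : r ^ (n - d) = r ^ n * (r ^ d)⁻¹ := pow_sub₀ r hr0.ne' hdn
    have hkey := hN0 n hnN0
    have hrd0 : (0:ℝ) < r ^ d := pow_pos hr0 d
    have h2d0 : (0:ℝ) < 2 ^ d := by positivity
    calc ((n + n : ℕ) ^ k * (n : ℝ) ^ ℓ) * r ^ M₀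
        ≤ (2 ^ d * (n : ℝ) ^ d) * r ^ (n - d) := by
          apply mul_le_mul hb1 hb2 (by positivity) (by positivity)
      _ = 2 ^ d * ((n : ℝ) ^ d * r ^ n) * (r ^ d)⁻¹ := by rw [hb3]; ring
      _ < 2 ^ d * c * (r ^ d)⁻¹ := by
          apply mul_lt_mul_of_pos_right _ (by positivity)
          exact mul_lt_mul_of_pos_left hkey h2d0
      _ = 1 := by
          rw [hcdef]
          field_simp
  -- to the natural inequality
  have hmainN : (n + n) ^ k * (n ^ ℓ * B ^ M₀) < A ^ M₀ := by
    have hcast : (((n + n) ^ k * (n ^ ℓ * B ^ M₀) : ℕ) : ℝ) < ((A ^ M₀ : ℕ) : ℝ) := by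
      push_cast
      have hBr : (B : ℝ) ^ M₀ = r ^ M₀ * (A : ℝ) ^ M₀ := by
        rw [hrdef, div_pow]
        field_simp
      rw [hBr]
      have hA0R : (0:ℝ) < (A:ℝ) ^ M₀ := by positivity
      calc ((n:ℝ) + n) ^ k * ((n:ℝ) ^ ℓ * (r ^ M₀ * (A:ℝ) ^ M₀))
          = (((n + n : ℕ) : ℝ) ^ k * (n : ℝ) ^ ℓ * r ^ M₀) * (A:ℝ) ^ M₀ := by
            push_cast; ring
        _ < 1 * (A:ℝ) ^ M₀ := by
            apply mul_lt_mul_of_pos_right _ hA0R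
            calc ((n + n : ℕ) : ℝ) ^ k * (n : ℝ) ^ ℓ * r ^ M₀
                = ((n + n : ℕ) ^ k * (n : ℝ) ^ ℓ) * r ^ M₀ := by push_cast; ring
              _ < 1 := hmainR
        _ = (A:ℝ) ^ M₀ := one_mul _
    exact_mod_cast hcast
  -- assemble
  have hchoose1 : (n + n).choose k ≤ (n + n) ^ k := Nat.choose_le_pow _ _
  have hchoose2 : (n - k).choose M₀ ≤ n ^ ℓ := by
    have hsymm : (n - k).choose M₀ = (n - k).choose (ℓ - 1) := by
      have h1 : (n - k) - (ℓ - 1) = M₀ := by omega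
      rw [← h1, Nat.choose_symm (by omega)]
    rw [hsymm]
    calc (n - k).choose (ℓ - 1) ≤ (n - k) ^ (ℓ - 1) := Nat.choose_le_pow _ _
      _ ≤ n ^ (ℓ - 1) := Nat.pow_le_pow_left (by omega) _
      _ ≤ n ^ ℓ := Nat.pow_le_pow_right (by omega) (by omega)
  have hfinal : (n + n).choose k * ((n - k).choose M₀ * (B ^ M₀ * Q ^ (n*n - Q*M₀)))
      < Q ^ (n*n) := by
    have hsplit : Q ^ (n*n) = A ^ M₀ * Q ^ (n*n - Q*M₀) := by
      rw [hAdef, ← pow_mul, ← pow_add]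
      congr 1
      omega
    rw [hsplit]
    have hstep : (n + n).choose k * ((n - k).choose M₀ * B ^ M₀) < A ^ M₀ := by
      calc (n + n).choose k * ((n - k).choose M₀ * B ^ M₀)
          ≤ (n + n) ^ k * (n ^ ℓ * B ^ M₀) := by
            apply Nat.mul_le_mul hchoose1
            exact Nat.mul_le_mul_right _ hchoose2
        _ < A ^ M₀ := hmainN
    calc (n + n).choose k * ((n - k).choose M₀ * (B ^ M₀ * Q ^ (n*n - Q*M₀)))
        = ((n + n).choose k * ((n - k).choose M₀ * B ^ M₀)) * Q ^ (n*n - Q*M₀) := by ring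
      _ < A ^ M₀ * Q ^ (n*n - Q*M₀) :=
          mul_lt_mul_of_pos_right hstep (pow_pos (by omega) _)
  exact hfinal

end Asymptotic

section Assembly

lemma has_mono {V : Type*} {G : SimpleGraph V} {k ℓ t t' : ℕ} (h : t ≤ t')
    (c : Sym2 V → Fin t) (hc : HasRainbowSTrees G c k ℓ) :
    ∃ c' : Sym2 V → Fin t', HasRainbowSTrees G c' k ℓ := by
  refine ⟨Fin.castLE h ∘ c, fun S hS => ?_⟩
  obtain ⟨T, hT, hD⟩ := hc S hS
  refine ⟨T, fun i => ?_, hD⟩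
  obtain ⟨h1, h2, h3⟩ := hT i
  exact ⟨h1, h2, fun e he e' he' hee =>
    h3 he he' (Fin.castLE_injective h (by exact hee))⟩

theorem rx_Knn_eq_succ' (k ℓ : ℕ) (hk : 4 ≤ k) (hℓ : 1 ≤ ℓ) :
    ∃ N : ℕ, 0 < N ∧ ∀ n : ℕ, N ≤ n →
      rainbowIndex (completeBipartiteGraph (Fin n) (Fin n)) k ℓ = k + 1 := by
  obtain ⟨N₁, hN₁pos, hN₁⟩ := eventually_count k ℓ hk hℓ
  refine ⟨max N₁ ((k - 2) * k ^ (k + 1) + k + 3), by positivity, fun n hn => ?_⟩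
  have hn1 : N₁ ≤ n := le_trans (le_max_left _ _) hn
  have hn2 : (k - 2) * k ^ (k + 1) + k + 2 < n := by
    have := le_trans (le_max_right _ _) hn
    omega
  obtain ⟨hns, hcount⟩ := hN₁ n hn1
  -- membership of k+1
  have hmem : (k + 1) ∈ {t : ℕ | ∃ c : Sym2 (Fin n ⊕ Fin n) → Fin t,
      HasRainbowSTrees (completeBipartiteGraph (Fin n) (Fin n)) c k ℓ} := by
    obtain ⟨M, hM⟩ := exists_good_matrix hℓ (by omega) hcount
    exact ⟨colorOf M, upper_has hℓ M hM⟩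
  -- lower bound for any member
  have hlow : ∀ t ∈ {t : ℕ | ∃ c : Sym2 (Fin n ⊕ Fin n) → Fin t,
      HasRainbowSTrees (completeBipartiteGraph (Fin n) (Fin n)) c k ℓ}, k + 1 ≤ t := by
    intro t ht
    by_contra hcon
    push_neg at hcon
    obtain ⟨c, hc⟩ := ht
    obtain ⟨c', hc'⟩ := has_mono (by omega : t ≤ k) c hc
    exact lower_no hk hℓ hn2 c' hc'
  rw [rainbowIndex]
  exact le_antisymm (Nat.sInf_le hmem) (le_csInf ⟨k + 1, hmem⟩ hlow)

end Assembly

end RxAux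

theorem rx_Knn_eq_succ (k ℓ : ℕ) (hk : 4 ≤ k) (hℓ : 1 ≤ ℓ) :
    ∃ N : ℕ, 0 < N ∧ ∀ n : ℕ, N ≤ n →
      rainbowIndex (completeBipartiteGraph (Fin n) (Fin n)) k ℓ = k + 1 :=
  rx_Knn_eq_succ' k ℓ hk hℓ
end

section
/- Let α ≥ 1 be a real number and C > 0 a constant. For every pair of positive integers k, ℓ with k ≥ 4, there exists a positive integer N = N(k,ℓ,C,α) such that for all integers m, n with n ≥ N and n ≤ m ≤ C·n^α, rx_{k,ℓ}(K_{m,n}) = k + 1. -/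
open SimpleGraph

namespace RxAux

variable {m n : ℕ}

/-- In a graph where every vertex other than `u0` and `v0` has at most one neighbor,
there is no cycle. -/
lemma exists_last_edge {G : SimpleGraph V} {a w : V} (q : G.Walk a w) (h : a ≠ w) :
    ∃ b, G.Adj b w ∧ s(b, w) ∈ q.edges := by
  induction q with
  | nil => exact absurd rfl h
  | @cons u v w' hadj q ih =>
    by_cases hvw : v = w'
    · subst hvw
      exact ⟨u, hadj, by simp⟩
    · obtain ⟨b, hb, hmem⟩ := ih hvw
      exact ⟨b, hb, by simp [hmem]⟩

lemma isAcyclic_of_leaves [DecidableEq V] {G : SimpleGraph V} (u0 v0 : V)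
    (h : ∀ w, w ≠ u0 → w ≠ v0 → ∀ a b, G.Adj w a → G.Adj w b → a = b) :
    G.IsAcyclic := by
  intro v c hc
  -- find a vertex on the cycle different from u0, v0
  have hlen : 3 ≤ c.length := hc.three_le_length
  have hnodup : c.support.tail.Nodup := hc.2
  have hcard : 3 ≤ c.support.tail.toFinset.card := by
    rw [List.toFinset_card_of_nodup hnodup]
    have : c.support.length = c.length + 1 := c.length_support
    have := c.support.length_tail
    omega
  have : ∃ w ∈ c.support.tail, w ≠ u0 ∧ w ≠ v0 := by
    by_contra hcon
    push_neg at hcon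
    have hsub : c.support.tail.toFinset ⊆ {u0, v0} := by
      intro x hx
      rcases List.mem_toFinset.mp hx with hx'
      rcases hcon x hx' with h1
      by_cases hxu : x = u0
      · simp [hxu]
      · simp [h1 hxu]
    have := Finset.card_le_card hsub
    have h2 : ({u0, v0} : Finset V).card ≤ 2 := Finset.card_insert_le _ _ |>.trans (by simp)
    omega
  obtain ⟨w, hwmem, hw1, hw2⟩ := this
  have hwsupp : w ∈ c.support := List.mem_of_mem_tail hwmem
  have hc' : (c.rotate w hwsupp).IsCycle := hc.rotate hwsupp
  set c' : G.Walk w w := c.rotate w hwsupp with hc'def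
  match hm : c' with
  | SimpleGraph.Walk.nil => exact hc'.not_of_nil
  | SimpleGraph.Walk.cons (v := a) hadj q =>
    have haw : a ≠ w := (G.ne_of_adj hadj).symm
    obtain ⟨b, hb, hmem⟩ := exists_last_edge q haw
    have hab : a = b := h w hw1 hw2 a b hadj hb.symm
    have htrail : (SimpleGraph.Walk.cons hadj q).IsTrail := hc'.isCircuit.isTrail
    rw [SimpleGraph.Walk.isTrail_cons] at htrail
    subst hab
    exact htrail.2 (Sym2.eq_swap ▸ hmem)


abbrev VV (m n : ℕ) := Fin m ⊕ Fin n

abbrev GG (m n : ℕ) : SimpleGraph (VV m n) := completeBipartiteGraph (Fin m) (Fin n)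

lemma gg_adj {u v : VV m n} : (GG m n).Adj u v ↔
    (∃ x y, u = Sum.inl x ∧ v = Sum.inr y) ∨ (∃ x y, u = Sum.inr y ∧ v = Sum.inl x) := by
  cases u <;> cases v <;> simp [completeBipartiteGraph]

/-- the edge associated to a vertex of `S` in the double star with hubs `x', y'` -/
def edgeOf (x' : Fin m) (y' : Fin n) : VV m n → Sym2 (VV m n)
  | Sum.inl x => s(Sum.inl x, Sum.inr y')
  | Sum.inr y => s(Sum.inl x', Sum.inr y)

/-- the matrix coordinate associated to a vertex of `S` -/
def coordOf (x' : Fin m) (y' : Fin n) : VV m n → Fin m × Fin n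
  | Sum.inl x => (x, y')
  | Sum.inr y => (x', y)

def gadgetEdges (S : Finset (VV m n)) (x' : Fin m) (y' : Fin n) : Finset (Sym2 (VV m n)) :=
  S.image (edgeOf x' y') ∪ {s(Sum.inl x', Sum.inr y')}

def gadgetCoords (S : Finset (VV m n)) (x' : Fin m) (y' : Fin n) : Finset (Fin m × Fin n) :=
  S.image (coordOf x' y') ∪ {(x', y')}

lemma mem_gadgetEdges {S : Finset (VV m n)} {x' : Fin m} {y' : Fin n} {e : Sym2 (VV m n)} :
    e ∈ gadgetEdges S x' y' ↔
      (∃ x, Sum.inl x ∈ S ∧ e = s(Sum.inl x, Sum.inr y')) ∨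
      (∃ y, Sum.inr y ∈ S ∧ e = s(Sum.inl x', Sum.inr y)) ∨
      e = s(Sum.inl x', Sum.inr y') := by
  simp only [gadgetEdges, Finset.mem_union, Finset.mem_image, Finset.mem_singleton]
  constructor
  · rintro (⟨u, hu, rfl⟩ | h)
    · cases u with
      | inl x => exact Or.inl ⟨x, hu, rfl⟩
      | inr y => exact Or.inr (Or.inl ⟨y, hu, rfl⟩)
    · exact Or.inr (Or.inr h)
  · rintro (⟨x, hx, rfl⟩ | ⟨y, hy, rfl⟩ | rfl)
    · exact Or.inl ⟨Sum.inl x, hx, rfl⟩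
    · exact Or.inl ⟨Sum.inr y, hy, rfl⟩
    · exact Or.inr rfl

lemma mem_gadgetCoords {S : Finset (VV m n)} {x' : Fin m} {y' : Fin n} {p : Fin m × Fin n} :
    p ∈ gadgetCoords S x' y' ↔
      (∃ x, Sum.inl x ∈ S ∧ p = (x, y')) ∨
      (∃ y, Sum.inr y ∈ S ∧ p = (x', y)) ∨
      p = (x', y') := by
  simp only [gadgetCoords, Finset.mem_union, Finset.mem_image, Finset.mem_singleton]
  constructor
  · rintro (⟨u, hu, rfl⟩ | h)
    · cases u with
      | inl x => exact Or.inl ⟨x, hu, rfl⟩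
      | inr y => exact Or.inr (Or.inl ⟨y, hu, rfl⟩)
    · exact Or.inr (Or.inr h)
  · rintro (⟨x, hx, rfl⟩ | ⟨y, hy, rfl⟩ | rfl)
    · exact Or.inl ⟨Sum.inl x, hx, rfl⟩
    · exact Or.inl ⟨Sum.inr y, hy, rfl⟩
    · exact Or.inr rfl

/-- The double star: hubs `x', y'` joined by an edge; every `S`-vertex on the left is joined
to `y'`, every `S`-vertex on the right is joined to `x'`. -/
def gadget (S : Finset (VV m n)) (x' : Fin m) (y' : Fin n) : (GG m n).Subgraph where
  verts := ↑S ∪ {Sum.inl x', Sum.inr y'}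
  Adj u v := s(u, v) ∈ gadgetEdges S x' y'
  adj_sub := by
    intro u v h
    rw [mem_gadgetEdges] at h
    rcases h with ⟨x, _, he⟩ | ⟨y, _, he⟩ | he <;>
    · rw [Sym2.eq_iff] at he
      rcases he with ⟨rfl, rfl⟩ | ⟨rfl, rfl⟩ <;> simp [completeBipartiteGraph]
  edge_vert := by
    intro u v h
    rw [mem_gadgetEdges] at h
    rcases h with ⟨x, hx, he⟩ | ⟨y, hy, he⟩ | he
    · rw [Sym2.eq_iff] at he
      rcases he with ⟨rfl, rfl⟩ | ⟨rfl, rfl⟩ <;> simp [hx]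
    · rw [Sym2.eq_iff] at he
      rcases he with ⟨rfl, rfl⟩ | ⟨rfl, rfl⟩ <;> simp [hy]
    · rw [Sym2.eq_iff] at he
      rcases he with ⟨rfl, rfl⟩ | ⟨rfl, rfl⟩ <;> simp
  symm := by
    constructor
    intro u v h
    rwa [Sym2.eq_swap]

lemma gadget_edgeSet (S : Finset (VV m n)) (x' : Fin m) (y' : Fin n) :
    (gadget S x' y').edgeSet = ↑(gadgetEdges S x' y') := by
  ext e
  induction e with
  | _ u v => simp [Subgraph.mem_edgeSet, gadget]

lemma gadget_verts (S : Finset (VV m n)) (x' : Fin m) (y' : Fin n) :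
    (gadget S x' y').verts = ↑S ∪ {Sum.inl x', Sum.inr y'} := rfl


lemma gadget_adj {S : Finset (VV m n)} {x' : Fin m} {y' : Fin n} {u v : VV m n} :
    (gadget S x' y').Adj u v ↔ s(u, v) ∈ gadgetEdges S x' y' := Iff.rfl

lemma hubx_mem {S : Finset (VV m n)} {x' : Fin m} {y' : Fin n} :
    (Sum.inl x' : VV m n) ∈ (gadget S x' y').verts := by
  right; left; rfl

lemma huby_mem {S : Finset (VV m n)} {x' : Fin m} {y' : Fin n} :
    (Sum.inr y' : VV m n) ∈ (gadget S x' y').verts := by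
  right; right; rfl

lemma gadget_adj_hub {S : Finset (VV m n)} {x' : Fin m} {y' : Fin n} :
    (gadget S x' y').Adj (Sum.inl x') (Sum.inr y') := by
  rw [gadget_adj, mem_gadgetEdges]; tauto

lemma gadget_adj_left {S : Finset (VV m n)} {x' : Fin m} {y' : Fin n} {x : Fin m}
    (hx : Sum.inl x ∈ S) : (gadget S x' y').Adj (Sum.inl x) (Sum.inr y') := by
  rw [gadget_adj, mem_gadgetEdges]; exact Or.inl ⟨x, hx, rfl⟩

lemma gadget_adj_right {S : Finset (VV m n)} {x' : Fin m} {y' : Fin n} {y : Fin n}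
    (hy : Sum.inr y ∈ S) : (gadget S x' y').Adj (Sum.inl x') (Sum.inr y) := by
  rw [gadget_adj, mem_gadgetEdges]; exact Or.inr (Or.inl ⟨y, hy, rfl⟩)

lemma gadget_adj_shape {S : Finset (VV m n)} {x' : Fin m} {y' : Fin n} {u a : VV m n}
    (hu1 : u ≠ Sum.inl x') (hu2 : u ≠ Sum.inr y')
    (h : (gadget S x' y').Adj u a) :
    (∃ x, u = Sum.inl x ∧ a = Sum.inr y') ∨ (∃ y, u = Sum.inr y ∧ a = Sum.inl x') := by
  rw [gadget_adj, mem_gadgetEdges] at h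
  rcases h with ⟨x, hx, he⟩ | ⟨y, hy, he⟩ | he <;> rw [Sym2.eq_iff] at he
  · rcases he with ⟨rfl, rfl⟩ | ⟨rfl, rfl⟩
    · exact Or.inl ⟨x, rfl, rfl⟩
    · exact absurd rfl hu2
  · rcases he with ⟨rfl, rfl⟩ | ⟨rfl, rfl⟩
    · exact absurd rfl hu1
    · exact Or.inr ⟨y, rfl, rfl⟩
  · rcases he with ⟨rfl, rfl⟩ | ⟨rfl, rfl⟩
    · exact absurd rfl hu1
    · exact absurd rfl hu2

lemma gadget_connected (S : Finset (VV m n)) (x' : Fin m) (y' : Fin n) :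
    (gadget S x' y').coe.Connected := by
  rw [connected_iff_exists_forall_reachable]
  refine ⟨⟨Sum.inr y', huby_mem⟩, ?_⟩
  rintro ⟨u, hu⟩
  have hub_reach : (gadget S x' y').coe.Reachable ⟨Sum.inr y', huby_mem⟩ ⟨Sum.inl x', hubx_mem⟩ :=
    (Adj.reachable (by rw [Subgraph.coe_adj]; exact gadget_adj_hub.symm))
  rcases hu with hu | hu
  · -- u ∈ S
    cases u with
    | inl x =>
      have : (gadget S x' y').coe.Adj ⟨Sum.inr y', huby_mem⟩ ⟨Sum.inl x, Or.inl hu⟩ := by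
        rw [Subgraph.coe_adj]; exact (gadget_adj_left hu).symm
      exact this.reachable
    | inr y =>
      refine hub_reach.trans (Adj.reachable ?_)
      rw [Subgraph.coe_adj]
      exact gadget_adj_right hu
  · rcases hu with hu | hu
    · subst hu; exact hub_reach
    · rcases hu
      exact Reachable.refl _

lemma gadget_isTree (S : Finset (VV m n)) (x' : Fin m) (y' : Fin n) :
    (gadget S x' y').coe.IsTree := by
  classical
  constructor
  · exact gadget_connected S x' y'
  · apply isAcyclic_of_leaves (⟨Sum.inl x', hubx_mem⟩ : (gadget S x' y').verts)
      ⟨Sum.inr y', huby_mem⟩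
    rintro ⟨w, hw⟩ hw1 hw2 ⟨a, ha⟩ ⟨b, hb⟩ hadja hadjb
    have hw1' : w ≠ Sum.inl x' := fun h => hw1 (Subtype.ext h)
    have hw2' : w ≠ Sum.inr y' := fun h => hw2 (Subtype.ext h)
    rw [Subgraph.coe_adj] at hadja hadjb
    rcases gadget_adj_shape hw1' hw2' hadja with ⟨x, hux, rfl⟩ | ⟨y, huy, rfl⟩ <;>
      rcases gadget_adj_shape hw1' hw2' hadjb with ⟨x2, hux2, rfl⟩ | ⟨y2, huy2, rfl⟩
    · rfl
    · rw [hux] at huy2; exact absurd huy2 (by simp)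
    · rw [hux2] at huy; exact absurd huy (by simp)
    · rfl


def mat2col {β : Type*} (b0 : β) (M : Fin m × Fin n → β) : Sym2 (VV m n) → β :=
  Sym2.lift ⟨fun u v =>
    match u, v with
    | Sum.inl x, Sum.inr y => M (x, y)
    | Sum.inr y, Sum.inl x => M (x, y)
    | _, _ => b0,
    by rintro (x | y) (x2 | y2) <;> rfl⟩

@[simp] lemma mat2col_apply {β : Type*} (b0 : β) (M : Fin m × Fin n → β) (x : Fin m) (y : Fin n) :
    mat2col b0 M s(Sum.inl x, Sum.inr y) = M (x, y) := rfl

lemma edge_form {S : Finset (VV m n)} {x' : Fin m} {y' : Fin n} {e : Sym2 (VV m n)}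
    (h : e ∈ gadgetEdges S x' y') :
    ∃ p : Fin m × Fin n, p ∈ gadgetCoords S x' y' ∧ e = s(Sum.inl p.1, Sum.inr p.2) := by
  rw [mem_gadgetEdges] at h
  rcases h with ⟨x, hx, rfl⟩ | ⟨y, hy, rfl⟩ | rfl
  · exact ⟨(x, y'), mem_gadgetCoords.mpr (Or.inl ⟨x, hx, rfl⟩), rfl⟩
  · exact ⟨(x', y), mem_gadgetCoords.mpr (Or.inr (Or.inl ⟨y, hy, rfl⟩)), rfl⟩
  · exact ⟨(x', y'), mem_gadgetCoords.mpr (Or.inr (Or.inr rfl)), rfl⟩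

lemma gadget_injOn {β : Type*} (b0 : β) {M : Fin m × Fin n → β} {S : Finset (VV m n)}
    {x' : Fin m} {y' : Fin n}
    (hM : Set.InjOn M ↑(gadgetCoords S x' y')) :
    Set.InjOn (mat2col b0 M) (gadget S x' y').edgeSet := by
  rw [gadget_edgeSet]
  intro e1 h1 e2 h2 hc
  obtain ⟨p1, hp1, rfl⟩ := edge_form h1
  obtain ⟨p2, hp2, rfl⟩ := edge_form h2
  simp only [mat2col_apply] at hc
  rw [hM hp1 hp2 (by simpa using hc)]

lemma gadgetCoords_card {S : Finset (VV m n)} {x' : Fin m} {y' : Fin n}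
    (hx' : Sum.inl x' ∉ S) (hy' : Sum.inr y' ∉ S) :
    (gadgetCoords S x' y').card = S.card + 1 := by
  rw [gadgetCoords]
  rw [Finset.union_comm, ← Finset.insert_eq]
  rw [Finset.card_insert_of_notMem, Finset.card_image_of_injOn]
  · intro u hu v hv huv
    cases u with
    | inl x => cases v with
      | inl x2 => simpa [coordOf, Prod.ext_iff] using huv
      | inr y2 =>
        exfalso
        simp only [coordOf, Prod.ext_iff] at huv
        exact hx' (huv.1 ▸ Finset.mem_coe.mp hu)
    | inr y => cases v with
      | inl x2 =>
        exfalso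
        simp only [coordOf, Prod.ext_iff] at huv
        exact hx' (huv.1.symm ▸ Finset.mem_coe.mp hv)
      | inr y2 => simpa [coordOf, Prod.ext_iff] using huv
  · intro hmem
    rw [Finset.mem_image] at hmem
    obtain ⟨u, hu, heq⟩ := hmem
    cases u with
    | inl x =>
      simp only [coordOf, Prod.ext_iff] at heq
      exact hx' (heq.1 ▸ hu)
    | inr y =>
      simp only [coordOf, Prod.ext_iff] at heq
      exact hy' (heq.2 ▸ hu)

lemma gadgetCoords_disjoint {S : Finset (VV m n)} {x1 x2 : Fin m} {y1 y2 : Fin n}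
    (hx1 : Sum.inl x1 ∉ S) (hx2 : Sum.inl x2 ∉ S)
    (hy1 : Sum.inr y1 ∉ S) (hy2 : Sum.inr y2 ∉ S)
    (hx : x1 ≠ x2) (hy : y1 ≠ y2) :
    Disjoint (gadgetCoords S x1 y1) (gadgetCoords S x2 y2) := by
  rw [Finset.disjoint_left]
  intro p hp1 hp2
  rw [mem_gadgetCoords] at hp1 hp2
  rcases hp1 with ⟨a, ha, rfl⟩ | ⟨b, hb, rfl⟩ | rfl <;>
    rcases hp2 with ⟨a2, ha2, h2⟩ | ⟨b2, hb2, h2⟩ | h2 <;>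
    simp only [Prod.ext_iff] at h2
  · exact hy h2.2
  · exact hx2 (h2.1 ▸ ha)
  · exact hy h2.2
  · exact hx1 (h2.1.symm ▸ ha2)
  · exact hx h2.1
  · exact hx h2.1
  · exact hx1 (h2.1.symm ▸ ha2)
  · exact hx h2.1
  · exact hx h2.1

lemma gadget_edge_disjoint {S : Finset (VV m n)} {x1 x2 : Fin m} {y1 y2 : Fin n}
    (hx1 : Sum.inl x1 ∉ S) (hx2 : Sum.inl x2 ∉ S)
    (hy1 : Sum.inr y1 ∉ S) (hy2 : Sum.inr y2 ∉ S)
    (hx : x1 ≠ x2) (hy : y1 ≠ y2) :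
    (gadget S x1 y1).edgeSet ∩ (gadget S x2 y2).edgeSet = ∅ := by
  rw [gadget_edgeSet, gadget_edgeSet]
  rw [Set.eq_empty_iff_forall_notMem]
  rintro e ⟨h1, h2⟩
  rw [Finset.mem_coe] at h1 h2
  rw [mem_gadgetEdges] at h1 h2
  rcases h1 with ⟨a, ha, rfl⟩ | ⟨b, hb, rfl⟩ | rfl <;>
    rcases h2 with ⟨a2, ha2, h2⟩ | ⟨b2, hb2, h2⟩ | h2 <;>
    rw [Sym2.eq_iff] at h2 <;>
    simp only [Sum.inl.injEq, Sum.inr.injEq, reduceCtorEq, false_and, and_false, or_false,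
      false_or] at h2
  · exact hy h2.2
  · exact hx2 (h2.1 ▸ ha)
  · exact hy h2.2
  · exact hx1 (h2.1.symm ▸ ha2)
  · exact hx h2.1
  · exact hx h2.1
  · exact hx1 (h2.1.symm ▸ ha2)
  · exact hx h2.1
  · exact hx h2.1

lemma gadget_verts_inter {S : Finset (VV m n)} {x1 x2 : Fin m} {y1 y2 : Fin n}
    (hx1 : Sum.inl x1 ∉ S) (hx2 : Sum.inl x2 ∉ S)
    (hy1 : Sum.inr y1 ∉ S) (hy2 : Sum.inr y2 ∉ S)
    (hx : x1 ≠ x2) (hy : y1 ≠ y2) :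
    (gadget S x1 y1).verts ∩ (gadget S x2 y2).verts = ↑S := by
  apply Set.Subset.antisymm
  · rintro u ⟨h1, h2⟩
    rcases h1 with h1 | h1
    · exact h1
    · exfalso
      simp only [Set.mem_insert_iff, Set.mem_singleton_iff] at h1
      rcases h2 with h2 | h2
      · rcases h1 with rfl | rfl
        · exact hx1 (Finset.mem_coe.mp h2)
        · exact hy1 (Finset.mem_coe.mp h2)
      · simp only [Set.mem_insert_iff, Set.mem_singleton_iff] at h2
        rcases h1 with rfl | rfl <;> rcases h2 with h2 | h2 <;> simp_all
  · intro u hu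
    exact ⟨Or.inl hu, Or.inl hu⟩


lemma card_bad_le {P γ : Type*} [Fintype P] [DecidableEq P] [Fintype γ] [DecidableEq γ]
    {t s : ℕ} (D : Fin t → Finset P) (hcard : ∀ j, (D j).card = s)
    (hdisj : ∀ i j : Fin t, i ≠ j → Disjoint (D i) (D j))
    (hs : s ≤ Fintype.card γ) :
    (Finset.univ.filter (fun M : P → γ => ∀ j, ¬ Set.InjOn M ↑(D j))).card
      ≤ (Fintype.card γ ^ s - 1) ^ t * Fintype.card γ ^ (Fintype.card P - t * s) := by
  classical
  set g := Fintype.card γ with hg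
  set U : Finset P := Finset.univ.biUnion D with hU
  set R : Finset P := Finset.univ \ U with hR
  set Φ : (P → γ) → (∀ j : Fin t, (↑(D j) → γ)) × (↑R → γ) :=
    fun M => (fun j p => M ↑p, fun p => M ↑p) with hΦ
  have key : (Finset.univ.filter (fun M : P → γ => ∀ j, ¬ Set.InjOn M ↑(D j))).card ≤
      ((Fintype.piFinset (fun j : Fin t =>
        Finset.univ.filter (fun gj : (↑(D j) → γ) => ¬ Function.Injective gj))) ×ˢ
        (Finset.univ : Finset (↑R → γ))).card := by
    apply Finset.card_le_card_of_injOn Φ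
    · intro M hM
      rw [Finset.mem_coe, Finset.mem_filter] at hM
      rw [Finset.mem_coe, Finset.mem_product, Fintype.mem_piFinset]
      constructor
      · intro j
        rw [Finset.mem_filter]
        refine ⟨Finset.mem_univ _, ?_⟩
        intro hinj
        apply hM.2 j
        rw [Set.injOn_iff_injective]
        exact hinj
      · exact Finset.mem_univ _
    · intro M1 _ M2 _ heq
      funext p
      rw [Prod.ext_iff] at heq
      by_cases hp : p ∈ U
      · rw [Finset.mem_biUnion] at hp
        obtain ⟨j, _, hj⟩ := hp
        exact congrFun (congrFun heq.1 j) ⟨p, hj⟩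
      · exact congrFun heq.2 ⟨p, by simp [hR, hp]⟩
  refine key.trans ?_
  rw [Finset.card_product, Fintype.card_piFinset]
  have hfac : ∀ j : Fin t,
      (Finset.univ.filter (fun gj : (↑(D j) → γ) => ¬ Function.Injective gj)).card ≤
        g ^ s - 1 := by
    intro j
    have hcards : Fintype.card ↑(D j) = s := by rw [Fintype.card_coe, hcard j]
    have hemb : Nonempty (↑(D j) ↪ γ) := by
      rw [Function.Embedding.nonempty_iff_card_le, hcards]
      exact hs
    obtain ⟨f⟩ := hemb
    have hlt : (Finset.univ.filter (fun gj : (↑(D j) → γ) => ¬ Function.Injective gj)).card <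
        Fintype.card (↑(D j) → γ) := by
      rw [← Finset.card_univ]
      apply Finset.card_lt_card
      rw [Finset.ssubset_iff_of_subset (Finset.subset_univ _)]
      exact ⟨f, Finset.mem_univ _, by simp [f.injective]⟩
    rw [Fintype.card_fun, hcards, ← hg] at hlt
    omega
  have h1 : (∏ j : Fin t, (Finset.univ.filter
      (fun gj : (↑(D j) → γ) => ¬ Function.Injective gj)).card) ≤ (g ^ s - 1) ^ t := by
    calc (∏ j : Fin t, (Finset.univ.filter
        (fun gj : (↑(D j) → γ) => ¬ Function.Injective gj)).card)
        ≤ ∏ _j : Fin t, (g ^ s - 1) := Finset.prod_le_prod' (fun j _ => hfac j)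
      _ = (g ^ s - 1) ^ t := by rw [Finset.prod_const, Finset.card_univ, Fintype.card_fin]
  have h2 : (Finset.univ : Finset (↑R → γ)).card = g ^ (Fintype.card P - t * s) := by
    rw [Finset.card_univ, Fintype.card_fun, Fintype.card_coe]
    congr 1
    rw [hR, Finset.card_sdiff_of_subset (Finset.subset_univ _), Finset.card_univ]
    congr 1
    rw [hU, Finset.card_biUnion (fun i _ j _ hij => hdisj i j hij)]
    rw [Finset.sum_congr rfl (fun j _ => hcard j), Finset.sum_const, Finset.card_univ,
      Fintype.card_fin, smul_eq_mul]
  calc (∏ j : Fin t, (Finset.univ.filter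
      (fun gj : (↑(D j) → γ) => ¬ Function.Injective gj)).card) *
      (Finset.univ : Finset (↑R → γ)).card
      ≤ (g ^ s - 1) ^ t * (Finset.univ : Finset (↑R → γ)).card :=
        Nat.mul_le_mul_right _ h1
    _ = (g ^ s - 1) ^ t * g ^ (Fintype.card P - t * s) := by rw [h2]


lemma block_card {m ℓ q : ℕ} (hq : 0 < q) (i : Fin ℓ) (him : (i.val + 1) * q ≤ m) :
    q ≤ ((Finset.univ : Finset (Fin m)).filter (fun x => x.val / q = i.val)).card := by
  have : ∀ j : Fin q, (⟨i.val * q + j.val, by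
      have := j.isLt
      calc i.val * q + j.val < i.val * q + q := by omega
        _ = (i.val + 1) * q := by ring
        _ ≤ m := him⟩ : Fin m) ∈
      (Finset.univ : Finset (Fin m)).filter (fun x => x.val / q = i.val) := by
    intro j
    rw [Finset.mem_filter]
    refine ⟨Finset.mem_univ _, ?_⟩
    simp only []
    rw [mul_comm, Nat.mul_add_div hq, Nat.div_eq_of_lt j.isLt, add_zero]
  calc q = (Finset.univ : Finset (Fin q)).card := by rw [Finset.card_univ, Fintype.card_fin]
    _ ≤ _ := Finset.card_le_card_of_injOn _ (fun j _ => this j)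
        (by intro a _ b _ hab
            simp only [Fin.mk.injEq] at hab
            exact Fin.ext (by omega))

theorem good_matrix_exists (k ℓ : ℕ) (hℓ : 0 < ℓ) {m n : ℕ} (hnm : n ≤ m) (hn0 : 0 < n)
    (ht1 : k + 1 ≤ n / ℓ)
    (hineq : (Nat.choose (m + n) k * ℓ) * ((k+1)^(k+1) - 1)^(n / ℓ - k)
      < ((k+1)^(k+1))^(n / ℓ - k)) :
    ∃ M : Fin m × Fin n → Fin (k+1), ∀ S : Finset (VV m n), S.card = k → ∀ i : Fin ℓ,
      ∃ x' y', x'.val / (m / ℓ) = i.val ∧ y'.val / (n / ℓ) = i.val ∧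
        Sum.inl x' ∉ S ∧ Sum.inr y' ∉ S ∧ Set.InjOn M ↑(gadgetCoords S x' y') := by
  classical
  have hm0 : 0 < m := hn0.trans_le hnm
  set qX := m / ℓ with hqX
  set qY := n / ℓ with hqY
  set tt := qY - k with htt
  have hqY0 : 0 < qY := by omega
  have hqXY : qY ≤ qX := Nat.div_le_div_right hnm
  -- choice of candidate fresh vertices
  have hchoice : ∀ (S : Finset (VV m n)) (i : Fin ℓ),
      ∃ pq : (Fin tt → Fin m) × (Fin tt → Fin n), S.card = k →
        (Function.Injective pq.1 ∧ Function.Injective pq.2 ∧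
          ∀ j, (pq.1 j).val / qX = i.val ∧ Sum.inl (pq.1 j) ∉ S ∧
               (pq.2 j).val / qY = i.val ∧ Sum.inr (pq.2 j) ∉ S) := by
    intro S i
    by_cases hS : S.card = k
    swap
    · exact ⟨(fun _ => ⟨0, hm0⟩, fun _ => ⟨0, hn0⟩), fun h => absurd h hS⟩
    -- the X side
    have hblockX : qX ≤ ((Finset.univ : Finset (Fin m)).filter
        (fun x => x.val / qX = i.val)).card := by
      apply block_card (by omega) i
      calc (i.val + 1) * qX ≤ ℓ * qX := by
            have := i.isLt
            exact Nat.mul_le_mul_right _ (by omega)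
        _ ≤ m := by rw [hqX, mul_comm]; exact Nat.div_mul_le_self m ℓ
    have hblockY : qY ≤ ((Finset.univ : Finset (Fin n)).filter
        (fun y => y.val / qY = i.val)).card := by
      apply block_card (by omega) i
      calc (i.val + 1) * qY ≤ ℓ * qY := by
            have := i.isLt
            exact Nat.mul_le_mul_right _ (by omega)
        _ ≤ n := by rw [hqY, mul_comm]; exact Nat.div_mul_le_self n ℓ
    have hFX : ((Finset.univ : Finset (Fin m)).filter (fun x => Sum.inl x ∈ S)).card ≤ k := by
      rw [← hS]
      apply Finset.card_le_card_of_injOn (fun x => Sum.inl x)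
      · intro x hx; exact (Finset.mem_filter.mp hx).2
      · intro a _ b _ hab; exact Sum.inl.inj hab
    have hFY : ((Finset.univ : Finset (Fin n)).filter (fun y => Sum.inr y ∈ S)).card ≤ k := by
      rw [← hS]
      apply Finset.card_le_card_of_injOn (fun y => Sum.inr y)
      · intro y hy; exact (Finset.mem_filter.mp hy).2
      · intro a _ b _ hab; exact Sum.inr.inj hab
    set AX := ((Finset.univ : Finset (Fin m)).filter (fun x => x.val / qX = i.val)) \
      ((Finset.univ : Finset (Fin m)).filter (fun x => Sum.inl x ∈ S)) with hAX
    set AY := ((Finset.univ : Finset (Fin n)).filter (fun y => y.val / qY = i.val)) \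
      ((Finset.univ : Finset (Fin n)).filter (fun y => Sum.inr y ∈ S)) with hAY
    have hAXcard : tt ≤ AX.card := by
      have h1 : tt ≤ qX - k := by omega
      refine h1.trans ((tsub_le_tsub hblockX hFX).trans ?_)
      exact Finset.le_card_sdiff _ _
    have hAYcard : tt ≤ AY.card := by
      have h1 : tt ≤ qY - k := by omega
      refine h1.trans ((tsub_le_tsub hblockY hFY).trans ?_)
      exact Finset.le_card_sdiff _ _
    obtain ⟨FX', hFX'sub, hFX'card⟩ := Finset.exists_subset_card_eq hAXcard
    obtain ⟨FY', hFY'sub, hFY'card⟩ := Finset.exists_subset_card_eq hAYcard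
    set eX := FX'.equivFin with heX
    set eY := FY'.equivFin with heY
    refine ⟨(fun j => (eX.symm (Fin.cast hFX'card.symm j)).val,
             fun j => (eY.symm (Fin.cast hFY'card.symm j)).val), fun _ => ⟨?_, ?_, ?_⟩⟩
    · intro a b hab
      have := eX.symm.injective (Subtype.ext hab)
      simpa [Fin.ext_iff] using this
    · intro a b hab
      have := eY.symm.injective (Subtype.ext hab)
      simpa [Fin.ext_iff] using this
    · intro j
      have hx := hFX'sub (eX.symm (Fin.cast hFX'card.symm j)).2
      have hy := hFY'sub (eY.symm (Fin.cast hFY'card.symm j)).2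
      rw [hAX, Finset.mem_sdiff, Finset.mem_filter, Finset.mem_filter] at hx
      rw [hAY, Finset.mem_sdiff, Finset.mem_filter, Finset.mem_filter] at hy
      refine ⟨hx.1.2, fun hc => hx.2 ⟨Finset.mem_univ _, hc⟩,
              hy.1.2, fun hc => hy.2 ⟨Finset.mem_univ _, hc⟩⟩
  choose pq hpq using hchoice
  -- bad events
  set Bad : Finset (VV m n) → Fin ℓ → Finset (Fin m × Fin n → Fin (k+1)) := fun S i =>
    Finset.univ.filter (fun M => ∀ j : Fin tt,
      ¬ Set.InjOn M ↑(gadgetCoords S ((pq S i).1 j) ((pq S i).2 j))) with hBad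
  have hbadcard : ∀ S : Finset (VV m n), S.card = k → ∀ i : Fin ℓ,
      (Bad S i).card ≤ ((k+1)^(k+1) - 1)^tt * (k+1)^(m*n - tt*(k+1)) := by
    intro S hS i
    obtain ⟨hinjX, hinjY, hprop⟩ := hpq S i hS
    have := card_bad_le (γ := Fin (k+1))
      (fun j : Fin tt => gadgetCoords S ((pq S i).1 j) ((pq S i).2 j))
      (fun j => by rw [gadgetCoords_card ((hprop j).2.1) ((hprop j).2.2.2), hS])
      (fun a b hab => gadgetCoords_disjoint ((hprop a).2.1) ((hprop b).2.1)
        ((hprop a).2.2.2) ((hprop b).2.2.2)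
        (fun h => hab (hinjX h)) (fun h => hab (hinjY h)))
      (by rw [Fintype.card_fin])
    rwa [Fintype.card_fin, Fintype.card_prod, Fintype.card_fin, Fintype.card_fin] at this
  set BadAll := ((Finset.powersetCard k (Finset.univ : Finset (VV m n))) ×ˢ
    (Finset.univ : Finset (Fin ℓ))).biUnion (fun Si => Bad Si.1 Si.2) with hBadAll
  have htotal : BadAll.card < (k+1)^(m*n) := by
    have h1 : BadAll.card ≤ (Nat.choose (m+n) k * ℓ) *
        (((k+1)^(k+1) - 1)^tt * (k+1)^(m*n - tt*(k+1))) := by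
      refine (Finset.card_biUnion_le).trans ?_
      have := Finset.sum_le_card_nsmul
        ((Finset.powersetCard k (Finset.univ : Finset (VV m n))) ×ˢ
          (Finset.univ : Finset (Fin ℓ)))
        (fun Si => (Bad Si.1 Si.2).card)
        (((k+1)^(k+1) - 1)^tt * (k+1)^(m*n - tt*(k+1)))
        (by rintro ⟨S, i⟩ hSi
            rw [Finset.mem_product] at hSi
            exact hbadcard S (Finset.mem_powersetCard_univ.mp hSi.1) i)
      rw [smul_eq_mul, Finset.card_product, Finset.card_powersetCard, Finset.card_univ,
        Finset.card_univ, Fintype.card_sum, Fintype.card_fin, Fintype.card_fin,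
        Fintype.card_fin] at this
      exact this
    have hexp : tt * (k+1) ≤ m * n := by
      have h2 : tt ≤ n := by
        have : qY ≤ n := Nat.div_le_self n ℓ
        omega
      have h3 : k + 1 ≤ m := by
        have : qY ≤ n := Nat.div_le_self n ℓ
        omega
      calc tt * (k+1) ≤ n * m := Nat.mul_le_mul h2 h3
        _ = m * n := mul_comm n m
    calc BadAll.card ≤ (Nat.choose (m+n) k * ℓ) *
        (((k+1)^(k+1) - 1)^tt * (k+1)^(m*n - tt*(k+1))) := h1
      _ = ((Nat.choose (m+n) k * ℓ) * ((k+1)^(k+1) - 1)^tt) * (k+1)^(m*n - tt*(k+1)) := by ring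
      _ < ((k+1)^(k+1))^tt * (k+1)^(m*n - tt*(k+1)) := by
          exact Nat.mul_lt_mul_of_lt_of_le hineq (le_refl _)
            (Nat.pow_pos (by omega))
      _ = (k+1)^(m*n) := by
          rw [← pow_mul, ← pow_add]
          congr 1
          rw [mul_comm]
          exact Nat.add_sub_cancel' hexp
  have hex : ∃ M : Fin m × Fin n → Fin (k+1), M ∉ BadAll := by
    by_contra hcon
    push_neg at hcon
    have : (Finset.univ : Finset (Fin m × Fin n → Fin (k+1))) ⊆ BadAll := fun M _ => hcon M
    have hcard := Finset.card_le_card this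
    rw [Finset.card_univ, Fintype.card_fun, Fintype.card_prod, Fintype.card_fin,
      Fintype.card_fin, Fintype.card_fin] at hcard
    omega
  obtain ⟨M, hM⟩ := hex
  refine ⟨M, fun S hS i => ?_⟩
  have hnotbad : M ∉ Bad S i := by
    intro hmem
    exact hM (Finset.mem_biUnion.mpr ⟨(S, i), Finset.mem_product.mpr
      ⟨Finset.mem_powersetCard_univ.mpr hS, Finset.mem_univ _⟩, hmem⟩)
  rw [hBad, Finset.mem_filter] at hnotbad
  push_neg at hnotbad
  obtain ⟨j, hj⟩ := hnotbad (Finset.mem_univ _)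
  obtain ⟨hinjX, hinjY, hprop⟩ := hpq S i hS
  exact ⟨(pq S i).1 j, (pq S i).2 j, (hprop j).1, (hprop j).2.2.1, (hprop j).2.1,
    (hprop j).2.2.2, hj⟩


lemma adj_shape {T : (GG m n).Subgraph} {u w : VV m n} (h : T.Adj u w) :
    ∃ x y, (u = Sum.inl x ∧ w = Sum.inr y) ∨ (u = Sum.inr y ∧ w = Sum.inl x) := by
  have hGG := T.adj_sub h
  rcases u with x | y <;> rcases w with x2 | y2
  · simp [completeBipartiteGraph] at hGG
  · exact ⟨x, y2, Or.inl ⟨rfl, rfl⟩⟩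
  · exact ⟨x2, y, Or.inr ⟨rfl, rfl⟩⟩
  · simp [completeBipartiteGraph] at hGG

theorem no_small_coloring (k ℓ : ℕ) (hk : 4 ≤ k) (hℓ : 1 ≤ ℓ)
    (hkm : k + 1 ≤ m) (hn : k ^ (k + 1) * (k - 2) ≤ n)
    (c : Sym2 (VV m n) → Fin k)
    (hc : HasRainbowSTrees (GG m n) c k ℓ) : False := by
  classical
  -- the k+1 distinguished left vertices
  set xi : Fin (k+1) → Fin m := fun i => ⟨i.val, lt_of_lt_of_le i.isLt hkm⟩ with hxi
  have hxiinj : Function.Injective xi := by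
    intro a b hab
    simpa [hxi, Fin.ext_iff] using hab
  -- pigeonhole: a large fiber of color vectors
  haveI : Nonempty (Fin k) := ⟨⟨0, by omega⟩⟩
  set φ : Fin n → (Fin (k+1) → Fin k) := fun y i => c s(Sum.inl (xi i), Sum.inr y) with hφ
  have hpig : ∃ v : Fin (k+1) → Fin k, k - 2 ≤ (Finset.univ.filter (fun y => φ y = v)).card := by
    apply Fintype.exists_le_card_fiber_of_mul_le_card
    rw [Fintype.card_fun, Fintype.card_fin, Fintype.card_fin, Fintype.card_fin]
    exact hn
  obtain ⟨v, hv⟩ := hpig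
  set B := Finset.univ.filter (fun y => φ y = v) with hB
  -- v is not injective
  obtain ⟨i, j, hij, hvij⟩ := Fintype.exists_ne_map_eq_of_card_lt v
    (by rw [Fintype.card_fin, Fintype.card_fin]; omega)
  set b := v i with hb
  -- the special k-set S
  obtain ⟨Y0, hY0B, hY0card⟩ := Finset.exists_subset_card_eq hv
  set S : Finset (VV m n) := {Sum.inl (xi i), Sum.inl (xi j)} ∪ Y0.image Sum.inr with hS
  have hxij : xi i ≠ xi j := fun h => hij (hxiinj h)
  have hScard : S.card = k := by
    rw [hS, Finset.card_union_of_disjoint, Finset.card_image_of_injective _ Sum.inr_injective]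
    · rw [Finset.card_pair (by simpa using hxij), hY0card]
      omega
    · rw [Finset.disjoint_left]
      rintro u hu hu2
      simp only [Finset.mem_insert, Finset.mem_singleton] at hu
      rw [Finset.mem_image] at hu2
      obtain ⟨y, _, hy⟩ := hu2
      rcases hu with rfl | rfl <;> simp at hy
  have hmemS : ∀ u : VV m n, u ∈ S ↔
      (u = Sum.inl (xi i) ∨ u = Sum.inl (xi j) ∨ ∃ y ∈ Y0, Sum.inr y = u) := by
    intro u
    rw [hS]
    simp [Finset.mem_union, Finset.mem_insert, Finset.mem_singleton, Finset.mem_image, or_assoc]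
  obtain ⟨T, hT, _⟩ := hc S hScard
  set T0 := T ⟨0, by omega⟩ with hT0
  obtain ⟨hSsub, htree, hinj⟩ := hT ⟨0, by omega⟩
  set W := T0.verts with hW
  -- basic membership facts
  have hin1 : (Sum.inl (xi i) : VV m n) ∈ W := hSsub (by simp [hS])
  have hin2 : (Sum.inl (xi j) : VV m n) ∈ W := hSsub (by simp [hS])
  -- edge/vertex counting
  haveI : Fintype ↥W := (Set.toFinite W).fintype
  haveI : Fintype ↥(T0.coe.edgeSet) := (Set.toFinite _).fintype
  have hcount : T0.edgeSet.ncard + 1 = W.ncard := by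
    have h1 := htree.card_edgeFinset
    have h2 : T0.coe.edgeFinset.card = T0.edgeSet.ncard := by
      rw [SimpleGraph.edgeFinset, ← Set.ncard_eq_toFinset_card']
      rw [← T0.image_coe_edgeSet_coe]
      exact (Set.ncard_image_of_injective _ (Sym2.map.injective Subtype.val_injective)).symm
    have h3 : Fintype.card ↥W = W.ncard := by
      rw [Set.ncard_eq_toFinset_card', Set.toFinset_card]
    rw [← h2, ← h3, h1]
  have hedgek : T0.edgeSet.ncard ≤ k := by
    have h1 : (c '' T0.edgeSet).ncard = T0.edgeSet.ncard := Set.ncard_image_of_injOn hinj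
    rw [← h1]
    calc (c '' T0.edgeSet).ncard ≤ (Set.univ : Set (Fin k)).ncard :=
          Set.ncard_le_ncard (Set.subset_univ _) Set.finite_univ
      _ = k := by rw [Set.ncard_univ, Nat.card_eq_fintype_card, Fintype.card_fin]
  have hWk : (k : ℕ) ≤ W.ncard := by
    calc (k : ℕ) = (↑S : Set (VV m n)).ncard := by rw [Set.ncard_coe_finset, hScard]
      _ ≤ W.ncard := Set.ncard_le_ncard hSsub (Set.toFinite W)
  -- the two cases
  by_cases hex : ∃ y : Fin n, y ∉ B ∧ (Sum.inr y : VV m n) ∈ W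
  · -- extra vertex on the right, outside B
    obtain ⟨ys, hysB, hysW⟩ := hex
    have hysS : (Sum.inr ys : VV m n) ∉ (S : Set (VV m n)) := by
      intro hmem
      rw [Finset.mem_coe, hmemS] at hmem
      rcases hmem with h1 | h1 | ⟨y, hy, h1⟩
      · simp at h1
      · simp at h1
      · rw [Sum.inr.injEq] at h1
        exact hysB (hY0B (h1 ▸ hy))
    -- W = S ∪ {inr ys}
    have hWeq : ∀ u ∈ W, u ∈ (↑S : Set (VV m n)) ∨ u = Sum.inr ys := by
      intro u hu
      by_contra hcon
      push_neg at hcon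
      have hsub : insert u (insert (Sum.inr ys) (↑S : Set (VV m n))) ⊆ W := by
        intro z hz
        rcases hz with rfl | hz
        · exact hu
        · rcases hz with rfl | hz
          · exact hysW
          · exact hSsub hz
      have hcard : (insert u (insert (Sum.inr ys) (↑S : Set (VV m n)))).ncard = k + 2 := by
        rw [Set.ncard_insert_of_notMem, Set.ncard_insert_of_notMem hysS,
          Set.ncard_coe_finset, hScard]
        · simp only [Set.mem_insert_iff]
          push_neg
          exact ⟨hcon.2, hcon.1⟩
      have := Set.ncard_le_ncard hsub (Set.toFinite W)
      omega
    -- every edge is either colored b or touches inr ys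
    have hedge3 : T0.edgeSet.ncard ≤ 3 := by
      by_cases hEb : ∃ e ∈ T0.edgeSet, c e = b
      · obtain ⟨eb, hebE, hebc⟩ := hEb
        have hsub : T0.edgeSet ⊆ {eb, s(Sum.inl (xi i), Sum.inr ys),
            s(Sum.inl (xi j), Sum.inr ys)} := by
          intro e he
          have he' := he
          induction e with
          | _ uu ww =>
            rw [SimpleGraph.Subgraph.mem_edgeSet] at he
            obtain ⟨x, y, hsh⟩ := adj_shape he
            -- normalize so that edge is s(inl x, inr y) with Adj
            have hA : T0.Adj (Sum.inl x) (Sum.inr y) ∧ s(uu, ww) = s(Sum.inl x, Sum.inr y) := by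
              rcases hsh with ⟨rfl, rfl⟩ | ⟨rfl, rfl⟩
              · exact ⟨he, rfl⟩
              · exact ⟨he.symm, Sym2.eq_swap⟩
            obtain ⟨hA, hEq⟩ := hA
            have hxW : (Sum.inl x : VV m n) ∈ W := hA.fst_mem
            have hyW : (Sum.inr y : VV m n) ∈ W := hA.snd_mem
            have hxS : x = xi i ∨ x = xi j := by
              rcases hWeq _ hxW with hmem | hmem
              · rw [Finset.mem_coe, hmemS] at hmem
                rcases hmem with h1 | h1 | ⟨_, _, h1⟩
                · exact Or.inl (Sum.inl.inj h1)
                · exact Or.inr (Sum.inl.inj h1)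
                · simp at h1
              · simp at hmem
            rcases hWeq _ hyW with hmem | hmem
            · -- y ∈ Y0 ⊆ B, so the edge has color b
              have hyB : y ∈ B := by
                rw [Finset.mem_coe, hmemS] at hmem
                rcases hmem with h1 | h1 | ⟨y2, hy2, h2⟩
                · simp at h1
                · simp at h1
                · rw [Sum.inr.injEq] at h2
                  exact hY0B (h2 ▸ hy2)
              have hcb : c s(uu, ww) = b := by
                rw [hEq]
                have hyv : φ y = v := (Finset.mem_filter.mp hyB).2
                rcases hxS with rfl | rfl
                · show c s(Sum.inl (xi i), Sum.inr y) = b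
                  have h5 : c s(Sum.inl (xi i), Sum.inr y) = v i := congrFun hyv i
                  exact h5.trans hb.symm
                · show c s(Sum.inl (xi j), Sum.inr y) = b
                  have h5 : c s(Sum.inl (xi j), Sum.inr y) = v j := congrFun hyv j
                  exact h5.trans hvij.symm
              have : s(uu, ww) = eb := hinj he' hebE (by rw [hcb, hebc])
              exact Set.mem_insert_iff.mpr (Or.inl this)
            · rw [Sum.inr.injEq] at hmem
              subst hmem
              rcases hxS with rfl | rfl
              · right; left; exact hEq
              · right; right; exact hEq
        calc T0.edgeSet.ncard ≤ ({eb, s(Sum.inl (xi i), Sum.inr ys),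
            s(Sum.inl (xi j), Sum.inr ys)} : Set (Sym2 (VV m n))).ncard :=
              Set.ncard_le_ncard hsub (Set.toFinite _)
          _ ≤ 3 := by
              refine (Set.ncard_insert_le _ _).trans ?_
              have := Set.ncard_insert_le (s(Sum.inl (xi i), Sum.inr ys))
                ({s(Sum.inl (xi j), Sum.inr ys)} : Set (Sym2 (VV m n)))
              simp only [Set.ncard_singleton] at this ⊢
              omega
      · -- no edge colored b at all: we still get the bound (even ≤ 2)
        push_neg at hEb
        have hsub : T0.edgeSet ⊆ {s(Sum.inl (xi i), Sum.inr ys),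
            s(Sum.inl (xi j), Sum.inr ys)} := by
          intro e he
          have he' := he
          induction e with
          | _ uu ww =>
            rw [SimpleGraph.Subgraph.mem_edgeSet] at he
            obtain ⟨x, y, hsh⟩ := adj_shape he
            have hA : T0.Adj (Sum.inl x) (Sum.inr y) ∧ s(uu, ww) = s(Sum.inl x, Sum.inr y) := by
              rcases hsh with ⟨rfl, rfl⟩ | ⟨rfl, rfl⟩
              · exact ⟨he, rfl⟩
              · exact ⟨he.symm, Sym2.eq_swap⟩
            obtain ⟨hA, hEq⟩ := hA
            have hxW : (Sum.inl x : VV m n) ∈ W := hA.fst_mem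
            have hyW : (Sum.inr y : VV m n) ∈ W := hA.snd_mem
            have hxS : x = xi i ∨ x = xi j := by
              rcases hWeq _ hxW with hmem | hmem
              · rw [Finset.mem_coe, hmemS] at hmem
                rcases hmem with h1 | h1 | ⟨_, _, h1⟩
                · exact Or.inl (Sum.inl.inj h1)
                · exact Or.inr (Sum.inl.inj h1)
                · simp at h1
              · simp at hmem
            rcases hWeq _ hyW with hmem | hmem
            · exfalso
              have hyB : y ∈ B := by
                rw [Finset.mem_coe, hmemS] at hmem
                rcases hmem with h1 | h1 | ⟨y2, hy2, h2⟩
                · simp at h1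
                · simp at h1
                · rw [Sum.inr.injEq] at h2
                  exact hY0B (h2 ▸ hy2)
              apply hEb s(uu, ww) he'
              rw [hEq]
              have hyv : φ y = v := (Finset.mem_filter.mp hyB).2
              rcases hxS with rfl | rfl
              · show c s(Sum.inl (xi i), Sum.inr y) = b
                have h5 : c s(Sum.inl (xi i), Sum.inr y) = v i := congrFun hyv i
                exact h5.trans hb.symm
              · show c s(Sum.inl (xi j), Sum.inr y) = b
                have h5 : c s(Sum.inl (xi j), Sum.inr y) = v j := congrFun hyv j
                exact h5.trans hvij.symm
            · rw [Sum.inr.injEq] at hmem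
              subst hmem
              rcases hxS with rfl | rfl
              · left; exact hEq
              · right; exact hEq
        calc T0.edgeSet.ncard ≤ ({s(Sum.inl (xi i), Sum.inr ys),
            s(Sum.inl (xi j), Sum.inr ys)} : Set (Sym2 (VV m n))).ncard :=
              Set.ncard_le_ncard hsub (Set.toFinite _)
          _ ≤ 3 := by
              refine (Set.ncard_insert_le _ _).trans ?_
              simp only [Set.ncard_singleton]
              omega
    -- but the tree has at least k ≥ 4 edges
    have hWcard : k + 1 ≤ W.ncard := by
      have hsub : insert (Sum.inr ys) (↑S : Set (VV m n)) ⊆ W := by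
        intro z hz
        rcases hz with rfl | hz
        · exact hysW
        · exact hSsub hz
      have : (insert (Sum.inr ys) (↑S : Set (VV m n))).ncard = k + 1 := by
        rw [Set.ncard_insert_of_notMem hysS, Set.ncard_coe_finset, hScard]
      have h2 := Set.ncard_le_ncard hsub (Set.toFinite W)
      omega
    omega
  · -- all right-vertices of W lie in B: find two b-colored edges
    push_neg at hex
    -- neighbor of inl (xi i)
    have hreach := (htree.isConnected.preconnected ⟨Sum.inl (xi i), hin1⟩ ⟨Sum.inl (xi j), hin2⟩)
    obtain ⟨p⟩ := hreach
    have hne : (⟨Sum.inl (xi i), hin1⟩ : ↥W) ≠ ⟨Sum.inl (xi j), hin2⟩ := by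
      intro h
      rw [Subtype.ext_iff] at h
      exact hxij (Sum.inl.inj h)
    have hnn : ¬ p.Nil := SimpleGraph.Walk.not_nil_of_ne hne
    have hadj1 : T0.coe.Adj ⟨Sum.inl (xi i), hin1⟩ (p.getVert 1) := p.adj_snd hnn
    rw [SimpleGraph.Subgraph.coe_adj] at hadj1
    -- and of inl (xi j), via the reversed walk
    have hnn2 : ¬ p.reverse.Nil := SimpleGraph.Walk.not_nil_of_ne hne.symm
    have hadj2 : T0.coe.Adj ⟨Sum.inl (xi j), hin2⟩ (p.reverse.getVert 1) :=
      p.reverse.adj_snd hnn2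
    rw [SimpleGraph.Subgraph.coe_adj] at hadj2
    obtain ⟨x1, y1, hsh1⟩ := adj_shape hadj1
    obtain ⟨x2, y2, hsh2⟩ := adj_shape hadj2
    have hA1 : T0.Adj (Sum.inl (xi i)) (Sum.inr y1) := by
      rcases hsh1 with ⟨h1, h2⟩ | ⟨h1, _⟩
      · exact h2 ▸ hadj1
      · simp at h1
    have hA2 : T0.Adj (Sum.inl (xi j)) (Sum.inr y2) := by
      rcases hsh2 with ⟨h1, h2⟩ | ⟨h1, _⟩
      · exact h2 ▸ hadj2
      · simp at h1
    have hy1B : y1 ∈ B := by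
      by_contra hcon
      exact hex y1 hcon hA1.snd_mem
    have hy2B : y2 ∈ B := by
      by_contra hcon
      exact hex y2 hcon hA2.snd_mem
    have he1 : s(Sum.inl (xi i), Sum.inr y1) ∈ T0.edgeSet :=
      SimpleGraph.Subgraph.mem_edgeSet.mpr hA1
    have he2 : s(Sum.inl (xi j), Sum.inr y2) ∈ T0.edgeSet :=
      SimpleGraph.Subgraph.mem_edgeSet.mpr hA2
    have hc1 : c s(Sum.inl (xi i), Sum.inr y1) = b := by
      have hyv : φ y1 = v := (Finset.mem_filter.mp hy1B).2
      have h5 : c s(Sum.inl (xi i), Sum.inr y1) = v i := congrFun hyv i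
      exact h5.trans hb.symm
    have hc2 : c s(Sum.inl (xi j), Sum.inr y2) = b := by
      have hyv : φ y2 = v := (Finset.mem_filter.mp hy2B).2
      have h5 : c s(Sum.inl (xi j), Sum.inr y2) = v j := congrFun hyv j
      exact h5.trans hvij.symm
    have := hinj he1 he2 (by rw [hc1, hc2])
    rw [Sym2.eq_iff] at this
    rcases this with ⟨h1, _⟩ | ⟨h1, _⟩
    · exact hxij (Sum.inl.inj h1)
    · simp at h1


lemma eventually_ineq (α : ℝ) (hα : 1 ≤ α) (C : ℝ) (hC : 0 < C) (k ℓ : ℕ)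
    (hk : 4 ≤ k) (hℓ : 1 ≤ ℓ) :
    ∃ N : ℕ, 0 < N ∧ ∀ m n : ℕ, N ≤ n → n ≤ m → (m : ℝ) ≤ C * (n : ℝ) ^ α →
      (k + 1 ≤ n / ℓ) ∧ (k ^ (k + 1) * (k - 2) ≤ n) ∧ (k + 1 ≤ m) ∧
      ((Nat.choose (m + n) k * ℓ) * ((k+1)^(k+1) - 1)^(n / ℓ - k)
        < ((k+1)^(k+1))^(n / ℓ - k)) := by
  have hℓ0 : (0:ℝ) < ℓ := by exact_mod_cast hℓ
  set A : ℕ := (k+1)^(k+1) with hA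
  have hA2 : 2 ≤ A := by
    calc 2 ≤ k + 1 := by omega
      _ = (k+1)^1 := (pow_one _).symm
      _ ≤ (k+1)^(k+1) := Nat.pow_le_pow_right (by omega) (by omega)
  have hAR : (1:ℝ) ≤ (A:ℝ) := by exact_mod_cast (by omega : 1 ≤ A)
  set r : ℝ := ((A:ℝ) - 1) / A with hr
  have hr0 : 0 < r := by
    apply div_pos
    · have : (2:ℝ) ≤ (A:ℝ) := by exact_mod_cast hA2
      linarith
    · linarith
  have hr1 : r < 1 := by
    rw [hr, div_lt_one (by linarith)]
    linarith
  set s0 : ℝ := r ^ ((1:ℝ) / (2 * ℓ)) with hs0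
  have hs00 : 0 < s0 := Real.rpow_pos_of_pos hr0 _
  have hs01 : s0 < 1 := Real.rpow_lt_one hr0.le hr1 (by positivity)
  set K : ℕ := (⌈α⌉₊ + 1) * k with hK
  have hsum : Summable (fun n : ℕ => (n:ℝ) ^ K * s0 ^ n) :=
    summable_pow_mul_geometric_of_norm_lt_one K
      (by rw [Real.norm_eq_abs, abs_of_pos hs00]; exact hs01)
  have htend := hsum.tendsto_atTop_zero
  set ε : ℝ := 1 / ((2*C)^k * ℓ * (1/r)) with hε
  have hε0 : 0 < ε := by
    rw [hε]
    positivity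
  have hev : ∀ᶠ n : ℕ in Filter.atTop, (n:ℝ) ^ K * s0 ^ n < ε :=
    htend.eventually_lt_const hε0
  rw [Filter.eventually_atTop] at hev
  obtain ⟨N0, hN0⟩ := hev
  refine ⟨max (max N0 1) (max (2 * ℓ * (k + 2)) (k ^ (k+1) * (k-2) + k + 1)), by positivity, ?_⟩
  intro m n hNn hnm hmC
  have hn1 : 1 ≤ n := le_trans (le_trans (le_max_right _ _) (le_max_left _ _)) hNn
  have hnN0 : N0 ≤ n := le_trans (le_trans (le_max_left _ _) (le_max_left _ _)) hNn
  have hn2ℓ : 2 * ℓ * (k + 2) ≤ n := le_trans (le_trans (le_max_left _ _) (le_max_right _ _)) hNn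
  have hnk : k ^ (k+1) * (k-2) + k + 1 ≤ n :=
    le_trans (le_trans (le_max_right _ _) (le_max_right _ _)) hNn
  -- Nat division facts
  have hdiv_lb : n < ℓ * (n / ℓ) + ℓ := by
    have h1 := Nat.div_add_mod n ℓ
    have h2 : n % ℓ < ℓ := Nat.mod_lt n (by omega)
    omega
  have hdiv_ge : 2 * (k + 2) ≤ n / ℓ := by
    rw [Nat.le_div_iff_mul_le (by omega)]
    calc 2 * (k+2) * ℓ = 2 * ℓ * (k+2) := by ring
      _ ≤ n := hn2ℓ
  have h1 : k + 1 ≤ n / ℓ := by omega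
  have h2 : k ^ (k+1) * (k-2) ≤ n := by omega
  have h3 : k + 1 ≤ m := by omega
  refine ⟨h1, h2, h3, ?_⟩
  -- now the main inequality, via the reals
  set t : ℕ := n / ℓ - k with ht
  -- t is at least n / (2 ℓ)
  have htlb : (n:ℝ) / (2 * ℓ) ≤ (t:ℝ) := by
    have htn : (t:ℕ) = n / ℓ - k := ht
    have hq : (n:ℝ)/ℓ - 1 ≤ ((n / ℓ : ℕ) : ℝ) := by
      have h5 : (n:ℝ) ≤ ℓ * ((n/ℓ : ℕ):ℝ) + ℓ := by exact_mod_cast hdiv_lb.le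
      rw [sub_le_iff_le_add, div_le_iff₀ hℓ0]
      linarith
    have htq : (t:ℝ) = ((n / ℓ : ℕ) : ℝ) - k := by
      rw [ht, Nat.cast_sub (by omega)]
    rw [htq]
    -- n/(2ℓ) ≤ n/ℓ - 1 - k  ⟸  n/(2ℓ) ≥ k + 1
    have hhalf : (n:ℝ)/ℓ = (n:ℝ)/(2*ℓ) + (n:ℝ)/(2*ℓ) := by
      field_simp
      ring
    have hbig : (k:ℝ) + 1 + 1 ≤ (n:ℝ)/(2*ℓ) := by
      rw [le_div_iff₀ (by positivity)]
      have : ((k:ℝ) + 2) * (2*ℓ) = 2*ℓ*(k+2) := by ring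
      calc ((k:ℝ)+1+1) * (2*ℓ) = 2*ℓ*(k+2) := by ring
        _ ≤ n := by exact_mod_cast hn2ℓ
    linarith
  -- cast the claim to the reals
  have hARpos : (0:ℝ) < (A:ℝ) := by linarith
  have goalR : ((Nat.choose (m+n) k : ℝ) * ℓ) * ((A:ℝ) - 1)^t < (A:ℝ)^t := by
    have hfact : ((A:ℝ) - 1)^t = r^t * (A:ℝ)^t := by
      rw [← mul_pow, hr]
      congr 1
      field_simp
    rw [hfact, ← mul_assoc]
    have key : (Nat.choose (m+n) k : ℝ) * ℓ * r^t < 1 := by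
      -- bound the binomial coefficient
      have hch : (Nat.choose (m+n) k : ℝ) ≤ ((m+n:ℕ) : ℝ)^k := by
        exact_mod_cast Nat.choose_le_pow (m+n) k
      have hmn : ((m+n:ℕ) : ℝ) ≤ 2 * C * (n:ℝ)^α := by
        push_cast
        have hn_le : (n:ℝ) ≤ (m:ℝ) := by exact_mod_cast hnm
        linarith
      have hca : (0:ℝ) ≤ 2 * C * (n:ℝ)^α := by positivity
      have hch2 : (Nat.choose (m+n) k : ℝ) ≤ (2*C)^k * ((n:ℝ)^α)^k := by
        calc (Nat.choose (m+n) k : ℝ) ≤ ((m+n:ℕ) : ℝ)^k := hch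
          _ ≤ (2 * C * (n:ℝ)^α)^k := by
              apply pow_le_pow_left₀ (by positivity) hmn
          _ = (2*C)^k * ((n:ℝ)^α)^k := by rw [mul_pow]
      -- bound the power of n
      have hnα : ((n:ℝ)^α)^k ≤ (n:ℝ)^K := by
        have h1 : (1:ℝ) ≤ (n:ℝ) := by exact_mod_cast hn1
        have h2 : (n:ℝ)^α ≤ (n:ℝ)^((⌈α⌉₊ + 1 : ℕ) : ℝ) := by
          apply Real.rpow_le_rpow_of_exponent_le h1
          calc α ≤ (⌈α⌉₊ : ℝ) := Nat.le_ceil α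
            _ ≤ (⌈α⌉₊ : ℝ) + 1 := by linarith
            _ = ((⌈α⌉₊ + 1 : ℕ) : ℝ) := by push_cast; ring
        rw [Real.rpow_natCast] at h2
        calc ((n:ℝ)^α)^k ≤ ((n:ℝ)^(⌈α⌉₊ + 1 : ℕ))^k := by
              apply pow_le_pow_left₀ (Real.rpow_nonneg (by positivity) _) h2
          _ = (n:ℝ)^K := by rw [← pow_mul, hK]
      -- bound r^t by s0^n / r  (that is, r^t ≤ r⁻¹ * s0^n)
      have hrt : r^t ≤ (1/r) * s0^n := by
        have hts : r^(t:ℝ) ≤ r^((n:ℝ)/(2*ℓ)) :=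
          Real.rpow_le_rpow_of_exponent_ge hr0 hr1.le htlb
        have hsplit : r^((n:ℝ)/(2*ℓ)) = s0^n := by
          rw [hs0, ← Real.rpow_natCast (r ^ ((1:ℝ)/(2*ℓ))) n, ← Real.rpow_mul hr0.le]
          congr 1
          field_simp
        rw [Real.rpow_natCast] at hts
        rw [hsplit] at hts
        have : (1:ℝ) ≤ 1/r := by
          rw [le_div_iff₀ hr0]
          linarith
        nlinarith [pow_nonneg hr0.le t, pow_nonneg hs00.le n]
      -- put everything together
      have hKn := hN0 n hnN0
      calc (Nat.choose (m+n) k : ℝ) * ℓ * r^t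
          ≤ ((2*C)^k * (n:ℝ)^K) * ℓ * ((1/r) * s0^n) := by
            apply mul_le_mul _ hrt (pow_nonneg hr0.le t) (by positivity)
            apply mul_le_mul _ (le_refl (ℓ:ℝ)) (by positivity) (by positivity)
            exact hch2.trans (by
              apply mul_le_mul_of_nonneg_left hnα (by positivity))
        _ = ((2*C)^k * ℓ * (1/r)) * ((n:ℝ)^K * s0^n) := by ring
        _ < ((2*C)^k * ℓ * (1/r)) * ε := by
            apply mul_lt_mul_of_pos_left hKn (by positivity)
        _ = 1 := by
            rw [hε]
            field_simp
    calc (Nat.choose (m+n) k : ℝ) * ℓ * r^t * (A:ℝ)^t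
        < 1 * (A:ℝ)^t := by
          apply mul_lt_mul_of_pos_right key (by positivity)
      _ = (A:ℝ)^t := one_mul _
  -- back to the naturals
  have hcast : (((Nat.choose (m+n) k * ℓ) * ((A - 1)^t) : ℕ) : ℝ)
      < (((A^t) : ℕ) : ℝ) := by
    push_cast [Nat.cast_sub (by omega : 1 ≤ A)]
    convert goalR using 2 <;> try ring
  exact_mod_cast hcast


end RxAux

theorem rx_Kmn_eq_succ (α : ℝ) (hα : 1 ≤ α) (C : ℝ) (hC : 0 < C)
    (k ℓ : ℕ) (hk : 4 ≤ k) (hℓ : 1 ≤ ℓ) :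
    ∃ N : ℕ, 0 < N ∧ ∀ m n : ℕ, N ≤ n → n ≤ m → (m : ℝ) ≤ C * (n : ℝ) ^ α →
      rainbowIndex (completeBipartiteGraph (Fin m) (Fin n)) k ℓ = k + 1 := by
  classical
  obtain ⟨N, hN0, hN⟩ := RxAux.eventually_ineq α hα C hC k ℓ hk hℓ
  refine ⟨N, hN0, ?_⟩
  intro m n hNn hnm hmC
  obtain ⟨h1, h2, h3, h4⟩ := hN m n hNn hnm hmC
  have hn0 : 0 < n := by
    rcases Nat.eq_zero_or_pos n with rfl | h
    · rw [Nat.zero_div] at h1; omega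
    · exact h
  -- the good coloring with k+1 colors
  obtain ⟨M, hM⟩ := RxAux.good_matrix_exists k ℓ (by omega) hnm hn0 h1 h4
  set c : Sym2 (RxAux.VV m n) → Fin (k+1) := RxAux.mat2col (0 : Fin (k+1)) M with hc
  have hhas : HasRainbowSTrees (RxAux.GG m n) c k ℓ := by
    intro S hS
    choose xf yf hxdiv hydiv hxnS hynS hinjM using hM S hS
    refine ⟨fun i => RxAux.gadget S (xf i) (yf i), fun i => ⟨?_, RxAux.gadget_isTree S _ _,
      RxAux.gadget_injOn 0 (hinjM i)⟩, ?_⟩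
    · exact Set.subset_union_left
    · intro i j hij
      have hxne : xf i ≠ xf j := by
        intro h
        apply hij
        apply Fin.ext
        rw [← hxdiv i, ← hxdiv j, h]
      have hyne : yf i ≠ yf j := by
        intro h
        apply hij
        apply Fin.ext
        rw [← hydiv i, ← hydiv j, h]
      exact ⟨RxAux.gadget_edge_disjoint (hxnS i) (hxnS j) (hynS i) (hynS j) hxne hyne,
        RxAux.gadget_verts_inter (hxnS i) (hxnS j) (hynS i) (hynS j) hxne hyne⟩
  apply le_antisymm
  · show sInf {t : ℕ | ∃ c2 : Sym2 (Fin m ⊕ Fin n) → Fin t,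
        HasRainbowSTrees (completeBipartiteGraph (Fin m) (Fin n)) c2 k ℓ} ≤ k + 1
    exact Nat.sInf_le ⟨c, hhas⟩
  · show k + 1 ≤ sInf {t : ℕ | ∃ c2 : Sym2 (Fin m ⊕ Fin n) → Fin t,
        HasRainbowSTrees (completeBipartiteGraph (Fin m) (Fin n)) c2 k ℓ}
    apply le_csInf
    · exact ⟨k + 1, c, hhas⟩
    rintro t ⟨c', hc'⟩
    by_contra hlt
    push_neg at hlt
    have htk : t ≤ k := by omega
    set c'' : Sym2 (RxAux.VV m n) → Fin k := fun e => Fin.castLE htk (c' e) with hc''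
    have hhas'' : HasRainbowSTrees (RxAux.GG m n) c'' k ℓ := by
      intro S hS
      obtain ⟨T, hT, hdisj⟩ := hc' S hS
      refine ⟨T, fun i => ⟨(hT i).1, (hT i).2.1, ?_⟩, hdisj⟩
      intro e1 he1 e2 he2 h12
      exact (hT i).2.2 he1 he2 (Fin.castLE_injective htk h12)
    exact (RxAux.no_small_coloring k ℓ hk hℓ h3 h2 c'' hhas'').elim
end

section
/- For every triple of positive integers k, ℓ, r with 3 ≤ k < r, there exists a positive integer N = N(k,ℓ,r) such that for every integer n ≥ N, rx_{k,ℓ}(K_{r×n}) = k. -/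
open SimpleGraph

/-! ### Auxiliary graph-theoretic lemmas -/

section StarLemmas

variable {V β : Type*} {G : SimpleGraph V}

lemma star_acyclic {W : Type*} {H : SimpleGraph W} (x₀ : W)
    (h : ∀ a b : W, H.Adj a b → a = x₀ ∨ b = x₀) : H.IsAcyclic := by
  intro v c hc
  cases c with
  | nil => exact absurd hc (Walk.IsCycle.not_of_nil)
  | @cons _ w _ h₁ c₁ =>
    rcases h _ _ h₁ with hv | hw
    · subst hv
      have hw : w ≠ v := (H.ne_of_adj h₁).symm
      cases c₁ with
      | nil => exact hw rfl
      | @cons _ z _ h₂ c₂ =>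
        have hz : z = v := by
          rcases h _ _ h₂ with h' | h'
          · exact absurd h' hw
          · exact h'
        subst hz
        cases c₂ with
        | nil =>
          have := hc.edges_nodup
          simp [Sym2.eq_swap] at this
        | cons h₃ c₃ =>
          have hnd := hc.support_nodup
          simp [List.nodup_cons] at hnd
    · subst hw
      have hv : v ≠ w := H.ne_of_adj h₁
      cases c₁ with
      | nil => exact hv rfl
      | @cons _ u _ h₂ c₂ =>
        have hu : u ≠ w := fun e => H.ne_of_adj h₂ e.symm
        cases c₂ with
        | nil =>
          have := hc.edges_nodup
          simp [Sym2.eq_swap] at this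
        | @cons _ z _ h₃ c₃ =>
          have hz : z = w := by
            rcases h _ _ h₃ with h' | h'
            · exact absurd h' hu
            · exact h'
          subst hz
          have hnd := hc.support_nodup
          simp [List.nodup_cons] at hnd

/-- The star subgraph with center `x` and leaves `S`. -/
def starSub (G : SimpleGraph V) (S : Finset V) (x : V) (h : ∀ v ∈ S, G.Adj x v) :
    G.Subgraph where
  verts := insert x ↑S
  Adj a b := (a = x ∧ b ∈ S) ∨ (b = x ∧ a ∈ S)
  adj_sub := by
    rintro a b (⟨rfl, hb⟩ | ⟨rfl, ha⟩)
    · exact h b hb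
    · exact (h a ha).symm
  edge_vert := by
    rintro a b (⟨rfl, hb⟩ | ⟨rfl, ha⟩)
    · exact Set.mem_insert _ _
    · exact Set.mem_insert_iff.2 (Or.inr ha)
  symm := by
    constructor
    rintro a b (⟨rfl, hb⟩ | ⟨rfl, ha⟩)
    · exact Or.inr ⟨rfl, hb⟩
    · exact Or.inl ⟨rfl, ha⟩

lemma starSub_mem_edgeSet {S : Finset V} {x : V} {h} {e : Sym2 V} :
    e ∈ (starSub G S x h).edgeSet ↔ ∃ v ∈ S, e = s(x, v) := by
  induction e with
  | _ a b =>
    rw [Subgraph.mem_edgeSet]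
    constructor
    · rintro (⟨rfl, hb⟩ | ⟨rfl, ha⟩)
      · exact ⟨b, hb, rfl⟩
      · exact ⟨a, ha, Sym2.eq_swap⟩
    · rintro ⟨v, hv, he⟩
      rw [Sym2.eq_iff] at he
      rcases he with ⟨rfl, rfl⟩ | ⟨rfl, rfl⟩
      · exact Or.inl ⟨rfl, hv⟩
      · exact Or.inr ⟨rfl, hv⟩

lemma starSub_isTree {S : Finset V} {x : V} {h} :
    (starSub G S x h).coe.IsTree := by
  constructor
  · haveI : Nonempty (starSub G S x h).verts := ⟨⟨x, Set.mem_insert _ _⟩⟩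
    refine ⟨fun a b => ?_⟩
    · have hctr : x ∈ (starSub G S x h).verts := Set.mem_insert _ _
      have key : ∀ w : (starSub G S x h).verts, (w : V) ∈ S →
          (starSub G S x h).coe.Adj ⟨x, hctr⟩ w := by
        intro w hw
        rw [Subgraph.coe_adj]
        exact Or.inl ⟨rfl, hw⟩
      have reach : ∀ w : (starSub G S x h).verts,
          (starSub G S x h).coe.Reachable ⟨x, hctr⟩ w := by
        intro w
        rcases Set.mem_insert_iff.1 w.2 with hw | hw
        · have : (⟨x, hctr⟩ : (starSub G S x h).verts) = w := Subtype.ext hw.symm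
          rw [this]
        · exact (key w hw).reachable
      exact (reach a).symm.trans (reach b)
  · refine star_acyclic (⟨x, Set.mem_insert _ _⟩ : (starSub G S x h).verts) ?_
    rintro ⟨a, ha⟩ ⟨b, hb⟩ hab
    rw [Subgraph.coe_adj] at hab
    rcases hab with ⟨h1, _⟩ | ⟨h1, _⟩
    · exact Or.inl (Subtype.ext h1)
    · exact Or.inr (Subtype.ext h1)

lemma build_trees {c : Sym2 V → β} {S : Finset V}
    {ℓ : ℕ} (X : Fin ℓ → V) (hXinj : Function.Injective X)
    (hXS : ∀ i, X i ∉ S) (hadj : ∀ i, ∀ v ∈ S, G.Adj (X i) v)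
    (hcinj : ∀ i, Set.InjOn (fun v => c s(X i, v)) ↑S) :
    ∃ T : Fin ℓ → G.Subgraph,
      (∀ i, IsRainbowSTree G c (S : Set V) (T i)) ∧ InternallyDisjoint (S : Set V) T := by
  refine ⟨fun i => starSub G S (X i) (hadj i), fun i => ?_, fun i j hij => ⟨?_, ?_⟩⟩
  · refine ⟨Set.subset_insert _ _, starSub_isTree, ?_⟩
    intro e₁ he₁ e₂ he₂ hce
    rcases starSub_mem_edgeSet.1 he₁ with ⟨v, hv, rfl⟩
    rcases starSub_mem_edgeSet.1 he₂ with ⟨w, hw, rfl⟩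
    rw [hcinj i hv hw hce]
  · ext e
    simp only [Set.mem_inter_iff, Set.mem_empty_iff_false, iff_false, not_and]
    intro he₁ he₂
    rcases starSub_mem_edgeSet.1 he₁ with ⟨v, hv, rfl⟩
    rcases starSub_mem_edgeSet.1 he₂ with ⟨w, hw, he⟩
    rw [Sym2.eq_iff] at he
    rcases he with ⟨h1, rfl⟩ | h1
    · exact hij (hXinj h1)
    · exact hXS j (h1.2 ▸ hv)
  · ext a
    simp only [Set.mem_inter_iff, starSub, Set.mem_insert_iff]
    constructor
    · rintro ⟨rfl | ha, hb⟩
      · rcases hb with hb | hb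
        · exact absurd (hXinj hb) hij
        · exact absurd hb (hXS i)
      · exact ha
    · intro ha
      exact ⟨Or.inr ha, Or.inr ha⟩

end StarLemmas

/-! ### The lower bound -/

lemma rx_lower_bound {k ℓ r n t : ℕ} (hk : 3 ≤ k) (hℓ : 1 ≤ ℓ) (hr : 0 < r) (hkn : k ≤ n)
    (ht : t < k) (c : Sym2 ((_ : Fin r) × Fin n) → Fin t) :
    ¬ HasRainbowSTrees (completeMultipartiteGraph (fun _ : Fin r => Fin n)) c k ℓ := by
  set G := completeMultipartiteGraph (fun _ : Fin r => Fin n) with hG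
  intro H
  set p0 : Fin r := ⟨0, hr⟩ with hp0
  set S₀ : Finset ((_ : Fin r) × Fin n) :=
    Finset.univ.map ⟨fun i : Fin k => ⟨p0, Fin.castLE hkn i⟩,
      fun a b hab => by
        have := (Sigma.mk.inj_iff.1 hab).2
        exact Fin.castLE_injective hkn (eq_of_heq this)⟩ with hS₀
  have hS₀card : S₀.card = k := by simp [hS₀]
  have hS₀fst : ∀ v ∈ S₀, v.1 = p0 := by
    intro v hv
    rw [hS₀, Finset.mem_map] at hv
    obtain ⟨i, _, rfl⟩ := hv
    rfl
  obtain ⟨T, hT, -⟩ := H S₀ hS₀card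
  set T0 := T ⟨0, hℓ⟩ with hT0
  obtain ⟨hSv, htree, hinj⟩ := hT ⟨0, hℓ⟩
  letI : Fintype ↥T0.verts := Fintype.ofFinite _
  letI : Fintype ↥T0.coe.edgeSet := Fintype.ofFinite _
  have h1 : T0.coe.edgeFinset.card + 1 = Fintype.card ↥T0.verts := htree.card_edgeFinset
  have hmem : ∀ e : ↥T0.coe.edgeSet, Sym2.map Subtype.val (e : Sym2 ↥T0.verts) ∈ T0.edgeSet := by
    rintro ⟨e, he⟩
    induction e with
    | _ a b =>
      rw [mem_edgeSet] at he
      rw [Sym2.map_pair_eq, Subgraph.mem_edgeSet]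
      exact he
  have h2 : Fintype.card ↥T0.coe.edgeSet ≤ t := by
    have : Function.Injective
        (fun e : ↥T0.coe.edgeSet => c (Sym2.map Subtype.val (e : Sym2 ↥T0.verts))) := by
      intro e₁ e₂ hee
      have := hinj (hmem e₁) (hmem e₂) hee
      exact Subtype.ext (Sym2.map.injective Subtype.val_injective this)
    simpa using Fintype.card_le_of_injective _ this
  have h3 : k ≤ Fintype.card ↥T0.verts := by
    have hle : Nat.card ↥(↑S₀ : Set ((_ : Fin r) × Fin n)) ≤ Nat.card ↥T0.verts :=
      Nat.card_le_card_of_injective (Set.inclusion hSv) (Set.inclusion_injective hSv)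
    rwa [Nat.card_coe_set_eq, Set.ncard_coe_finset, hS₀card,
      Nat.card_eq_fintype_card] at hle
  have h4 : Fintype.card ↥T0.verts = k := by
    rw [← h1] at h3 ⊢
    rw [edgeFinset_card] at h3 ⊢
    omega
  have hveq : (↑S₀ : Set ((_ : Fin r) × Fin n)) = T0.verts := by
    refine Set.eq_of_subset_of_ncard_le hSv ?_ (Set.toFinite _)
    have e1 : (↑S₀ : Set ((_ : Fin r) × Fin n)).ncard = k := by
      rw [Set.ncard_coe_finset, hS₀card]
    have e2 : T0.verts.ncard = k := by
      rw [← Nat.card_coe_set_eq, Nat.card_eq_fintype_card, h4]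
    omega
  have hlt : 1 < Fintype.card ↥T0.verts := by omega
  obtain ⟨a, b, hab⟩ := Fintype.exists_pair_of_one_lt_card hlt
  have hreach := htree.isConnected.preconnected a b
  rcases hreach with ⟨w⟩
  cases w with
  | nil => exact hab rfl
  | cons hadj p =>
    rename_i x'
    have : T0.Adj ↑a ↑x' := hadj
    have hGadj : G.Adj ↑a ↑x' := T0.adj_sub this
    have : (↑a : (_ : Fin r) × Fin n).1 ≠ (↑x' : (_ : Fin r) × Fin n).1 := hGadj
    apply this
    rw [hS₀fst _ (by rw [← Finset.mem_coe, hveq]; exact a.2),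
        hS₀fst _ (by rw [← Finset.mem_coe, hveq]; exact x'.2)]

/-! ### The coloring -/

namespace RB

/-- base-`k` digit of `x` at position `j` -/
def dig (k x j : ℕ) : ℕ := x / k ^ j % k

def digF (k : ℕ) [NeZero k] (x j : ℕ) : Fin k :=
  ⟨dig k x j, Nat.mod_lt _ (NeZero.pos k)⟩

/-- the hash family -/
def FF (k r M : ℕ) : Type :=
  (Fin (k*k) → Fin (M+1)) × (Fin r → (Fin (k*k) → Fin k) → Fin k)

instance (k r M : ℕ) : Fintype (FF k r M) := by unfold FF; infer_instance
instance (k r M : ℕ) [NeZero k] : Nonempty (FF k r M) := by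
  unfold FF
  infer_instance

def hashF (k r M : ℕ) [NeZero k] (h : FF k r M) (j : Fin r) (b : ℕ) : Fin k :=
  h.2 j (fun s => digF k b (h.1 s))

def fc (k r M : ℕ) : ℕ := Fintype.card (FF k r M)

lemma fc_pos (k r M : ℕ) [NeZero k] : 0 < fc k r M := Fintype.card_pos

lemma fc_eq (k r M : ℕ) : fc k r M = (M+1)^(k*k) * (k^(k^(k*k)))^r := by
  classical
  show Fintype.card ((Fin (k*k) → Fin (M+1)) × (Fin r → (Fin (k*k) → Fin k) → Fin k))
      = (M+1)^(k*k) * (k^(k^(k*k)))^r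
  rw [Fintype.card_prod, Fintype.card_fun, Fintype.card_fun, Fintype.card_fun]
  simp

def qq (k r M : ℕ) : ℕ := fc k r M * k + 1

lemma qq_pos (k r M : ℕ) : 0 < qq k r M := Nat.succ_pos _

lemma fc_lt_qq (k r M : ℕ) [NeZero k] : fc k r M < qq k r M := by
  have h1 := fc_pos k r M
  have h2 := NeZero.pos k
  have : fc k r M * 1 ≤ fc k r M * k := Nat.mul_le_mul_left _ h2
  simp only [mul_one] at this
  unfold qq
  omega

lemma coprime_qq (k r M : ℕ) : Nat.Coprime k (qq k r M) := by
  unfold qq Nat.Coprime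
  rw [Nat.add_comm, Nat.gcd_add_mul_right_right k 1 (fc k r M)]
  exact Nat.gcd_one_right k

noncomputable def lab (k r M : ℕ) [NeZero k] (b : ℕ) : FF k r M :=
  (Fintype.equivFin (FF k r M)).symm
    ⟨b % qq k r M % fc k r M, Nat.mod_lt _ (fc_pos k r M)⟩

lemma dig_low {k : ℕ} (hk : 0 < k) (y s j : ℕ) (hj : j < s) : dig k (k^s * y) j = 0 := by
  unfold dig
  have h1 : k^s * y = k^j * (k * (k^(s-j-1) * y)) := by
    have : k^s = k^j * (k * k^(s-j-1)) := by
      rw [← pow_succ', ← pow_add]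
      congr 1
      omega
    rw [this, mul_assoc, mul_assoc]
  rw [h1, Nat.mul_div_cancel_left _ (pow_pos hk j), Nat.mul_mod_right]

lemma dig_high {k : ℕ} (hk : 0 < k) (y s L j : ℕ) (hy : y < k^L) (hj : s + L ≤ j) :
    dig k (k^s * y) j = 0 := by
  unfold dig
  have h1 : k^j = k^s * k^(j-s) := by rw [← pow_add]; congr 1; omega
  rw [h1, ← Nat.div_div_eq_div_mul, Nat.mul_div_cancel_left _ (pow_pos hk s)]
  have h2 : y / k^(j-s) = 0 := Nat.div_eq_of_lt
    (lt_of_lt_of_le hy (Nat.pow_le_pow_right hk (by omega)))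
  rw [h2, Nat.zero_mod]

lemma mod_pow_eq_of_dig_eq {k a b : ℕ} (m : ℕ) (h : ∀ j, j < m → dig k a j = dig k b j) :
    a % k^m = b % k^m := by
  induction m with
  | zero => simp [Nat.mod_one]
  | succ m ih =>
    rw [Nat.mod_pow_succ, Nat.mod_pow_succ, ih (fun j hj => h j (by omega))]
    have := h m (by omega)
    unfold dig at this
    rw [this]

lemma exists_dig_ne {k a b M : ℕ} (hk : 1 < k) (ha : a < k^M) (hb : b < k^M) (hne : a ≠ b) :
    ∃ j, j < M ∧ dig k a j ≠ dig k b j := by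
  by_contra h
  push_neg at h
  apply hne
  have := mod_pow_eq_of_dig_eq M (fun j hj => h j hj)
  rwa [Nat.mod_eq_of_lt ha, Nat.mod_eq_of_lt hb] at this

lemma gap_exists (W : Finset ℕ) (K L : ℕ) (hW : W.card ≤ K) :
    ∃ cb, cb ≤ K ∧ ∀ w ∈ W, w / L ≠ cb := by
  by_contra h
  push_neg at h
  have hsub : Finset.range (K+1) ⊆ W.image (· / L) := by
    intro cb hcb
    rw [Finset.mem_range] at hcb
    obtain ⟨w, hw, he⟩ := h cb (by omega)
    exact Finset.mem_image.2 ⟨w, hw, he⟩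
  have := Finset.card_le_card hsub
  rw [Finset.card_range] at this
  have := Finset.card_image_le (s := W) (f := (· / L))
  omega

lemma div_ne_imp {w cb L : ℕ} (h : w / L ≠ cb) : w < cb * L ∨ (cb+1) * L ≤ w := by
  by_contra hc
  push_neg at hc
  exact h (Nat.div_eq_of_lt_le hc.1 (by omega))

lemma sq_le_two_pow {j : ℕ} (hj : 6 ≤ j) : (j+1)^2 ≤ 2^j := by
  induction j with
  | zero => omega
  | succ j ih =>
    rcases Nat.lt_or_ge j 6 with h | h
    · interval_cases j <;> simp_all
    · have h1 := ih h
      have h2 : (j+2)^2 ≤ 2 * (j+1)^2 := by nlinarith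
      calc (j+1+1)^2 = (j+2)^2 := by ring_nf
        _ ≤ 2 * (j+1)^2 := h2
        _ ≤ 2 * 2^j := by omega
        _ = 2^(j+1) := by ring

lemma log_linear {C M : ℕ} (hM : (3*C+7)^2 ≤ M) : C * (Nat.log 2 (M+1) + 1) ≤ M := by
  set j := Nat.sqrt M with hj
  have hj1 : 3*C+7 ≤ j := by
    have h := Nat.sqrt_le_sqrt hM
    rwa [Nat.sqrt_eq'] at h
  have hjj : j * j ≤ M := by
    have := Nat.sqrt_le' M
    nlinarith [this]
  have hlog : Nat.log 2 (M+1) ≤ j := by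
    have h1 : M + 1 ≤ (j+1)^2 := by
      have := Nat.lt_succ_sqrt' M
      nlinarith
    have h2 : (j+1)^2 ≤ 2^j := sq_le_two_pow (by omega)
    calc Nat.log 2 (M+1) ≤ Nat.log 2 (2^j) := Nat.log_mono_right (h1.trans h2)
      _ = j := Nat.log_pow (by omega) j
  calc C * (Nat.log 2 (M+1) + 1) ≤ C * (j+1) := Nat.mul_le_mul_left _ (by omega)
    _ ≤ j * j := by nlinarith
    _ ≤ M := hjj

def EE (k r ℓ : ℕ) : ℕ := (k^(k^(k*k)))^r * 2 * k * (ℓ+1)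
def CC (k r ℓ : ℕ) : ℕ := (k*(k*k)+1) * ((k*k) + EE k r ℓ + 1)
def NN (k r ℓ : ℕ) : ℕ := k ^ ((3 * CC k r ℓ + 7)^2 + 1)

lemma NN_pos (k r ℓ : ℕ) (hk : 3 ≤ k) : 0 < NN k r ℓ :=
  pow_pos (by omega) _

lemma k_le_NN (k r ℓ : ℕ) : k ≤ NN k r ℓ :=
  Nat.le_self_pow (Nat.succ_ne_zero _) k

lemma size_cond (k r ℓ n : ℕ) (hk : 3 ≤ k) (hn : NN k r ℓ ≤ n) :
    (k*(k*k)+1) * (Nat.log k (qq k r (Nat.log k n) * (ℓ+1)) + 1) ≤ Nat.log k n := by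
  have hk1 : 1 < k := by omega
  have hn0 : n ≠ 0 := by
    have := NN_pos k r ℓ hk
    omega
  set M := Nat.log k n with hMdef
  have hM : (3 * CC k r ℓ + 7)^2 + 1 ≤ M := by
    rw [hMdef, Nat.le_log_iff_pow_le hk1 hn0]
    exact hn
  set L2 := Nat.log 2 (M+1) with hL2
  haveI : NeZero k := ⟨by omega⟩
  have hfc : 0 < fc k r M := fc_pos k r M
  have hb1 : qq k r M * (ℓ+1) ≤ (M+1)^(k*k) * EE k r ℓ := by
    have h1 : qq k r M ≤ 2 * k * fc k r M := by
      unfold qq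
      have : 1 ≤ fc k r M * k := Nat.mul_pos hfc (by omega)
      nlinarith
    calc qq k r M * (ℓ+1) ≤ 2 * k * fc k r M * (ℓ+1) := Nat.mul_le_mul_right _ h1
      _ = (M+1)^(k*k) * EE k r ℓ := by rw [fc_eq, EE]; ring
  have hb2 : (M+1)^(k*k) ≤ 2 ^ ((k*k) * (L2+1)) := by
    have h1 : M+1 ≤ 2^(L2+1) := (Nat.lt_pow_succ_log_self (by norm_num) (M+1)).le
    calc (M+1)^(k*k) ≤ (2^(L2+1))^(k*k) := Nat.pow_le_pow_left h1 _
      _ = 2 ^ ((k*k) * (L2+1)) := by rw [← pow_mul, Nat.mul_comm]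
  have hb3 : EE k r ℓ ≤ 2 ^ EE k r ℓ := (Nat.lt_two_pow_self).le
  have hb : qq k r M * (ℓ+1) ≤ 2 ^ ((k*k) * (L2+1) + EE k r ℓ) := by
    calc qq k r M * (ℓ+1) ≤ (M+1)^(k*k) * EE k r ℓ := hb1
      _ ≤ 2 ^ ((k*k)*(L2+1)) * 2 ^ EE k r ℓ := Nat.mul_le_mul hb2 hb3
      _ = 2 ^ ((k*k) * (L2+1) + EE k r ℓ) := by rw [← pow_add]
  have hlog : Nat.log k (qq k r M * (ℓ+1)) ≤ (k*k) * (L2+1) + EE k r ℓ := by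
    calc Nat.log k (qq k r M * (ℓ+1)) ≤ Nat.log 2 (qq k r M * (ℓ+1)) :=
        Nat.log_anti_left (by norm_num) (by omega)
      _ ≤ Nat.log 2 (2 ^ ((k*k) * (L2+1) + EE k r ℓ)) := Nat.log_mono_right hb
      _ = (k*k) * (L2+1) + EE k r ℓ := Nat.log_pow (by norm_num) _
  calc (k*(k*k)+1) * (Nat.log k (qq k r M * (ℓ+1)) + 1)
      ≤ (k*(k*k)+1) * ((k*k) * (L2+1) + EE k r ℓ + 1) := by
        apply Nat.mul_le_mul_left
        omega
    _ ≤ (k*(k*k)+1) * (((k*k) + EE k r ℓ + 1) * (L2+1)) := by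
        apply Nat.mul_le_mul_left
        nlinarith
    _ = CC k r ℓ * (L2+1) := by rw [CC]; ring
    _ ≤ M := log_linear (by omega)

noncomputable def colV (k r n : ℕ) [NeZero k] (u v : (_ : Fin r) × Fin n) : Fin k :=
  hashF k r (Nat.log k n) (lab k r (Nat.log k n) (u.2 : ℕ)) v.1 (v.2 : ℕ) +
  hashF k r (Nat.log k n) (lab k r (Nat.log k n) (v.2 : ℕ)) u.1 (u.2 : ℕ)

noncomputable def colE (k r n : ℕ) [NeZero k] : Sym2 ((_ : Fin r) × Fin n) → Fin k :=
  Sym2.lift ⟨colV k r n, fun u v => add_comm _ _⟩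

lemma colE_mk (k r n : ℕ) [NeZero k] (u v : (_ : Fin r) × Fin n) :
    colE k r n s(u, v) = colV k r n u v := Sym2.lift_mk _ _ _

lemma sigma_eq {r n : ℕ} {u v : (_ : Fin r) × Fin n} (h1 : u.1 = v.1)
    (h2 : (u.2 : ℕ) = (v.2 : ℕ)) : u = v := by
  obtain ⟨i, a⟩ := u
  obtain ⟨j, b⟩ := v
  cases h1
  exact congrArg (Sigma.mk i) (Fin.ext h2)

lemma centers (k r ℓ n : ℕ) [NeZero k] (hk : 3 ≤ k) (hkr : k < r) (hn0 : 0 < n)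
    (hbig : (k*(k*k)+1) * (Nat.log k (qq k r (Nat.log k n) * (ℓ+1)) + 1) ≤ Nat.log k n)
    (S : Finset ((_ : Fin r) × Fin n)) (hS : S.card = k) :
    ∃ (p : Fin r) (X : Fin ℓ → (_ : Fin r) × Fin n),
      Function.Injective X ∧ (∀ i, (X i).1 = p) ∧ (∀ v ∈ S, v.1 ≠ p) ∧
      (∀ i, Set.InjOn (fun v => colE k r n s(X i, v)) ↑S) := by
  classical
  have hk1 : 1 < k := by omega
  have hkpos : 0 < k := by omega
  set M := Nat.log k n with hMdef
  -- spare part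
  have himg : (S.image Sigma.fst).card < r := by
    have := Finset.card_image_le (s := S) (f := Sigma.fst)
    omega
  obtain ⟨p, hp⟩ : ∃ p : Fin r, p ∉ S.image Sigma.fst := by
    by_contra h
    push_neg at h
    have : (S.image Sigma.fst) = Finset.univ := Finset.eq_univ_iff_forall.2 h
    rw [this, Finset.card_univ, Fintype.card_fin] at himg
    omega
  have hpS : ∀ v ∈ S, v.1 ≠ p := fun v hv he => hp (Finset.mem_image.2 ⟨v, hv, he⟩)
  -- enumeration of S
  let ee : Fin k ≃ ↥S := (finCongr hS.symm).trans S.equivFin.symm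
  let e : Fin k → (_ : Fin r) × Fin n := fun m => ((ee m : ↥S) : (_ : Fin r) × Fin n)
  have heS : ∀ m, e m ∈ S := fun m => (ee m).2
  have heInj : Function.Injective e := fun a b h => ee.injective (Subtype.ext h)
  have heSurj : ∀ v ∈ S, ∃ m, e m = v := fun v hv => ⟨ee.symm ⟨v, hv⟩, by simp [e]⟩
  have hnum : ∀ v : (_ : Fin r) × Fin n, ((v.2 : ℕ)) < k ^ (M+1) :=
    fun v => lt_of_lt_of_le v.2.2 (Nat.lt_pow_succ_log_self hk1 n).le
  -- separating positions
  let pos : Fin k → Fin k → Fin (M+1) := fun m₁ m₂ =>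
    if h : ∃ j : Fin (M+1), dig k ((e m₁).2 : ℕ) j ≠ dig k ((e m₂).2 : ℕ) j then h.choose else 0
  have hpos : ∀ m₁ m₂, ((e m₁).2 : ℕ) ≠ ((e m₂).2 : ℕ) →
      dig k ((e m₁).2 : ℕ) (pos m₁ m₂) ≠ dig k ((e m₂).2 : ℕ) (pos m₁ m₂) := by
    intro m₁ m₂ hne
    obtain ⟨j, hj, hd⟩ := exists_dig_ne hk1 (hnum (e m₁)) (hnum (e m₂)) hne
    have hex : ∃ j : Fin (M+1), dig k ((e m₁).2 : ℕ) j ≠ dig k ((e m₂).2 : ℕ) j :=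
      ⟨⟨j, by omega⟩, hd⟩
    simp only [pos, dif_pos hex]
    exact hex.choose_spec
  let Pstar : Fin (k*k) → Fin (M+1) := fun s =>
    pos (finProdFinEquiv.symm s).1 (finProdFinEquiv.symm s).2
  let dt : ((_ : Fin r) × Fin n) → (Fin (k*k) → Fin k) := fun v =>
    fun s => digF k (v.2 : ℕ) (Pstar s)
  let nu : ((_ : Fin r) × Fin n) → Fin k := fun v =>
    (lab k r M (v.2 : ℕ)).2 p (fun _ => 0)
  let gst : Fin r → (Fin (k*k) → Fin k) → Fin k := fun i z =>
    if h : (Finset.univ.filter (fun m : Fin k => (e m).1 = i ∧ dt (e m) = z)).Nonempty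
    then (Finset.univ.filter (fun m : Fin k => (e m).1 = i ∧ dt (e m) = z)).min' h -
      nu (e ((Finset.univ.filter (fun m : Fin k => (e m).1 = i ∧ dt (e m) = z)).min' h))
    else 0
  let hstar : FF k r M := (Pstar, gst)
  -- uniqueness: the filter for the data of `e m` is exactly {m}
  have huniq : ∀ m : Fin k,
      (Finset.univ.filter (fun m' : Fin k => (e m').1 = (e m).1 ∧ dt (e m') = dt (e m))) = {m} := by
    intro m
    apply Finset.eq_singleton_iff_unique_mem.2
    refine ⟨Finset.mem_filter.2 ⟨Finset.mem_univ _, rfl, rfl⟩, ?_⟩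
    intro m' hm'
    obtain ⟨-, h1, h2⟩ := Finset.mem_filter.1 hm'
    rcases eq_or_ne ((e m').2 : ℕ) ((e m).2 : ℕ) with hnum2 | hnum2
    · exact heInj (sigma_eq h1 hnum2)
    · exfalso
      have hd := hpos m' m hnum2
      have hPs : Pstar (finProdFinEquiv (m', m)) = pos m' m := by
        show pos (finProdFinEquiv.symm (finProdFinEquiv (m', m))).1
          (finProdFinEquiv.symm (finProdFinEquiv (m', m))).2 = pos m' m
        rw [Equiv.symm_apply_apply]
      have h3 : dt (e m') (finProdFinEquiv (m', m)) = dt (e m) (finProdFinEquiv (m', m)) := by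
        rw [h2]
      apply hd
      have := congrArg Fin.val h3
      simpa [dt, digF, hPs] using this
  -- the hash of hstar at a leaf
  have hhash_eval : ∀ m : Fin k,
      hashF k r M hstar (e m).1 ((e m).2 : ℕ) = m - nu (e m) := by
    intro m
    show gst (e m).1 (fun s => digF k ((e m).2 : ℕ) (Pstar s)) = m - nu (e m)
    have hdt : (fun s => digF k ((e m).2 : ℕ) (Pstar s)) = dt (e m) := rfl
    rw [hdt]
    simp only [gst, huniq m]
    rw [dif_pos (Finset.singleton_nonempty m)]
    rw [Finset.min'_singleton]
  -- forbidden positions W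
  let W : Finset ℕ := S.biUnion (fun v =>
    Finset.image (fun s : Fin (k*k) => ((lab k r M (v.2 : ℕ)).1 s : ℕ)) Finset.univ)
  have hWcard : W.card ≤ k * (k*k) := by
    have h1 := Finset.card_biUnion_le (s := S) (t := fun v =>
      Finset.image (fun s : Fin (k*k) => ((lab k r M (v.2 : ℕ)).1 s : ℕ)) Finset.univ)
    have h2 : ∀ v ∈ S,
        (Finset.image (fun s : Fin (k*k) => ((lab k r M (v.2 : ℕ)).1 s : ℕ)) Finset.univ).card
        ≤ k*k := by
      intro v hv
      calc _ ≤ (Finset.univ : Finset (Fin (k*k))).card := Finset.card_image_le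
        _ = k*k := by simp
    calc W.card ≤ _ := h1
      _ ≤ S.card * (k*k) := by
          calc _ ≤ ∑ _v ∈ S, (k*k) := Finset.sum_le_sum h2
            _ = S.card * (k*k) := by rw [Finset.sum_const, smul_eq_mul]
      _ = k * (k*k) := by rw [hS]
  -- the gap
  set L0 := Nat.log k (qq k r M * (ℓ+1)) + 1 with hL0
  obtain ⟨cb, hcb, hcbW⟩ := gap_exists W (k*(k*k)) L0 hWcard
  set s0 := cb * L0 with hs0def
  have hs0 : s0 + L0 ≤ M := by
    calc s0 + L0 = (cb+1) * L0 := by ring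
      _ ≤ (k*(k*k)+1) * L0 := Nat.mul_le_mul_right _ (by omega)
      _ ≤ M := hbig
  -- the modular construction of centers
  haveI : NeZero (qq k r M) := ⟨by have := qq_pos k r M; omega⟩
  set rho := ((Fintype.equivFin (FF k r M)) hstar).val with hrhodef
  have hrho : rho < fc k r M := ((Fintype.equivFin (FF k r M)) hstar).2
  have hrho_q : rho < qq k r M := lt_trans hrho (fc_lt_qq k r M)
  have hcop : Nat.Coprime (k ^ s0) (qq k r M) := Nat.Coprime.pow_left _ (coprime_qq k r M)
  set kZ : ZMod (qq k r M) := (k : ZMod (qq k r M))^s0 with hkZ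
  have hunit : IsUnit kZ := by
    rw [hkZ]
    exact ((ZMod.isUnit_iff_coprime k (qq k r M)).2 (coprime_qq k r M)).pow s0
  set y0 : ℕ := ((rho : ZMod (qq k r M)) * kZ⁻¹).val with hy0def
  have hy0q : y0 < qq k r M := ZMod.val_lt _
  have hy0 : (k ^ s0 * y0) % qq k r M = rho := by
    have hcast : ((k ^ s0 * y0 : ℕ) : ZMod (qq k r M)) = ((rho : ℕ) : ZMod (qq k r M)) := by
      push_cast
      rw [hy0def]
      rw [ZMod.natCast_val _ |>.trans (ZMod.cast_id _ _)]
      rw [← hkZ, mul_comm (rho : ZMod (qq k r M)) kZ⁻¹, ← mul_assoc,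
        ZMod.mul_inv_of_unit kZ hunit, one_mul]
    rw [ZMod.natCast_eq_natCast_iff'] at hcast
    rwa [Nat.mod_eq_of_lt hrho_q] at hcast
  set xn : Fin ℓ → ℕ := fun i => k ^ s0 * (y0 + (i : ℕ) * qq k r M) with hxndef
  have hxn_mod : ∀ i, xn i % qq k r M = rho := by
    intro i
    have h1 : xn i = k^s0*y0 + (k^s0*(i:ℕ)) * qq k r M := by rw [hxndef]; ring
    rw [h1, Nat.add_mul_mod_self_right, hy0]
  have hxn_lab : ∀ i, lab k r M (xn i) = hstar := by
    intro i
    unfold lab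
    have h1 : (⟨xn i % qq k r M % fc k r M, Nat.mod_lt _ (fc_pos k r M)⟩ : Fin (fc k r M))
        = Fintype.equivFin (FF k r M) hstar := by
      apply Fin.ext
      show xn i % qq k r M % fc k r M = rho
      rw [hxn_mod, Nat.mod_eq_of_lt hrho]
    exact (Equiv.symm_apply_eq _).2 h1
  have hy_lt : ∀ i : Fin ℓ, y0 + (i:ℕ) * qq k r M < k ^ L0 := by
    intro i
    have h2 : qq k r M * (ℓ+1) < k ^ L0 := by
      rw [hL0]
      exact Nat.lt_pow_succ_log_self hk1 _
    have hi := i.2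
    nlinarith
  have hxn_lt : ∀ i, xn i < n := by
    intro i
    calc xn i < k ^ s0 * k ^ L0 :=
          (Nat.mul_lt_mul_left (pow_pos hkpos s0)).2 (hy_lt i)
      _ = k ^ (s0 + L0) := (pow_add k s0 L0).symm
      _ ≤ k ^ M := Nat.pow_le_pow_right hkpos hs0
      _ ≤ n := Nat.pow_log_le_self k (by omega)
  have hxn_inj : Function.Injective xn := by
    intro i j hij
    have h1 : y0 + (i:ℕ) * qq k r M = y0 + (j:ℕ) * qq k r M :=
      Nat.eq_of_mul_eq_mul_left (pow_pos hkpos s0) hij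
    have h2 : (i:ℕ) = (j:ℕ) := by
      have := qq_pos k r M
      have h3 : (i:ℕ) * qq k r M = (j:ℕ) * qq k r M := by omega
      exact Nat.eq_of_mul_eq_mul_right this h3
    exact Fin.ext h2
  -- digits of centers vanish on W
  have hdig0 : ∀ i, ∀ w ∈ W, dig k (xn i) w = 0 := by
    intro i w hw
    rcases div_ne_imp (hcbW w hw) with h | h
    · exact dig_low hkpos _ _ _ h
    · apply dig_high hkpos _ _ _ _ (hy_lt i)
      calc s0 + L0 = (cb+1) * L0 := by ring
        _ ≤ w := h
  -- hash of a leaf's label at a center is nu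
  have hnu : ∀ i, ∀ v ∈ S, hashF k r M (lab k r M (v.2 : ℕ)) p (xn i) = nu v := by
    intro i v hv
    show (lab k r M (v.2:ℕ)).2 p (fun s => digF k (xn i) ((lab k r M (v.2:ℕ)).1 s))
        = (lab k r M (v.2 : ℕ)).2 p (fun _ => 0)
    refine congrArg _ (funext fun s => ?_)
    apply Fin.ext
    show dig k (xn i) ((lab k r M (v.2:ℕ)).1 s : ℕ) = ((0 : Fin k) : ℕ)
    rw [hdig0 i _ (Finset.mem_biUnion.2 ⟨v, hv,
      Finset.mem_image.2 ⟨s, Finset.mem_univ _, rfl⟩⟩)]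
    simp
  -- the centers as vertices
  set Xv : Fin ℓ → (_ : Fin r) × Fin n := fun i => ⟨p, ⟨xn i, hxn_lt i⟩⟩ with hXvdef
  have hcol : ∀ i, ∀ m : Fin k, colE k r n s(Xv i, e m) = (m : Fin k) := by
    intro i m
    rw [colE_mk]
    show hashF k r M (lab k r M ((Xv i).2 : ℕ)) (e m).1 ((e m).2 : ℕ) +
      hashF k r M (lab k r M ((e m).2 : ℕ)) (Xv i).1 ((Xv i).2 : ℕ) = (m : Fin k)
    have h1 : ((Xv i).2 : ℕ) = xn i := rfl
    have h2 : (Xv i).1 = p := rfl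
    rw [h1, h2, hxn_lab i, hhash_eval m, hnu i _ (heS m)]
    exact sub_add_cancel _ _
  refine ⟨p, Xv, ?_, fun i => rfl, hpS, ?_⟩
  · intro i j hij
    apply hxn_inj
    have := congrArg (fun v : (_ : Fin r) × Fin n => (v.2 : ℕ)) hij
    simpa using this
  · intro i u hu v hv he
    obtain ⟨m₁, rfl⟩ := heSurj u hu
    obtain ⟨m₂, rfl⟩ := heSurj v hv
    simp only at he
    rw [hcol i m₁, hcol i m₂] at he
    rw [he]


end RB

lemma rx_upper_bound (k r ℓ n : ℕ) [NeZero k] (hk : 3 ≤ k) (hkr : k < r)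
    (hn : RB.NN k r ℓ ≤ n) :
    HasRainbowSTrees (completeMultipartiteGraph (fun _ : Fin r => Fin n))
      (RB.colE k r n) k ℓ := by
  intro S hS
  have hn0 : 0 < n := lt_of_lt_of_le (RB.NN_pos k r ℓ hk) hn
  obtain ⟨p, X, hXinj, hXp, hpS, hcinj⟩ :=
    RB.centers k r ℓ n hk hkr hn0 (RB.size_cond k r ℓ n hk hn) S hS
  apply build_trees X hXinj
  · intro i hi
    exact hpS (X i) hi (hXp i)
  · intro i v hv
    have h1 : (X i).1 ≠ v.1 := by
      rw [hXp i]
      exact (hpS v hv).symm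
    exact h1
  · exact hcinj

theorem rx_multipartite_eq_k (k ℓ r : ℕ) (hk : 3 ≤ k) (hℓ : 1 ≤ ℓ) (hkr : k < r) :
    ∃ N : ℕ, 0 < N ∧ ∀ n : ℕ, N ≤ n →
      rainbowIndex (completeMultipartiteGraph (fun _ : Fin r => Fin n)) k ℓ = k := by
  haveI : NeZero k := ⟨by omega⟩
  refine ⟨RB.NN k r ℓ, RB.NN_pos k r ℓ hk, fun n hn => ?_⟩
  have hkn : k ≤ n := le_trans (RB.k_le_NN k r ℓ) hn
  have hmem : k ∈ {t : ℕ | ∃ c : Sym2 ((_ : Fin r) × Fin n) → Fin t,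
      HasRainbowSTrees (completeMultipartiteGraph (fun _ : Fin r => Fin n)) c k ℓ} :=
    ⟨RB.colE k r n, rx_upper_bound k r ℓ n hk hkr hn⟩
  show sInf _ = k
  apply le_antisymm
  · exact Nat.sInf_le hmem
  · apply le_csInf ⟨k, hmem⟩
    rintro b ⟨c, hc⟩
    by_contra hlt
    push_neg at hlt
    exact rx_lower_bound hk hℓ (by omega) hkn hlt c hc
end
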